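/- arXiv:2010.09627 — 8 statements merged into one kernel-verified Lean document; each statement's English description precedes it below -/
import Mathlib

section
/- Let Y be a real random variable with all moments finite, (Y_k) i.i.d. copies, S_n = Y_1 + ... + Y_n, and S_Y(j,m) = (1/m!) ∑_{k=0}^{m} C(m,k)(-1)^{m-k} E[S_k^j]. Then for every n and j, E[S_n^j] = ∑_{m=0}^{min(n,j)} S_Y(j,m) · (n)_m, where (n)_m = n(n-1)···(n-m+1) is the falling factorial. -/
open MeasureTheory ProbabilityTheory Finset

private lemma alt_sum_real (N : ℕ) :
    ∑ i ∈ range (N + 1), (-1 : ℝ) ^ i * (N.choose i : ℝ) = if N = 0 then 1 else 0 := by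
  have h := Int.alternating_sum_range_choose (n := N)
  have h2 := congrArg (fun z : ℤ => (z : ℝ)) h
  push_cast at h2
  simpa using h2

private lemma key_sum (n k : ℕ) (hk : k ≤ n) :
    ∑ m ∈ range (n + 1), (n.choose m : ℝ) * ((m.choose k : ℝ) * (-1) ^ (m - k))
      = if k = n then 1 else 0 := by
  have h1 : ∑ m ∈ range (n + 1), (n.choose m : ℝ) * ((m.choose k : ℝ) * (-1) ^ (m - k))
      = ∑ m ∈ Finset.Ico k (n + 1), (n.choose m : ℝ) * ((m.choose k : ℝ) * (-1) ^ (m - k)) := by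
    refine (Finset.sum_subset ?_ ?_).symm
    · intro m hm
      simp only [Finset.mem_Ico] at hm
      exact Finset.mem_range.2 hm.2
    · intro m hm hm'
      simp only [Finset.mem_range] at hm
      simp only [Finset.mem_Ico, not_and, not_le] at hm'
      have hmk : m < k := by omega
      rw [Nat.choose_eq_zero_of_lt hmk]
      simp
  rw [h1, Finset.sum_Ico_eq_sum_range]
  have h2 : n + 1 - k = (n - k) + 1 := by omega
  rw [h2]
  have h3 : ∀ i ∈ range (n - k + 1),
      (n.choose (k + i) : ℝ) * (((k + i).choose k : ℝ) * (-1) ^ (k + i - k))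
        = (n.choose k : ℝ) * ((-1) ^ i * ((n - k).choose i : ℝ)) := by
    intro i hi
    simp only [Finset.mem_range] at hi
    have hik : k + i ≤ n := by omega
    have hcm := Nat.choose_mul (n := n) (Nat.le_add_right k i)
    have hsub : k + i - k = i := by omega
    rw [hsub] at hcm ⊢
    have : (n.choose (k + i) : ℝ) * ((k + i).choose k : ℝ) = (n.choose k : ℝ) * ((n - k).choose i : ℝ) := by
      exact_mod_cast congrArg (Nat.cast : ℕ → ℝ) hcm
    calc (n.choose (k + i) : ℝ) * (((k + i).choose k : ℝ) * (-1) ^ i)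
        = (n.choose (k + i) : ℝ) * ((k + i).choose k : ℝ) * (-1) ^ i := by ring
      _ = (n.choose k : ℝ) * ((n - k).choose i : ℝ) * (-1) ^ i := by rw [this]
      _ = (n.choose k : ℝ) * ((-1) ^ i * ((n - k).choose i : ℝ)) := by ring
  rw [Finset.sum_congr rfl h3, ← Finset.mul_sum, alt_sum_real]
  rcases eq_or_ne k n with rfl | hne
  · simp
  · have : n - k ≠ 0 := by omega
    simp [this, hne]

private lemma newton (f : ℕ → ℝ) (n : ℕ) :
    f n = ∑ m ∈ range (n + 1), (n.choose m : ℝ) *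
        ∑ k ∈ range (m + 1), (m.choose k : ℝ) * (-1) ^ (m - k) * f k := by
  have h1 : ∀ m ∈ range (n + 1),
      (n.choose m : ℝ) * ∑ k ∈ range (m + 1), (m.choose k : ℝ) * (-1) ^ (m - k) * f k
        = ∑ k ∈ range (n + 1), (n.choose m : ℝ) * ((m.choose k : ℝ) * (-1) ^ (m - k)) * f k := by
    intro m hm
    simp only [Finset.mem_range] at hm
    have hext : ∑ k ∈ range (m + 1), (m.choose k : ℝ) * (-1) ^ (m - k) * f k
        = ∑ k ∈ range (n + 1), (m.choose k : ℝ) * (-1) ^ (m - k) * f k := by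
      refine Finset.sum_subset (Finset.range_subset_range.2 (by omega)) ?_
      intro k hk hk'
      simp only [Finset.mem_range, not_lt] at hk hk'
      have : m < k := by omega
      rw [Nat.choose_eq_zero_of_lt this]
      simp
    rw [hext, Finset.mul_sum]
    exact Finset.sum_congr rfl fun k _ => by ring
  rw [Finset.sum_congr rfl h1, Finset.sum_comm]
  have h2 : ∀ k ∈ range (n + 1),
      ∑ m ∈ range (n + 1), (n.choose m : ℝ) * ((m.choose k : ℝ) * (-1) ^ (m - k)) * f k
        = (if k = n then 1 else 0) * f k := by
    intro k hk
    simp only [Finset.mem_range] at hk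
    rw [← Finset.sum_mul, key_sum n k (by omega)]
  rw [Finset.sum_congr rfl h2]
  simp

private lemma diff_succ (f : ℕ → ℝ) (m r : ℕ) :
    ∑ k ∈ range (m + 2), ((m + 1).choose k : ℝ) * (-1) ^ (m + 1 - k) * f (r + k)
      = ∑ k ∈ range (m + 1), (m.choose k : ℝ) * (-1) ^ (m - k) * (f (r + k + 1) - f (r + k)) := by
  rw [Finset.sum_range_succ' _ (m + 1)]
  have hL : ∀ k ∈ range (m + 1),
      ((m + 1).choose (k + 1) : ℝ) * (-1) ^ (m + 1 - (k + 1)) * f (r + (k + 1))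
        = (m.choose k : ℝ) * (-1) ^ (m - k) * f (r + k + 1)
          + (m.choose (k + 1) : ℝ) * (-1) ^ (m - k) * f (r + k + 1) := by
    intro k hk
    have h1 : m + 1 - (k + 1) = m - k := by omega
    have h2 : r + (k + 1) = r + k + 1 := by omega
    rw [h1, h2, Nat.choose_succ_succ']
    push_cast
    ring
  rw [Finset.sum_congr rfl hL, Finset.sum_add_distrib]
  have hA : ∑ k ∈ range (m + 1), (m.choose (k + 1) : ℝ) * (-1) ^ (m - k) * f (r + k + 1)
        + ((m + 1).choose 0 : ℝ) * (-1) ^ (m + 1 - 0) * f (r + 0)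
      = - ∑ k ∈ range (m + 1), (m.choose k : ℝ) * (-1) ^ (m - k) * f (r + k) := by
    rw [Finset.sum_range_succ' (fun k => (m.choose k : ℝ) * (-1) ^ (m - k) * f (r + k)) m]
    rw [neg_add, ← Finset.sum_neg_distrib]
    congr 1
    · rw [Finset.sum_range_succ]
      have hz : (m.choose (m + 1) : ℝ) = 0 := by
        rw [Nat.choose_eq_zero_of_lt (by omega)]; simp
      rw [hz]
      simp only [zero_mul, mul_zero, add_zero]
      refine Finset.sum_congr rfl fun k hk => ?_
      simp only [Finset.mem_range] at hk
      have h1 : m - k = (m - (k + 1)) + 1 := by omega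
      have h2 : r + (k + 1) = r + k + 1 := by omega
      rw [h1, h2, pow_succ]
      ring
    · have h1 : m + 1 - 0 = (m - 0) + 1 := by omega
      rw [h1, pow_succ]
      simp [mul_comm]
  calc ∑ k ∈ range (m + 1), (m.choose k : ℝ) * (-1) ^ (m - k) * f (r + k + 1)
        + ∑ k ∈ range (m + 1), (m.choose (k + 1) : ℝ) * (-1) ^ (m - k) * f (r + k + 1)
        + ((m + 1).choose 0 : ℝ) * (-1) ^ (m + 1 - 0) * f (r + 0)
      = ∑ k ∈ range (m + 1), (m.choose k : ℝ) * (-1) ^ (m - k) * f (r + k + 1)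
        + (∑ k ∈ range (m + 1), (m.choose (k + 1) : ℝ) * (-1) ^ (m - k) * f (r + k + 1)
          + ((m + 1).choose 0 : ℝ) * (-1) ^ (m + 1 - 0) * f (r + 0)) := by ring
    _ = ∑ k ∈ range (m + 1), (m.choose k : ℝ) * (-1) ^ (m - k) * f (r + k + 1)
        - ∑ k ∈ range (m + 1), (m.choose k : ℝ) * (-1) ^ (m - k) * f (r + k) := by
          rw [hA]; ring
    _ = ∑ k ∈ range (m + 1), (m.choose k : ℝ) * (-1) ^ (m - k) * (f (r + k + 1) - f (r + k)) := by
          rw [← Finset.sum_sub_distrib]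
          exact Finset.sum_congr rfl fun k _ => by ring

section Prob

variable {Ω : Type*} [MeasurableSpace Ω] {μ : Measure Ω} [IsProbabilityMeasure μ]
  {Y : ℕ → Ω → ℝ}

private lemma intY (hmeas : ∀ i, Measurable (Y i)) (hident : ∀ i, IdentDistrib (Y i) (Y 0) μ μ)
    (hmom : ∀ j : ℕ, Integrable (fun ω => |Y 0 ω| ^ j) μ) (i r : ℕ) :
    Integrable (fun ω => Y i ω ^ r) μ := by
  have hid : IdentDistrib (fun ω => Y i ω ^ r) (fun ω => Y 0 ω ^ r) μ μ :=
    (hident i).comp (measurable_id.pow_const r)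
  rw [hid.integrable_iff]
  refine (hmom r).mono' ((hmeas 0).pow_const r).aestronglyMeasurable ?_
  filter_upwards with ω
  rw [Real.norm_eq_abs, abs_pow]

private lemma indepSY (hmeas : ∀ i, Measurable (Y i))
    (hindep : iIndepFun Y μ) (n s t : ℕ) :
    IndepFun (fun ω => (∑ i ∈ range n, Y i ω) ^ s) (fun ω => Y n ω ^ t) μ := by
  have h : IndepFun (∑ j ∈ range n, Y j) (Y n) μ :=
    hindep.indepFun_sum_range_succ hmeas n
  have h2 := h.comp (measurable_id.pow_const s) (measurable_id.pow_const t)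
  convert h2 using 1
  · funext ω
    simp [Function.comp, Finset.sum_apply]
  · rfl

private lemma intS (hmeas : ∀ i, Measurable (Y i))
    (hindep : iIndepFun Y μ)
    (hident : ∀ i, IdentDistrib (Y i) (Y 0) μ μ)
    (hmom : ∀ j : ℕ, Integrable (fun ω => |Y 0 ω| ^ j) μ) :
    ∀ n t, Integrable (fun ω => (∑ i ∈ range n, Y i ω) ^ t) μ := by
  intro n
  induction n with
  | zero => intro t; simpa using integrable_const ((0 : ℝ) ^ t)
  | succ n ih =>
    intro t
    have hrw : (fun ω => (∑ i ∈ range (n + 1), Y i ω) ^ t)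
        = fun ω => ∑ s ∈ range (t + 1),
            (∑ i ∈ range n, Y i ω) ^ s * Y n ω ^ (t - s) * (t.choose s : ℝ) := by
      funext ω
      rw [Finset.sum_range_succ, add_pow]
    rw [hrw]
    refine integrable_finset_sum _ fun s _ => ?_
    exact ((indepSY hmeas hindep n s (t - s)).integrable_mul (ih s)
      (intY hmeas hident hmom n (t - s))).mul_const _

private lemma recg (hmeas : ∀ i, Measurable (Y i))
    (hindep : iIndepFun Y μ)
    (hident : ∀ i, IdentDistrib (Y i) (Y 0) μ μ)
    (hmom : ∀ j : ℕ, Integrable (fun ω => |Y 0 ω| ^ j) μ) (n j : ℕ) :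
    ∫ ω, (∑ i ∈ range (n + 1), Y i ω) ^ j ∂μ
      = ∑ t ∈ range (j + 1), (j.choose t : ℝ) *
          ((∫ ω, (∑ i ∈ range n, Y i ω) ^ t ∂μ) * ∫ ω, Y 0 ω ^ (j - t) ∂μ) := by
  have hrw : (fun ω => (∑ i ∈ range (n + 1), Y i ω) ^ j)
      = fun ω => ∑ t ∈ range (j + 1),
          (∑ i ∈ range n, Y i ω) ^ t * Y n ω ^ (j - t) * (j.choose t : ℝ) := by
    funext ω
    rw [Finset.sum_range_succ, add_pow]
  rw [show (∫ ω, (∑ i ∈ range (n + 1), Y i ω) ^ j ∂μ)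
      = ∫ ω, ∑ t ∈ range (j + 1),
          (∑ i ∈ range n, Y i ω) ^ t * Y n ω ^ (j - t) * (j.choose t : ℝ) ∂μ from by rw [← hrw],
    integral_finset_sum]
  · refine Finset.sum_congr rfl fun t _ => ?_
    have h1 : ∫ ω, (∑ i ∈ range n, Y i ω) ^ t * Y n ω ^ (j - t) * (j.choose t : ℝ) ∂μ
        = (∫ ω, (∑ i ∈ range n, Y i ω) ^ t * Y n ω ^ (j - t) ∂μ) * (j.choose t : ℝ) :=
      integral_mul_const _ _
    have h2 : ∫ ω, (∑ i ∈ range n, Y i ω) ^ t * Y n ω ^ (j - t) ∂μ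
        = (∫ ω, (∑ i ∈ range n, Y i ω) ^ t ∂μ) * ∫ ω, Y n ω ^ (j - t) ∂μ :=
      (indepSY hmeas hindep n t (j - t)).integral_mul_eq_mul_integral
        (intS hmeas hindep hident hmom n t).aestronglyMeasurable (intY hmeas hident hmom n (j - t)).aestronglyMeasurable
    have h3 : ∫ ω, Y n ω ^ (j - t) ∂μ = ∫ ω, Y 0 ω ^ (j - t) ∂μ :=
      ((hident n).comp (measurable_id.pow_const (j - t))).integral_eq
    rw [h1, h2, h3]
    ring
  · intro t _
    exact ((indepSY hmeas hindep n t (j - t)).integrable_mul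
      (intS hmeas hindep hident hmom n t) (intY hmeas hident hmom n (j - t))).mul_const _

private lemma vanish (hmeas : ∀ i, Measurable (Y i))
    (hindep : iIndepFun Y μ)
    (hident : ∀ i, IdentDistrib (Y i) (Y 0) μ μ)
    (hmom : ∀ j : ℕ, Integrable (fun ω => |Y 0 ω| ^ j) μ) :
    ∀ j m r : ℕ, j < m →
      ∑ k ∈ range (m + 1), (m.choose k : ℝ) * (-1) ^ (m - k) *
          ∫ ω, (∑ i ∈ range (r + k), Y i ω) ^ j ∂μ = 0 := by
  intro j
  induction j using Nat.strong_induction_on with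
  | _ j IH =>
    intro m r hjm
    obtain ⟨m', rfl⟩ : ∃ m', m = m' + 1 := ⟨m - 1, by omega⟩
    have hd := diff_succ (fun N => ∫ ω, (∑ i ∈ range N, Y i ω) ^ j ∂μ) m' r
    rw [show m' + 1 + 1 = m' + 2 from rfl, hd]
    have hone : ∫ ω, Y 0 ω ^ (0 : ℕ) ∂μ = 1 := by simp
    have hdiff : ∀ N : ℕ, (∫ ω, (∑ i ∈ range (N + 1), Y i ω) ^ j ∂μ)
        - ∫ ω, (∑ i ∈ range N, Y i ω) ^ j ∂μ
        = ∑ t ∈ range j, (j.choose t : ℝ) *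
            ((∫ ω, (∑ i ∈ range N, Y i ω) ^ t ∂μ) * ∫ ω, Y 0 ω ^ (j - t) ∂μ) := by
      intro N
      rw [recg hmeas hindep hident hmom N j, Finset.sum_range_succ]
      simp [hone]
    have hterm : ∀ k ∈ range (m' + 1),
        (m'.choose k : ℝ) * (-1) ^ (m' - k) *
          ((∫ ω, (∑ i ∈ range (r + k + 1), Y i ω) ^ j ∂μ)
            - ∫ ω, (∑ i ∈ range (r + k), Y i ω) ^ j ∂μ)
        = ∑ t ∈ range j, ((j.choose t : ℝ) * ∫ ω, Y 0 ω ^ (j - t) ∂μ) *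
            ((m'.choose k : ℝ) * (-1) ^ (m' - k) *
              ∫ ω, (∑ i ∈ range (r + k), Y i ω) ^ t ∂μ) := by
      intro k _
      rw [hdiff (r + k), Finset.mul_sum]
      exact Finset.sum_congr rfl fun t _ => by ring
    rw [Finset.sum_congr rfl hterm, Finset.sum_comm]
    refine Finset.sum_eq_zero fun t ht => ?_
    simp only [Finset.mem_range] at ht
    rw [← Finset.mul_sum, IH t ht m' r (by omega), mul_zero]

end Prob

/-- `E[S_n^j] = ∑_{m=0}^{min(n,j)} S_Y(j,m) (n)_m` for partial sums `S_n` of i.i.d.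
copies of `Y` with all moments finite, where
`S_Y(j,m) = (1/m!) ∑_{k=0}^m C(m,k)(-1)^{m-k} E[S_k^j]` and `(n)_m` is the falling
factorial. -/
theorem stmt_5 {Ω : Type*} [MeasurableSpace Ω] (μ : Measure Ω) [IsProbabilityMeasure μ]
    (Y : ℕ → Ω → ℝ) (hmeas : ∀ i, Measurable (Y i))
    (hindep : iIndepFun Y μ)
    (hident : ∀ i, IdentDistrib (Y i) (Y 0) μ μ)
    (hmom : ∀ j : ℕ, Integrable (fun ω => |Y 0 ω| ^ j) μ)
    (n j : ℕ) :
    ∫ ω, (∑ i ∈ Finset.range n, Y i ω) ^ j ∂μ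
      = ∑ m ∈ Finset.range (min n j + 1),
          ((m.factorial : ℝ)⁻¹ * ∑ k ∈ Finset.range (m + 1),
              (m.choose k : ℝ) * (-1) ^ (m - k) *
                ∫ ω, (∑ i ∈ Finset.range k, Y i ω) ^ j ∂μ)
            * (n.descFactorial m : ℝ) := by
  set F : ℕ → ℝ := fun k => ∫ ω, (∑ i ∈ Finset.range k, Y i ω) ^ j ∂μ with hF
  set D : ℕ → ℝ := fun m => ∑ k ∈ Finset.range (m + 1),
      (m.choose k : ℝ) * (-1) ^ (m - k) * F k with hD
  have hnewton : F n = ∑ m ∈ Finset.range (n + 1), (n.choose m : ℝ) * D m := newton F n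
  have hco : ∀ m : ℕ, ((m.factorial : ℝ)⁻¹ * D m) * (n.descFactorial m : ℝ)
      = (n.choose m : ℝ) * D m := by
    intro m
    rw [Nat.descFactorial_eq_factorial_mul_choose]
    have hfac : (m.factorial : ℝ) ≠ 0 := Nat.cast_ne_zero.mpr m.factorial_ne_zero
    push_cast
    field_simp
  have hrhs : ∑ m ∈ Finset.range (min n j + 1),
      ((m.factorial : ℝ)⁻¹ * D m) * (n.descFactorial m : ℝ)
      = ∑ m ∈ Finset.range (min n j + 1), (n.choose m : ℝ) * D m :=
    Finset.sum_congr rfl fun m _ => hco m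
  show F n = ∑ m ∈ Finset.range (min n j + 1),
      ((m.factorial : ℝ)⁻¹ * D m) * (n.descFactorial m : ℝ)
  rw [hrhs, hnewton]
  rcases le_or_gt n j with h | h
  · rw [min_eq_left h]
  · rw [min_eq_right h.le]
    refine (Finset.sum_subset (Finset.range_subset_range.2 (by omega)) ?_).symm
    intro m hm hm'
    simp only [Finset.mem_range, not_lt] at hm hm'
    have hDm : D m = 0 := by
      have hv := vanish hmeas hindep hident hmom j m 0 (by omega)
      simpa [hD, hF] using hv
    rw [hDm, mul_zero]
end

section
/- Let Y be a real random variable with E[Y^k] = 0 for k = 1, ..., r (r ≥ 0) and all moments finite, let (Y_k) be i.i.d. copies with partial sums S_k, and set S_Y(j,m) = (1/m!) ∑_{k=0}^{m} C(m,k)(-1)^{m-k} E[S_k^j]. Then S_Y(j,m) = 0 whenever j < m(r+1). -/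
open MeasureTheory ProbabilityTheory

theorem aux_fwdDiff_vanish {Ω : Type*} [MeasurableSpace Ω] (μ : Measure Ω)
    [IsProbabilityMeasure μ]
    (Y : ℕ → Ω → ℝ) (hmeas : ∀ i, Measurable (Y i))
    (hindep : iIndepFun Y μ)
    (hident : ∀ i, IdentDistrib (Y i) (Y 0) μ μ)
    (hmom : ∀ j : ℕ, Integrable (fun ω => |Y 0 ω| ^ j) μ)
    (r : ℕ) (hcent : ∀ k ∈ Finset.Icc 1 r, ∫ ω, (Y 0 ω) ^ k ∂μ = 0)
    (m : ℕ) : ∀ j : ℕ, j < m * (r + 1) →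
      (fwdDiff (1 : ℕ))^[m] (fun k => ∫ ω, (∑ i ∈ Finset.range k, Y i ω) ^ j ∂μ) = 0 := by
  classical
  set g : ℕ → ℕ → ℝ := fun n k => ∫ ω, (∑ i ∈ Finset.range k, Y i ω) ^ n ∂μ with hg
  -- integrability of powers of Y 0
  have hY0int : ∀ t : ℕ, Integrable (fun ω => Y 0 ω ^ t) μ := by
    intro t
    refine (hmom t).mono' (((hmeas 0).pow_const t).aestronglyMeasurable) ?_
    filter_upwards with ω
    simp [abs_pow]
  -- identically distributed powers
  have hidpow : ∀ i t : ℕ, IdentDistrib (fun ω => Y i ω ^ t) (fun ω => Y 0 ω ^ t) μ μ :=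
    fun i t => (hident i).comp (measurable_id.pow_const t)
  have hYint : ∀ i t : ℕ, Integrable (fun ω => Y i ω ^ t) μ := fun i t =>
    (hidpow i t).integrable_iff.mpr (hY0int t)
  have hYmom : ∀ i t : ℕ, ∫ ω, Y i ω ^ t ∂μ = ∫ ω, Y 0 ω ^ t ∂μ := fun i t =>
    (hidpow i t).integral_eq
  -- independence of partial sums and the next term, with powers
  have hsum_eq : ∀ k : ℕ, (fun ω => ∑ i ∈ Finset.range k, Y i ω)
      = ∑ i ∈ Finset.range k, Y i := by
    intro k; ext ω; simp
  have hindepPow : ∀ k t u : ℕ,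
      IndepFun (fun ω => (∑ i ∈ Finset.range k, Y i ω) ^ t) (fun ω => Y k ω ^ u) μ := by
    intro k t u
    have h0 : IndepFun (∑ i ∈ Finset.range k, Y i) (Y k) μ :=
      hindep.indepFun_sum_range_succ hmeas k
    rw [← hsum_eq k] at h0
    exact h0.comp (measurable_id.pow_const t) (measurable_id.pow_const u)
  -- integrability of powers of partial sums
  have hSint : ∀ k t : ℕ, Integrable (fun ω => (∑ i ∈ Finset.range k, Y i ω) ^ t) μ := by
    intro k
    induction k with
    | zero =>
      intro t
      simp only [Finset.range_zero, Finset.sum_empty]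
      exact integrable_const _
    | succ k ih =>
      intro t
      have h1 : ∀ ω, (∑ i ∈ Finset.range (k + 1), Y i ω) ^ t
          = ∑ u ∈ Finset.range (t + 1),
              (∑ i ∈ Finset.range k, Y i ω) ^ u * Y k ω ^ (t - u) * (t.choose u : ℝ) := by
        intro ω; rw [Finset.sum_range_succ, add_pow]
      simp_rw [h1]
      refine integrable_finset_sum _ fun u _ => ?_
      exact ((hindepPow k u (t - u)).integrable_mul (ih u) (hYint k (t - u))).mul_const _
  -- the key recursion
  have key : ∀ n k : ℕ, g n (k + 1)
      = ∑ i ∈ Finset.range (n + 1),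
          (n.choose i : ℝ) * g i k * (∫ ω, Y 0 ω ^ (n - i) ∂μ) := by
    intro n k
    have h1 : ∀ ω, (∑ i ∈ Finset.range (k + 1), Y i ω) ^ n
        = ∑ u ∈ Finset.range (n + 1),
            (∑ i ∈ Finset.range k, Y i ω) ^ u * Y k ω ^ (n - u) * (n.choose u : ℝ) := by
      intro ω; rw [Finset.sum_range_succ, add_pow]
    rw [hg]
    simp only
    simp_rw [h1]
    have hint : ∀ u ∈ Finset.range (n + 1), Integrable
        (fun ω => (∑ i ∈ Finset.range k, Y i ω) ^ u * Y k ω ^ (n - u) * (n.choose u : ℝ)) μ :=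
      fun u _ =>
      ((hindepPow k u (n - u)).integrable_mul (hSint k u) (hYint k (n - u))).mul_const _
    rw [integral_finset_sum _ hint]
    refine Finset.sum_congr rfl fun u _ => ?_
    rw [integral_mul_const]
    have h2 : ∫ ω, (∑ i ∈ Finset.range k, Y i ω) ^ u * Y k ω ^ (n - u) ∂μ
        = (∫ ω, (∑ i ∈ Finset.range k, Y i ω) ^ u ∂μ) * ∫ ω, Y k ω ^ (n - u) ∂μ :=
      (hindepPow k u (n - u)).integral_fun_mul_eq_mul_integral
        (hSint k u).aestronglyMeasurable (hYint k (n - u)).aestronglyMeasurable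
    rw [h2, hYmom k (n - u)]
    ring
  -- forward difference step
  have hstep : ∀ n : ℕ, fwdDiff (1 : ℕ) (g n)
      = ∑ i ∈ Finset.range n, ((n.choose i : ℝ) * (∫ ω, Y 0 ω ^ (n - i) ∂μ)) • g i := by
    intro n
    funext k
    have h0 : (∫ ω, Y 0 ω ^ (n - n) ∂μ) = 1 := by
      simp [Nat.sub_self, measure_univ]
    rw [fwdDiff]
    rw [key n k, Finset.sum_range_succ, Nat.choose_self, h0]
    simp only [Nat.cast_one, one_mul, mul_one, add_sub_cancel_right, Finset.sum_apply,
      Pi.smul_apply, smul_eq_mul]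
    exact Finset.sum_congr rfl fun i _ => by ring
  -- main induction
  induction m with
  | zero => intro j hj; simp at hj
  | succ m ih =>
    intro j hj
    rw [Function.iterate_succ_apply, hstep j, fwdDiff_iter_finset_sum]
    refine Finset.sum_eq_zero fun i hi => ?_
    rw [fwdDiff_iter_const_smul]
    by_cases hle : j - i ≤ r
    · have h1 : 1 ≤ j - i := by
        have := Finset.mem_range.mp hi; omega
      have h2 : (∫ ω, Y 0 ω ^ (j - i) ∂μ) = 0 :=
        hcent _ (Finset.mem_Icc.mpr ⟨h1, hle⟩)
      simp [h2]
    · have h2 : i + (r + 1) ≤ j := by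
        have := Finset.mem_range.mp hi; omega
      have h3 : j < m * (r + 1) + (r + 1) := by
        rw [Nat.succ_mul] at hj; exact hj
      have h4 : i < m * (r + 1) := Nat.lt_of_add_lt_add_right (lt_of_le_of_lt h2 h3)
      rw [ih i h4]
      simp

/-- If `E[Y^k] = 0` for `k = 1,…,r` and all moments are finite, then the probabilistic
Stirling number `S_Y(j,m) = (1/m!) ∑_{k=0}^m C(m,k)(-1)^{m-k} E[S_k^j]` vanishes
whenever `j < m(r+1)`. -/
theorem stmt_8 {Ω : Type*} [MeasurableSpace Ω] (μ : Measure Ω) [IsProbabilityMeasure μ]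
    (Y : ℕ → Ω → ℝ) (hmeas : ∀ i, Measurable (Y i))
    (hindep : iIndepFun Y μ)
    (hident : ∀ i, IdentDistrib (Y i) (Y 0) μ μ)
    (hmom : ∀ j : ℕ, Integrable (fun ω => |Y 0 ω| ^ j) μ)
    (r : ℕ) (hcent : ∀ k ∈ Finset.Icc 1 r, ∫ ω, (Y 0 ω) ^ k ∂μ = 0)
    (j m : ℕ) (hjm : j < m * (r + 1)) :
    (m.factorial : ℝ)⁻¹ * ∑ k ∈ Finset.range (m + 1), (m.choose k : ℝ) * (-1) ^ (m - k) *
        ∫ ω, (∑ i ∈ Finset.range k, Y i ω) ^ j ∂μ = 0 := by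
  have hvan := aux_fwdDiff_vanish μ Y hmeas hindep hident hmom r hcent m j hjm
  have h0 := fwdDiff_iter_eq_sum_shift (1 : ℕ)
    (fun k => ∫ ω, (∑ i ∈ Finset.range k, Y i ω) ^ j ∂μ) m 0
  rw [hvan] at h0
  simp only [Pi.zero_apply] at h0
  have h1 : ∑ k ∈ Finset.range (m + 1), (m.choose k : ℝ) * (-1) ^ (m - k) *
      ∫ ω, (∑ i ∈ Finset.range k, Y i ω) ^ j ∂μ = 0 := by
    rw [← h0.symm] at *
    refine Eq.trans ?_ h0.symm
    refine Finset.sum_congr rfl fun k _ => ?_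
    have hk : 0 + k • (1 : ℕ) = k := by simp
    rw [hk, zsmul_eq_mul]
    push_cast
    ring
  rw [h1, mul_zero]
end

section
/- Let Y be a real random variable with E[Y] = 0, E[Y^2] = σ² > 0, and all moments finite, and (Y_k) i.i.d. copies with partial sums S_n. Then the probabilistic Stirling number of top index satisfies S_Y(2j, j) = σ^{2j} (2j)!/(j! 2^j), i.e., S_Y(2j,j) equals E[(σZ)^{2j}] for Z standard normal. -/
open MeasureTheory ProbabilityTheory

namespace Stmt9Aux
open Finset


def fwd (S : Finset ℕ) (κ : ℕ → ℕ) (i : ℕ) : ℕ :=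
  if h : i < S.card then κ (S.orderIsoOfFin rfl ⟨i, h⟩) else 0

def bwd (S : Finset ℕ) (κ : ℕ → ℕ) (a : ℕ) : ℕ :=
  if h : a ∈ S then κ ((S.orderIsoOfFin rfl).symm ⟨a, h⟩) else 0

lemma prod_fwd {N : Type*} [CommMonoid N] (S : Finset ℕ) (κ : ℕ → ℕ) (g : ℕ → N) :
    ∏ i ∈ range S.card, g (fwd S κ i) = ∏ a ∈ S, g (κ a) := by
  rw [← Fin.prod_univ_eq_prod_range]
  rw [Fintype.prod_equiv (S.orderIsoOfFin rfl).toEquiv _ (fun a => g (κ a))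
    (fun i => by simp [fwd, i.isLt])]
  rw [← Finset.prod_attach S (fun a => g (κ a))]
  rfl

lemma sum_fwd {N : Type*} [AddCommMonoid N] (S : Finset ℕ) (κ : ℕ → ℕ) (g : ℕ → N) :
    ∑ i ∈ range S.card, g (fwd S κ i) = ∑ a ∈ S, g (κ a) := by
  rw [← Fin.sum_univ_eq_sum_range]
  rw [Fintype.sum_equiv (S.orderIsoOfFin rfl).toEquiv _ (fun a => g (κ a))
    (fun i => by simp [fwd, i.isLt])]
  rw [← Finset.sum_attach S (fun a => g (κ a))]
  rfl

lemma bwd_fwd {S : Finset ℕ} {κ : ℕ → ℕ} (hκ : ∀ i, κ i ≠ 0 → i ∈ S) :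
    bwd S (fwd S κ) = κ := by
  funext a
  by_cases h : a ∈ S
  · have hlt : (((S.orderIsoOfFin rfl).symm ⟨a, h⟩ : Fin S.card) : ℕ) < S.card :=
      ((S.orderIsoOfFin rfl).symm ⟨a, h⟩).isLt
    simp only [bwd, dif_pos h, fwd, dif_pos hlt]
    congr 1
    have : (⟨(((S.orderIsoOfFin rfl).symm ⟨a, h⟩ : Fin S.card) : ℕ), hlt⟩ : Fin S.card)
        = (S.orderIsoOfFin rfl).symm ⟨a, h⟩ := by
      ext; rfl
    rw [this]
    simp
  · simp only [bwd, dif_neg h]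
    exact (not_imp_comm.1 (hκ a) h).symm

lemma fwd_bwd {S : Finset ℕ} {κ : ℕ → ℕ} (hκ : ∀ i, κ i ≠ 0 → i ∈ range S.card) :
    fwd S (bwd S κ) = κ := by
  funext i
  by_cases h : i < S.card
  · have hm : ((S.orderIsoOfFin rfl ⟨i, h⟩ : ℕ)) ∈ S := (S.orderIsoOfFin rfl ⟨i, h⟩).2
    simp only [fwd, dif_pos h, bwd, dif_pos hm]
    congr 1
    have : (⟨(S.orderIsoOfFin rfl ⟨i, h⟩ : ℕ), hm⟩ : {x // x ∈ S}) = S.orderIsoOfFin rfl ⟨i, h⟩ := by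
      ext; rfl
    rw [this]
    simp
  · simp only [fwd, dif_neg h]
    refine (not_imp_comm.1 (hκ i) ?_).symm
    simpa using h

noncomputable def Hfun (M : ℕ → ℝ) (n : ℕ) (S : Finset ℕ) : ℝ :=
  ∑ κ ∈ (S.piAntidiag n).filter (fun κ => ∀ i ∈ S, κ i ≠ 0),
    (Nat.multinomial S κ : ℝ) * ∏ i ∈ S, M (κ i)

lemma Hcard (M : ℕ → ℝ) (n : ℕ) (S : Finset ℕ) :
    Hfun M n S = Hfun M n (range S.card) := by
  unfold Hfun
  refine Finset.sum_nbij' (fwd S) (bwd S) ?_ ?_ ?_ ?_ ?_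
  · intro κ hκ
    simp only [mem_filter, mem_piAntidiag] at hκ ⊢
    obtain ⟨⟨hsum, hsupp⟩, hpos⟩ := hκ
    refine ⟨⟨?_, ?_⟩, ?_⟩
    · show ∑ i ∈ range S.card, fwd S κ i = n
      rw [sum_fwd S κ (fun x => x)]; exact hsum
    · intro i hi
      simp only [card_range, mem_range]
      by_contra h
      exact hi (dif_neg (by simpa using h))
    · intro i hi
      simp only [card_range, mem_range] at hi
      rw [fwd, dif_pos hi]
      exact hpos _ (S.orderIsoOfFin rfl ⟨i, hi⟩).2
  · intro κ hκ
    simp only [mem_filter, mem_piAntidiag, card_range] at hκ ⊢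
    obtain ⟨⟨hsum, hsupp⟩, hpos⟩ := hκ
    have hfb : fwd S (bwd S κ) = κ := fwd_bwd (by simpa using hsupp)
    refine ⟨⟨?_, ?_⟩, ?_⟩
    · show ∑ a ∈ S, bwd S κ a = n
      rw [← sum_fwd S (bwd S κ) (fun x => x), hfb]; exact hsum
    · intro a ha
      by_contra h
      exact ha (dif_neg h)
    · intro a ha
      rw [bwd, dif_pos ha]
      exact hpos _ (by simpa using (((S.orderIsoOfFin rfl).symm ⟨a, ha⟩).isLt))
  · intro κ hκ
    simp only [mem_filter, mem_piAntidiag] at hκ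
    exact bwd_fwd hκ.1.2
  · intro κ hκ
    simp only [mem_filter, mem_piAntidiag, card_range] at hκ
    exact fwd_bwd (by simpa using hκ.1.2)
  · intro κ hκ
    have h1 : Nat.multinomial S κ = Nat.multinomial (range S.card) (fwd S κ) := by
      unfold Nat.multinomial
      rw [sum_fwd S κ (fun x => x), prod_fwd S κ Nat.factorial]
    have h2 : ∏ i ∈ S, M (κ i) = ∏ i ∈ range S.card, M (fwd S κ i) := by
      rw [prod_fwd S κ M]
    rw [h1, h2]

lemma multinomial_subset {s t : Finset ℕ} (hst : s ⊆ t) {κ : ℕ → ℕ}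
    (hκ : ∀ i, κ i ≠ 0 → i ∈ s) : Nat.multinomial t κ = Nat.multinomial s κ := by
  unfold Nat.multinomial
  rw [← Finset.sum_subset hst (fun i _ hi => not_imp_comm.1 (hκ i) hi),
      ← Finset.prod_subset hst (fun i _ hi => by rw [not_imp_comm.1 (hκ i) hi]; rfl)]

lemma prodM_subset {M : ℕ → ℝ} (hM0 : M 0 = 1) {s t : Finset ℕ} (hst : s ⊆ t) {κ : ℕ → ℕ}
    (hκ : ∀ i, κ i ≠ 0 → i ∈ s) : ∏ i ∈ t, M (κ i) = ∏ i ∈ s, M (κ i) :=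
  (Finset.prod_subset hst fun i _ hi => by rw [not_imp_comm.1 (hκ i) hi, hM0]).symm

lemma Gsum (M : ℕ → ℝ) (hM0 : M 0 = 1) (n : ℕ) (s : Finset ℕ) :
    ∑ κ ∈ s.piAntidiag n, (Nat.multinomial s κ : ℝ) * ∏ i ∈ s, M (κ i)
      = ∑ S ∈ s.powerset, Hfun M n S := by
  rw [← Finset.sum_fiberwise_of_maps_to
    (g := fun κ => s.filter (fun i => κ i ≠ 0)) (t := s.powerset)
    (fun κ _ => mem_powerset.2 (filter_subset _ _))
    (fun κ => (Nat.multinomial s κ : ℝ) * ∏ i ∈ s, M (κ i))]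
  refine Finset.sum_congr rfl fun S hS => ?_
  have hSs : S ⊆ s := mem_powerset.1 hS
  have hset : (s.piAntidiag n).filter (fun κ => s.filter (fun i => κ i ≠ 0) = S)
      = (S.piAntidiag n).filter (fun κ => ∀ i ∈ S, κ i ≠ 0) := by
    ext κ
    simp only [mem_filter, mem_piAntidiag]
    constructor
    · rintro ⟨⟨hsum, hsupp⟩, hfil⟩
      have hsuppS : ∀ i, κ i ≠ 0 → i ∈ S := fun i hi => by
        rw [← hfil]; exact mem_filter.2 ⟨hsupp i hi, hi⟩
      refine ⟨⟨?_, hsuppS⟩, fun i hiS => ?_⟩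
      · rw [← hsum]
        exact (Finset.sum_subset hSs fun i _ hi => not_imp_comm.1 (hsuppS i) hi)
      · rw [← hfil] at hiS
        exact (mem_filter.1 hiS).2
    · rintro ⟨⟨hsum, hsupp⟩, hpos⟩
      refine ⟨⟨?_, fun i hi => hSs (hsupp i hi)⟩, ?_⟩
      · rw [← hsum]
        exact (Finset.sum_subset hSs fun i _ hi => not_imp_comm.1 (hsupp i) hi).symm
      · ext i
        simp only [mem_filter]
        exact ⟨fun ⟨_, h2⟩ => hsupp i h2, fun hi => ⟨hSs hi, hpos i hi⟩⟩
  rw [hset]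
  refine Finset.sum_congr rfl fun κ hκ => ?_
  simp only [mem_filter, mem_piAntidiag] at hκ
  rw [multinomial_subset hSs hκ.1.2, prodM_subset hM0 hSs hκ.1.2]

lemma G_eq (M : ℕ → ℝ) (hM0 : M 0 = 1) (n k : ℕ) :
    ∑ κ ∈ (range k).piAntidiag n,
        (Nat.multinomial (range k) κ : ℝ) * ∏ i ∈ range k, M (κ i)
      = ∑ m ∈ range (k + 1), (k.choose m : ℝ) * Hfun M n (range m) := by
  rw [Gsum M hM0 n (range k)]
  have h1 : ∀ S ∈ (range k).powerset, Hfun M n S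
      = (fun m => Hfun M n (range m)) S.card := fun S _ => Hcard M n S
  rw [Finset.sum_congr rfl h1, Finset.sum_powerset_apply_card
    (fun m => Hfun M n (range m)) (x := range k), card_range]
  refine Finset.sum_congr rfl fun m _ => ?_
  rw [nsmul_eq_mul]

lemma alt_real (d : ℕ) :
    ∑ t ∈ range (d + 1), ((-1 : ℝ)) ^ t * (d.choose t : ℝ) = if d = 0 then 1 else 0 := by
  have h := Int.alternating_sum_range_choose (n := d)
  have h2 := congrArg (fun z : ℤ => (z : ℝ)) h
  push_cast at h2
  convert h2 using 2

lemma delta (j m : ℕ) (hm : m ≤ j) :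
    ∑ k ∈ range (j + 1), (j.choose k : ℝ) * (-1) ^ (j - k) * (k.choose m : ℝ)
      = if m = j then 1 else 0 := by
  set d := j - m with hd
  have h1 : ∑ k ∈ range (j + 1), (j.choose k : ℝ) * (-1) ^ (j - k) * (k.choose m : ℝ)
      = ∑ k ∈ Ico m (j + 1), (j.choose k : ℝ) * (-1) ^ (j - k) * (k.choose m : ℝ) := by
    refine (Finset.sum_subset ?_ ?_).symm
    · intro k hk
      simp only [mem_Ico] at hk
      simp only [mem_range]
      omega
    · intro k hk1 hk2
      simp only [mem_range] at hk1
      simp only [mem_Ico, not_and, not_lt] at hk2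
      have : k < m := by omega
      rw [Nat.choose_eq_zero_of_lt this]
      simp
  rw [h1, Finset.sum_Ico_eq_sum_range]
  have h2 : j + 1 - m = d + 1 := by omega
  rw [h2]
  have h3 : ∀ t ∈ range (d + 1),
      (j.choose (m + t) : ℝ) * (-1) ^ (j - (m + t)) * ((m + t).choose m : ℝ)
      = (j.choose m : ℝ) * ((-1) ^ d * ((-1) ^ t * (d.choose t : ℝ))) := by
    intro t ht
    simp only [mem_range] at ht
    have htd : t ≤ d := by omega
    have hkn : m + t ≤ j := by omega
    have hchoose : j.choose (m + t) * (m + t).choose m = j.choose m * d.choose t := by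
      have := Nat.choose_mul (n := j) (k := m + t) (s := m) (Nat.le_add_right m t)
      simpa [hd, Nat.add_sub_cancel_left] using this
    have hsign : ((-1 : ℝ)) ^ (j - (m + t)) = (-1) ^ d * (-1) ^ t := by
      have he : j - (m + t) = d - t := by omega
      have h4 : ((-1 : ℝ)) ^ (d - t) * (-1) ^ t = (-1) ^ d := by
        rw [← pow_add, Nat.sub_add_cancel htd]
      have h5 : ((-1 : ℝ)) ^ t * (-1) ^ t = 1 := by
        rw [← pow_add]
        exact Even.neg_one_pow ⟨t, rfl⟩
      calc ((-1 : ℝ)) ^ (j - (m + t)) = (-1) ^ (d - t) * ((-1) ^ t * (-1) ^ t) := by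
            rw [he, h5, mul_one]
        _ = (-1) ^ d * (-1) ^ t := by rw [← mul_assoc, h4]
    have hc : (j.choose (m + t) : ℝ) * ((m + t).choose m : ℝ)
        = (j.choose m : ℝ) * (d.choose t : ℝ) := by exact_mod_cast hchoose
    rw [hsign]
    linear_combination ((-1 : ℝ) ^ d * (-1) ^ t) * hc
  rw [Finset.sum_congr rfl h3, ← Finset.mul_sum, ← Finset.mul_sum, alt_real d]
  by_cases hdm : m = j
  · subst hdm
    simp [hd]
  · have : d ≠ 0 := by omega
    simp [this, hdm]

lemma Hfun_eval (M : ℕ → ℝ) (hM1 : M 1 = 0) (j : ℕ) :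
    Hfun M (2 * j) (range j) * 2 ^ j = ((2 * j).factorial : ℝ) * (M 2) ^ j := by
  classical
  set κ₂ : ℕ → ℕ := fun i => if i < j then 2 else 0 with hκ₂
  have hval : ∀ i ∈ range j, κ₂ i = 2 := fun i hi => if_pos (mem_range.1 hi)
  have hsum2 : ∑ i ∈ range j, κ₂ i = 2 * j := by
    rw [Finset.sum_congr rfl hval, Finset.sum_const, card_range, smul_eq_mul, mul_comm]
  have hmem : κ₂ ∈ ((range j).piAntidiag (2 * j)).filter (fun κ => ∀ i ∈ range j, κ i ≠ 0) := by
    simp only [mem_filter, mem_piAntidiag]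
    refine ⟨⟨hsum2, fun i hi => ?_⟩, fun i hi => ?_⟩
    · simp only [hκ₂] at hi
      by_contra h
      simp only [mem_range, not_lt] at h
      exact hi (if_neg (by omega))
    · simp only [mem_range] at hi
      simp [hκ₂, hi]
  have hH : Hfun M (2 * j) (range j)
      = (Nat.multinomial (range j) κ₂ : ℝ) * ∏ i ∈ range j, M (κ₂ i) := by
    refine Finset.sum_eq_single_of_mem κ₂ hmem ?_
    intro κ hκ hne
    simp only [mem_filter, mem_piAntidiag] at hκ
    obtain ⟨⟨hsum, hsupp⟩, hpos⟩ := hκ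
    have hone : ∃ i ∈ range j, κ i = 1 := by
      by_contra h
      push_neg at h
      have h2 : ∀ i ∈ range j, 2 ≤ κ i := by
        intro i hi
        have := hpos i hi
        have := h i hi
        omega
      have hall : ∀ i ∈ range j, κ i = 2 := by
        by_contra hx
        push_neg at hx
        obtain ⟨i0, hi0, hi0ne⟩ := hx
        have hlt : ∑ i ∈ range j, (fun _ => 2) i < ∑ i ∈ range j, κ i :=
          Finset.sum_lt_sum h2 ⟨i0, hi0, by have := h2 i0 hi0; omega⟩
        simp only [Finset.sum_const, card_range, smul_eq_mul, hsum] at hlt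
        omega
      apply hne
      funext i
      by_cases hij : i < j
      · rw [hall i (mem_range.2 hij), hκ₂]
        simp [hij]
      · have : κ i = 0 := by
          by_contra hc
          exact hij (mem_range.1 (hsupp i hc))
        rw [this, hκ₂]
        simp [hij]
    obtain ⟨i1, hi1, hi1e⟩ := hone
    have : ∏ i ∈ range j, M (κ i) = 0 :=
      Finset.prod_eq_zero hi1 (by rw [hi1e, hM1])
    rw [this, mul_zero]
  have hprod2 : ∏ i ∈ range j, M (κ₂ i) = (M 2) ^ j := by
    have : ∀ i ∈ range j, M (κ₂ i) = M 2 := fun i hi => by rw [hval i hi]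
    rw [Finset.prod_congr rfl this, Finset.prod_const, card_range]
  have hspec := Nat.multinomial_spec (range j) κ₂
  have hfac : ∏ i ∈ range j, (κ₂ i).factorial = 2 ^ j := by
    have : ∀ i ∈ range j, (κ₂ i).factorial = 2 := fun i hi => by rw [hval i hi]; rfl
    rw [Finset.prod_congr rfl this, Finset.prod_const, card_range]
  rw [hfac, hsum2] at hspec
  have hspecR : (2 : ℝ) ^ j * (Nat.multinomial (range j) κ₂ : ℝ)
      = ((2 * j).factorial : ℝ) := by exact_mod_cast hspec
  rw [hH, hprod2]
  calc (Nat.multinomial (range j) κ₂ : ℝ) * (M 2) ^ j * 2 ^ j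
      = (2 ^ j * (Nat.multinomial (range j) κ₂ : ℝ)) * (M 2) ^ j := by ring
    _ = ((2 * j).factorial : ℝ) * (M 2) ^ j := by rw [hspecR]

lemma core (M : ℕ → ℝ) (hM0 : M 0 = 1) (j : ℕ) :
    ∑ k ∈ range (j + 1), (j.choose k : ℝ) * (-1) ^ (j - k) *
        ∑ κ ∈ (range k).piAntidiag (2 * j),
          (Nat.multinomial (range k) κ : ℝ) * ∏ i ∈ range k, M (κ i)
      = Hfun M (2 * j) (range j) := by
  have step1 : ∀ k ∈ range (j + 1),
      (j.choose k : ℝ) * (-1) ^ (j - k) *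
        ∑ κ ∈ (range k).piAntidiag (2 * j),
          (Nat.multinomial (range k) κ : ℝ) * ∏ i ∈ range k, M (κ i)
      = ∑ m ∈ range (j + 1),
          (j.choose k : ℝ) * (-1) ^ (j - k) * ((k.choose m : ℝ) * Hfun M (2 * j) (range m)) := by
    intro k hk
    simp only [mem_range] at hk
    rw [G_eq M hM0 (2 * j) k]
    have hext : ∑ m ∈ range (k + 1), (k.choose m : ℝ) * Hfun M (2 * j) (range m)
        = ∑ m ∈ range (j + 1), (k.choose m : ℝ) * Hfun M (2 * j) (range m) := by
      refine Finset.sum_subset (by intro x hx; simp only [mem_range] at *; omega) ?_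
      intro m hm1 hm2
      simp only [mem_range] at hm1 hm2
      have : k < m := by omega
      rw [Nat.choose_eq_zero_of_lt this]
      simp
    rw [hext, Finset.mul_sum]
  rw [Finset.sum_congr rfl step1, Finset.sum_comm]
  have step2 : ∀ m ∈ range (j + 1),
      ∑ k ∈ range (j + 1),
          (j.choose k : ℝ) * (-1) ^ (j - k) * ((k.choose m : ℝ) * Hfun M (2 * j) (range m))
      = (if m = j then 1 else 0) * Hfun M (2 * j) (range m) := by
    intro m hm
    simp only [mem_range] at hm
    have : ∑ k ∈ range (j + 1),
        (j.choose k : ℝ) * (-1) ^ (j - k) * ((k.choose m : ℝ) * Hfun M (2 * j) (range m))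
        = (∑ k ∈ range (j + 1), (j.choose k : ℝ) * (-1) ^ (j - k) * (k.choose m : ℝ))
            * Hfun M (2 * j) (range m) := by
      rw [Finset.sum_mul]
      exact Finset.sum_congr rfl fun k _ => by ring
    rw [this, delta j m (by omega)]
  rw [Finset.sum_congr rfl step2]
  simp only [ite_mul, one_mul, zero_mul]
  rw [Finset.sum_ite_eq' (range (j + 1)) j (fun m => Hfun M (2 * j) (range m))]
  simp

variable {Ω : Type*} [MeasurableSpace Ω] {μ : Measure Ω} [IsProbabilityMeasure μ]

lemma prod_integral (g : ℕ → Ω → ℝ) (hind : iIndepFun g μ)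
    (hm : ∀ i, Measurable (g i)) (hint : ∀ i, Integrable (g i) μ) (s : Finset ℕ) :
    Integrable (fun ω => ∏ i ∈ s, g i ω) μ ∧
      ∫ ω, ∏ i ∈ s, g i ω ∂μ = ∏ i ∈ s, ∫ ω, g i ω ∂μ := by
  classical
  induction s using Finset.cons_induction with
  | empty =>
    constructor
    · simpa using (integrable_const (1 : ℝ))
    · simp
  | cons a s ha ih =>
    have hfn : (∏ j ∈ s, g j) = fun ω => ∏ j ∈ s, g j ω := by
      funext ω; rw [Finset.prod_apply]
    have hpair : IndepFun (g a) (fun ω => ∏ j ∈ s, g j ω) μ := by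
      have h := (hind.indepFun_finsetProd_of_notMem hm ha).symm
      rwa [hfn] at h
    have hint2 : Integrable (fun ω => g a ω * ∏ j ∈ s, g j ω) μ :=
      hpair.integrable_mul (hint a) ih.1
    constructor
    · refine hint2.congr (Filter.Eventually.of_forall fun ω => ?_)
      simp [Finset.prod_insert ha]
    · have h1 : ∫ ω, ∏ i ∈ Finset.cons a s ha, g i ω ∂μ
          = ∫ ω, g a ω * ∏ j ∈ s, g j ω ∂μ := by
        congr 1; funext ω; rw [Finset.prod_cons]
      have h2 := hpair.integral_mul_eq_mul_integral (hint a).aestronglyMeasurable ih.1.aestronglyMeasurable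
      have h3 : (∫ ω, g a ω * ∏ j ∈ s, g j ω ∂μ)
          = (∫ ω, g a ω ∂μ) * ∫ ω, ∏ j ∈ s, g j ω ∂μ := h2
      rw [h1, h3, ih.2, Finset.prod_cons]

end Stmt9Aux

open Stmt9Aux in
/-- If `E[Y] = 0`, `E[Y²] = σ² > 0` and all moments are finite, then
`S_Y(2j,j) = σ^{2j} (2j)!/(j! 2^j) = E[(σZ)^{2j}]` for `Z` standard normal. -/
theorem stmt_9 {Ω : Type*} [MeasurableSpace Ω] (μ : Measure Ω) [IsProbabilityMeasure μ]
    (Y : ℕ → Ω → ℝ) (hmeas : ∀ i, Measurable (Y i))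
    (hindep : iIndepFun Y μ)
    (hident : ∀ i, IdentDistrib (Y i) (Y 0) μ μ)
    (hmom : ∀ j : ℕ, Integrable (fun ω => |Y 0 ω| ^ j) μ)
    (hcent : ∫ ω, Y 0 ω ∂μ = 0)
    (σ : ℝ) (hσpos : 0 < σ) (hσ : ∫ ω, (Y 0 ω) ^ 2 ∂μ = σ ^ 2)
    (j : ℕ) :
    (j.factorial : ℝ)⁻¹ * ∑ k ∈ Finset.range (j + 1), (j.choose k : ℝ) * (-1) ^ (j - k) *
        ∫ ω, (∑ i ∈ Finset.range k, Y i ω) ^ (2 * j) ∂μ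
      = σ ^ (2 * j) * ((2 * j).factorial : ℝ) / ((j.factorial : ℝ) * 2 ^ j) := by
  classical
  set M : ℕ → ℝ := fun t => ∫ ω, Y 0 ω ^ t ∂μ with hM
  have hM0 : M 0 = 1 := by simp [hM]
  have hM1 : M 1 = 0 := by simpa [hM] using hcent
  have hM2 : M 2 = σ ^ 2 := by simpa [hM] using hσ
  -- integrability of powers of Y 0
  have hint0 : ∀ t : ℕ, Integrable (fun ω => Y 0 ω ^ t) μ := by
    intro t
    refine (hmom t).mono' ((hmeas 0).pow_const t).aestronglyMeasurable
      (Filter.Eventually.of_forall fun ω => ?_)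
    rw [Real.norm_eq_abs, abs_pow]
  -- identical distribution of powers
  have hid : ∀ (i : ℕ) (t : ℕ),
      IdentDistrib (fun ω => Y i ω ^ t) (fun ω => Y 0 ω ^ t) μ μ := fun i t =>
    (hident i).comp (measurable_id.pow_const t)
  have hinti : ∀ (i : ℕ) (t : ℕ), Integrable (fun ω => Y i ω ^ t) μ := fun i t =>
    ((hid i t).integrable_iff).2 (hint0 t)
  have hvali : ∀ (i : ℕ) (t : ℕ), ∫ ω, Y i ω ^ t ∂μ = M t := fun i t =>
    (hid i t).integral_eq
  -- moment expansion of ∫ S_k^(2j)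
  have hexp : ∀ k : ℕ,
      ∫ ω, (∑ i ∈ Finset.range k, Y i ω) ^ (2 * j) ∂μ
      = ∑ κ ∈ (Finset.range k).piAntidiag (2 * j),
          (Nat.multinomial (Finset.range k) κ : ℝ) * ∏ i ∈ Finset.range k, M (κ i) := by
    intro k
    have hpt : (fun ω => (∑ i ∈ Finset.range k, Y i ω) ^ (2 * j))
        = fun ω => ∑ κ ∈ (Finset.range k).piAntidiag (2 * j),
            (Nat.multinomial (Finset.range k) κ : ℝ) * ∏ i ∈ Finset.range k, Y i ω ^ κ i := by
      funext ω
      exact Finset.sum_pow_eq_sum_piAntidiag (Finset.range k) (fun i => Y i ω) (2 * j)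
    have hg : ∀ κ : ℕ → ℕ,
        Integrable (fun ω => ∏ i ∈ Finset.range k, Y i ω ^ κ i) μ ∧
          ∫ ω, ∏ i ∈ Finset.range k, Y i ω ^ κ i ∂μ
            = ∏ i ∈ Finset.range k, ∫ ω, Y i ω ^ κ i ∂μ := by
      intro κ
      exact prod_integral (fun i ω => Y i ω ^ κ i)
        (hindep.comp (fun i (x : ℝ) => x ^ κ i) (fun i => measurable_id.pow_const _))
        (fun i => (hmeas i).pow_const _) (fun i => hinti i (κ i)) (Finset.range k)
    rw [hpt, integral_finset_sum _ (fun κ _ => ((hg κ).1.const_mul _))]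
    refine Finset.sum_congr rfl fun κ _ => ?_
    rw [MeasureTheory.integral_const_mul, (hg κ).2]
    congr 1
    exact Finset.prod_congr rfl fun i _ => hvali i (κ i)
  have hcore := core M hM0 j
  have hsum : ∑ k ∈ Finset.range (j + 1), (j.choose k : ℝ) * (-1) ^ (j - k) *
        ∫ ω, (∑ i ∈ Finset.range k, Y i ω) ^ (2 * j) ∂μ
      = Hfun M (2 * j) (Finset.range j) := by
    rw [← hcore]
    exact Finset.sum_congr rfl fun k _ => by rw [hexp k]
  rw [hsum]
  have heval := Hfun_eval M hM1 j
  have h2j : (M 2) ^ j = σ ^ (2 * j) := by rw [hM2, ← pow_mul, mul_comm]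
  rw [h2j] at heval
  have h2ne : (2 : ℝ) ^ j ≠ 0 := by positivity
  have hfne : (j.factorial : ℝ) ≠ 0 := Nat.cast_ne_zero.2 j.factorial_ne_zero
  field_simp
  linear_combination heval
end

section
/- Let Y be a real random variable with E[Y] = 0, E[Y^2] = σ², E[Y^3] finite, and all moments finite, with i.i.d. copies and partial sums S_k. Then S_Y(2j+1, j) = j(2j+1) · σ^{2j}(2j)!/(j!2^j) · E[Y^3]/(3σ²), where S_Y(j,m) = (1/m!) ∑_{k=0}^{m} C(m,k)(-1)^{m-k} E[S_k^j]. -/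
open MeasureTheory ProbabilityTheory

section AuxStmt10

variable {Ω : Type*} [MeasurableSpace Ω] {μ : Measure Ω} [IsProbabilityMeasure μ]
  {Y : ℕ → Ω → ℝ}

lemma auxYint10 (hmeas : ∀ i, Measurable (Y i))
    (hident : ∀ i, IdentDistrib (Y i) (Y 0) μ μ)
    (hmom : ∀ j : ℕ, Integrable (fun ω => |Y 0 ω| ^ j) μ)
    (i t : ℕ) : Integrable (fun ω => Y i ω ^ t) μ := by
  have h0 : Integrable (fun ω => Y 0 ω ^ t) μ := by
    refine (hmom t).mono' ((hmeas 0).pow_const t).aestronglyMeasurable ?_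
    filter_upwards with ω
    simp [abs_pow, abs_abs, le_abs_self, abs_nonneg]
  have hid : IdentDistrib (fun ω => Y i ω ^ t) (fun ω => Y 0 ω ^ t) μ μ :=
    (hident i).comp (measurable_id.pow_const t)
  exact hid.integrable_iff.mpr h0

omit [IsProbabilityMeasure μ] in
lemma auxYm10 (hident : ∀ i, IdentDistrib (Y i) (Y 0) μ μ)
    (i t : ℕ) : ∫ ω, Y i ω ^ t ∂μ = ∫ ω, Y 0 ω ^ t ∂μ :=
  ((hident i).comp (measurable_id.pow_const t)).integral_eq

omit [IsProbabilityMeasure μ] in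
lemma auxIndep10 (hmeas : ∀ i, Measurable (Y i))
    (hindep : iIndepFun Y μ)
    (k n t : ℕ) :
    IndepFun (fun ω => (∑ i ∈ Finset.range k, Y i ω) ^ n) (fun ω => Y k ω ^ t) μ := by
  have hbase : IndepFun (∑ i ∈ Finset.range k, Y i) (Y k) μ :=
    hindep.indepFun_finsetSum_of_notMem hmeas (by simp)
  have := hbase.comp (measurable_id.pow_const n) (measurable_id.pow_const t)
  simpa [Function.comp_def] using this

lemma auxSint10 (hmeas : ∀ i, Measurable (Y i))
    (hindep : iIndepFun Y μ)
    (hident : ∀ i, IdentDistrib (Y i) (Y 0) μ μ)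
    (hmom : ∀ j : ℕ, Integrable (fun ω => |Y 0 ω| ^ j) μ) :
    ∀ k n, Integrable (fun ω => (∑ i ∈ Finset.range k, Y i ω) ^ n) μ := by
  intro k
  induction k with
  | zero => intro n; simpa using integrable_const ((0:ℝ) ^ n)
  | succ k IH =>
    intro n
    have hexp : (fun ω => (∑ i ∈ Finset.range (k+1), Y i ω) ^ n)
        = fun ω => ∑ i ∈ Finset.range (n+1),
            (∑ a ∈ Finset.range k, Y a ω) ^ i * Y k ω ^ (n - i) * (n.choose i : ℝ) := by
      funext ω
      rw [Finset.sum_range_succ, add_pow]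
    rw [hexp]
    refine integrable_finset_sum _ (fun i _ => ?_)
    have hmul : Integrable (fun ω => (∑ a ∈ Finset.range k, Y a ω) ^ i * Y k ω ^ (n - i)) μ := by
      have := (auxIndep10 hmeas hindep k i (n-i)).integrable_mul (IH i)
        (auxYint10 hmeas hident hmom k (n-i))
      exact this
    simpa using hmul.mul_const ((n.choose i : ℝ))

lemma auxRec10 (hmeas : ∀ i, Measurable (Y i))
    (hindep : iIndepFun Y μ)
    (hident : ∀ i, IdentDistrib (Y i) (Y 0) μ μ)
    (hmom : ∀ j : ℕ, Integrable (fun ω => |Y 0 ω| ^ j) μ)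
    (k n : ℕ) :
    ∫ ω, (∑ i ∈ Finset.range (k+1), Y i ω) ^ n ∂μ
      = ∑ i ∈ Finset.range (n+1), (n.choose i : ℝ)
          * (∫ ω, (∑ a ∈ Finset.range k, Y a ω) ^ i ∂μ) * (∫ ω, Y 0 ω ^ (n - i) ∂μ) := by
  have hexp : (fun ω => (∑ i ∈ Finset.range (k+1), Y i ω) ^ n)
      = fun ω => ∑ i ∈ Finset.range (n+1),
          (∑ a ∈ Finset.range k, Y a ω) ^ i * Y k ω ^ (n - i) * (n.choose i : ℝ) := by
    funext ω
    rw [Finset.sum_range_succ, add_pow]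
  rw [hexp, integral_finset_sum]
  · refine Finset.sum_congr rfl (fun i _ => ?_)
    rw [integral_mul_const]
    have := (auxIndep10 hmeas hindep k i (n-i)).integral_mul_eq_mul_integral
      (auxSint10 hmeas hindep hident hmom k i).aestronglyMeasurable (auxYint10 hmeas hident hmom k (n-i)).aestronglyMeasurable
    have h2 : ∫ ω, (∑ a ∈ Finset.range k, Y a ω) ^ i * Y k ω ^ (n - i) ∂μ
        = (∫ ω, (∑ a ∈ Finset.range k, Y a ω) ^ i ∂μ) * ∫ ω, Y k ω ^ (n - i) ∂μ := by
      simpa [Pi.mul_apply] using this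
    rw [h2, auxYm10 hident k (n-i)]
    ring
  · intro i _
    have hmul : Integrable (fun ω => (∑ a ∈ Finset.range k, Y a ω) ^ i * Y k ω ^ (n - i)) μ := by
      have := (auxIndep10 hmeas hindep k i (n-i)).integrable_mul
        (auxSint10 hmeas hindep hident hmom k i) (auxYint10 hmeas hident hmom k (n-i))
      exact this
    simpa using hmul.mul_const ((n.choose i : ℝ))

end AuxStmt10

/-- If `E[Y] = 0`, `E[Y²] = σ² > 0` and all moments are finite, then
`S_Y(2j+1,j) = j(2j+1) · σ^{2j}(2j)!/(j!2^j) · E[Y³]/(3σ²)`. -/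
theorem stmt_10 {Ω : Type*} [MeasurableSpace Ω] (μ : Measure Ω) [IsProbabilityMeasure μ]
    (Y : ℕ → Ω → ℝ) (hmeas : ∀ i, Measurable (Y i))
    (hindep : iIndepFun Y μ)
    (hident : ∀ i, IdentDistrib (Y i) (Y 0) μ μ)
    (hmom : ∀ j : ℕ, Integrable (fun ω => |Y 0 ω| ^ j) μ)
    (hcent : ∫ ω, Y 0 ω ∂μ = 0)
    (σ : ℝ) (hσpos : 0 < σ) (hσ : ∫ ω, (Y 0 ω) ^ 2 ∂μ = σ ^ 2)
    (j : ℕ) :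
    (j.factorial : ℝ)⁻¹ * ∑ k ∈ Finset.range (j + 1), (j.choose k : ℝ) * (-1) ^ (j - k) *
        ∫ ω, (∑ i ∈ Finset.range k, Y i ω) ^ (2 * j + 1) ∂μ
      = (j : ℝ) * (2 * j + 1) *
          (σ ^ (2 * j) * ((2 * j).factorial : ℝ) / ((j.factorial : ℝ) * 2 ^ j)) *
          ((∫ ω, (Y 0 ω) ^ 3 ∂μ) / (3 * σ ^ 2)) := by
  classical
  set m : ℕ → ℝ := fun t => ∫ ω, Y 0 ω ^ t ∂μ with hm
  set g : ℕ → ℕ → ℝ := fun n k => ∫ ω, (∑ i ∈ Finset.range k, Y i ω) ^ n ∂μ with hg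
  set B : ℕ → ℕ → ℝ := fun n ℓ => (fwdDiff 1)^[ℓ] (g n) 0 with hB
  have m0 : m 0 = 1 := by simp [hm]
  have m1 : m 1 = 0 := by simpa [hm] using hcent
  have m2 : m 2 = σ ^ 2 := by simpa [hm] using hσ
  have hg0 : ∀ n, g n 0 = if n = 0 then 1 else 0 := by
    intro n
    rcases n with _ | n <;> simp [hg]
  -- forward difference of the moment sequence
  have hΔ : ∀ n, fwdDiff 1 (g n)
      = fun k => ∑ i ∈ Finset.range n, ((n.choose i : ℝ) * m (n - i)) • g i k := by
    intro n
    funext k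
    have hrec := auxRec10 hmeas hindep hident hmom k n
    have h1 : g n (k + 1) = ∑ i ∈ Finset.range (n+1),
        (n.choose i : ℝ) * g i k * m (n - i) := by
      simpa [hg, hm] using hrec
    have h2 : fwdDiff 1 (g n) k = g n (k+1) - g n k := rfl
    rw [h2, h1, Finset.sum_range_succ]
    simp only [Nat.choose_self, Nat.cast_one, Nat.sub_self, m0, one_mul, mul_one]
    rw [add_sub_cancel_right]
    exact Finset.sum_congr rfl fun i _ => by rw [smul_eq_mul]; ring
  -- recursion for iterated differences
  have hBrec : ∀ n ℓ, B n (ℓ+1)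
      = ∑ i ∈ Finset.range n, ((n.choose i : ℝ) * m (n - i)) * B i ℓ := by
    intro n ℓ
    have h2 : (fun k => ∑ i ∈ Finset.range n, ((n.choose i : ℝ) * m (n - i)) • g i k)
        = ∑ i ∈ Finset.range n, ((n.choose i : ℝ) * m (n - i)) • g i := by
      funext k; simp
    show (fwdDiff 1)^[ℓ+1] (g n) 0 = _
    rw [Function.iterate_succ_apply, hΔ n, h2, fwdDiff_iter_finset_sum]
    simp [hB]
  have hB0 : ∀ n, B n 0 = if n = 0 then 1 else 0 := fun n => hg0 n
  have hBlow : ∀ ℓ n, n < 2*ℓ → B n ℓ = 0 := by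
    intro ℓ
    induction ℓ with
    | zero => intro n hn; omega
    | succ ℓ IH =>
      intro n hn
      rw [hBrec]
      refine Finset.sum_eq_zero fun i hi => ?_
      rw [Finset.mem_range] at hi
      rcases lt_or_ge i (2*ℓ) with h | h
      · rw [IH i h]; ring
      · have h1 : n - i = 1 := by omega
        rw [h1, m1]; ring
  have hBeven : ∀ ℓ, B (2*ℓ) ℓ * 2^ℓ = ((2*ℓ).factorial : ℝ) * σ^(2*ℓ) := by
    intro ℓ
    induction ℓ with
    | zero => simp [hB0]
    | succ ℓ IH =>
      have hrec := hBrec (2*ℓ+2) ℓ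
      rw [Finset.sum_range_succ, Finset.sum_range_succ] at hrec
      have hz : ∑ i ∈ Finset.range (2*ℓ), (((2*ℓ+2).choose i : ℝ) * m (2*ℓ+2 - i)) * B i ℓ = 0 :=
        Finset.sum_eq_zero fun i hi => by
          rw [hBlow ℓ i (Finset.mem_range.mp hi)]; ring
      rw [hz, show 2*ℓ+2 - (2*ℓ+1) = 1 by omega, show 2*ℓ+2 - (2*ℓ) = 2 by omega, m1, m2]
        at hrec
      have hsum : B (2*(ℓ+1)) (ℓ+1) = ((2*ℓ+2).choose (2*ℓ) : ℝ) * σ^2 * B (2*ℓ) ℓ := by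
        rw [show 2*(ℓ+1) = 2*ℓ+2 by ring, hrec]; ring
      have hc : ((2*ℓ+2).choose (2*ℓ) : ℝ) * 2 = (2*ℓ+2)*(2*ℓ+1) := by
        rw [Nat.cast_choose ℝ (by omega : 2*ℓ ≤ 2*ℓ+2), show 2*ℓ+2 - (2*ℓ) = 2 by omega]
        have h1 : ((2*ℓ+2).factorial : ℝ) = (2*ℓ+2)*(2*ℓ+1)*(2*ℓ).factorial := by
          rw [show 2*ℓ+2 = (2*ℓ+1)+1 by omega, Nat.factorial_succ, Nat.factorial_succ]
          push_cast; ring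
        have h2 : ((2*ℓ).factorial : ℝ) ≠ 0 := by positivity
        rw [h1]; field_simp [Nat.factorial]; ring
      have hfac : ((2*(ℓ+1)).factorial : ℝ) = (2*ℓ+2)*(2*ℓ+1)*((2*ℓ).factorial : ℝ) := by
        rw [show 2*(ℓ+1) = (2*ℓ+1)+1 by omega, Nat.factorial_succ, Nat.factorial_succ]
        push_cast; ring
      rw [hsum, hfac, show (2*(ℓ+1)) = 2*ℓ+2 by ring]
      linear_combination (2*((2*ℓ+2).choose (2*ℓ) : ℝ)*σ^2) * IH
        + (((2*ℓ).factorial : ℝ)*σ^2*σ^(2*ℓ)) * hc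
  have hBodd : ∀ ℓ, B (2*ℓ+1) ℓ * (3 * 2^ℓ * σ^2)
      = (ℓ:ℝ) * (2*ℓ+1) * ((2*ℓ).factorial : ℝ) * σ^(2*ℓ) * m 3 := by
    intro ℓ
    induction ℓ with
    | zero => simp [hB0]
    | succ ℓ IH =>
      have hrec := hBrec (2*ℓ+3) ℓ
      rw [Finset.sum_range_succ, Finset.sum_range_succ, Finset.sum_range_succ] at hrec
      have hz : ∑ i ∈ Finset.range (2*ℓ), (((2*ℓ+3).choose i : ℝ) * m (2*ℓ+3 - i)) * B i ℓ = 0 :=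
        Finset.sum_eq_zero fun i hi => by
          rw [hBlow ℓ i (Finset.mem_range.mp hi)]; ring
      rw [hz, show 2*ℓ+3 - (2*ℓ+2) = 1 by omega, show 2*ℓ+3 - (2*ℓ+1) = 2 by omega,
        show 2*ℓ+3 - (2*ℓ) = 3 by omega, m1, m2] at hrec
      have hsum : B (2*(ℓ+1)+1) (ℓ+1)
          = ((2*ℓ+3).choose (2*ℓ) : ℝ) * m 3 * B (2*ℓ) ℓ
            + ((2*ℓ+3).choose (2*ℓ+1) : ℝ) * σ^2 * B (2*ℓ+1) ℓ := by
        rw [show 2*(ℓ+1)+1 = 2*ℓ+3 by ring, hrec]; ring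
      have hc3 : ((2*ℓ+3).choose (2*ℓ) : ℝ) * 6 = (2*ℓ+3)*(2*ℓ+2)*(2*ℓ+1) := by
        rw [Nat.cast_choose ℝ (by omega : 2*ℓ ≤ 2*ℓ+3), show 2*ℓ+3 - (2*ℓ) = 3 by omega]
        have h1 : ((2*ℓ+3).factorial : ℝ) = (2*ℓ+3)*(2*ℓ+2)*(2*ℓ+1)*(2*ℓ).factorial := by
          rw [show 2*ℓ+3 = (2*ℓ+2)+1 by omega, Nat.factorial_succ,
            show 2*ℓ+2 = (2*ℓ+1)+1 by omega, Nat.factorial_succ, Nat.factorial_succ]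
          push_cast; ring
        have h2 : ((2*ℓ).factorial : ℝ) ≠ 0 := by positivity
        rw [h1]; field_simp [Nat.factorial]; ring
      have hc2 : ((2*ℓ+3).choose (2*ℓ+1) : ℝ) * 2 = (2*ℓ+3)*(2*ℓ+2) := by
        rw [Nat.cast_choose ℝ (by omega : 2*ℓ+1 ≤ 2*ℓ+3), show 2*ℓ+3 - (2*ℓ+1) = 2 by omega]
        have h1 : ((2*ℓ+3).factorial : ℝ) = (2*ℓ+3)*(2*ℓ+2)*(2*ℓ+1).factorial := by
          rw [show 2*ℓ+3 = (2*ℓ+2)+1 by omega, Nat.factorial_succ,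
            show 2*ℓ+2 = (2*ℓ+1)+1 by omega, Nat.factorial_succ]
          push_cast; ring
        have h2 : ((2*ℓ+1).factorial : ℝ) ≠ 0 := by positivity
        rw [h1]; field_simp [Nat.factorial]; ring
      have hfac : ((2*(ℓ+1)).factorial : ℝ) = (2*ℓ+2)*(2*ℓ+1)*((2*ℓ).factorial : ℝ) := by
        rw [show 2*(ℓ+1) = (2*ℓ+1)+1 by omega, Nat.factorial_succ, Nat.factorial_succ]
        push_cast; ring
      have hBe := hBeven ℓ
      rw [hsum, hfac]
      push_cast
      linear_combination (6*(((2*ℓ+3).choose (2*ℓ) : ℝ))*m 3*σ^2) * hBe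
        + (2*(((2*ℓ+3).choose (2*ℓ+1) : ℝ))*σ^2) * IH
        + (((2*ℓ).factorial : ℝ)*m 3*σ^2*σ^(2*ℓ)) * hc3
        + ((ℓ:ℝ)*(2*ℓ+1)*((2*ℓ).factorial : ℝ)*σ^2*σ^(2*ℓ)*m 3) * hc2
  -- identify the statement's sum with the iterated forward difference
  have hfd : B (2*j+1) j = ∑ k ∈ Finset.range (j + 1), (j.choose k : ℝ) * (-1) ^ (j - k) *
      ∫ ω, (∑ i ∈ Finset.range k, Y i ω) ^ (2 * j + 1) ∂μ := by
    show (fwdDiff 1)^[j] (g (2*j+1)) 0 = _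
    rw [fwdDiff_iter_eq_sum_shift]
    refine Finset.sum_congr rfl fun k _ => ?_
    simp only [zsmul_eq_mul, Int.cast_mul, Int.cast_pow, Int.cast_neg, Int.cast_one,
      Int.cast_natCast, smul_eq_mul, mul_one, zero_add, hg]
    ring
  rw [← hfd]
  have key := hBodd j
  have hm3 : m 3 = ∫ ω, (Y 0 ω) ^ 3 ∂μ := rfl
  rw [← hm3]
  have hfj : ((j.factorial : ℝ)) ≠ 0 := by positivity
  have hσ2 : σ ≠ 0 := ne_of_gt hσpos
  field_simp
  linear_combination key
end

section
/- Let Y be a real random variable with all moments finite, (Y_k) i.i.d. copies, S_k partial sums, and define S_Y(j,m) via (1/m!) ∑_{k=0}^{m} C(m,k)(-1)^{m-k} E[S_k^j]. Then for 0 ≤ m ≤ j, |S_Y(j,m)| ≤ E[(|Y_1| + ... + |Y_m|)^j] / m!. -/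
open MeasureTheory ProbabilityTheory Finset

section AuxStmt12

variable {Ω : Type*} [MeasurableSpace Ω] {μ : Measure Ω} [IsProbabilityMeasure μ]

lemma aux_prod_formula12 (Z : ℕ → Ω → ℝ) (hmeasZ : ∀ i, Measurable (Z i))
    (hindepZ : iIndepFun Z μ)
    (hintZ : ∀ i a, Integrable (fun ω => Z i ω ^ a) μ)
    (a : ℕ → ℕ) (s : Finset ℕ) :
    Integrable (fun ω => ∏ i ∈ s, Z i ω ^ a i) μ ∧
      ∫ ω, ∏ i ∈ s, Z i ω ^ a i ∂μ = ∏ i ∈ s, ∫ ω, Z i ω ^ a i ∂μ := by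
  classical
  induction s using Finset.cons_induction with
  | empty => simp
  | cons i s hi ih =>
    have hindep' : iIndepFun
        (fun l => (fun x : ℝ => x ^ a l) ∘ Z l) μ :=
      hindepZ.comp _ (fun l => measurable_id.pow_const (a l))
    have hInd : IndepFun (∏ l ∈ s, (fun x : ℝ => x ^ a l) ∘ Z l)
        ((fun x : ℝ => x ^ a i) ∘ Z i) μ :=
      hindep'.indepFun_finsetProd_of_notMem
        (fun l => (hmeasZ l).pow_const (a l)) hi
    have hprodfun : (∏ l ∈ s, (fun x : ℝ => x ^ a l) ∘ Z l)
        = fun ω => ∏ l ∈ s, Z l ω ^ a l := by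
      funext ω; simp [Finset.prod_apply, Function.comp]
    have hmul : ((fun x : ℝ => x ^ a i) ∘ Z i) * (∏ l ∈ s, (fun x : ℝ => x ^ a l) ∘ Z l)
        = fun ω => ∏ l ∈ Finset.cons i s hi, Z l ω ^ a l := by
      funext ω
      simp only [Pi.mul_apply, hprodfun, Finset.prod_cons, Function.comp_apply]
    constructor
    · have := hInd.symm.integrable_mul (hintZ i (a i)) (hprodfun ▸ ih.1)
      rwa [hmul] at this
    · have := hInd.symm.integral_mul_eq_mul_integral
        (((hmeasZ i).pow_const (a i)).aestronglyMeasurable)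
        ((hprodfun ▸ (Finset.measurable_prod s
          (fun l _ => (hmeasZ l).pow_const (a l)) : Measurable fun ω => ∏ l ∈ s, Z l ω ^ a l)
          : Measurable (∏ l ∈ s, (fun x : ℝ => x ^ a l) ∘ Z l)).aestronglyMeasurable)
      rw [hmul] at this
      rw [this, Finset.prod_cons, ← ih.2]
      congr 1
      rw [hprodfun]

lemma aux_fiber12 {j : ℕ} (g : ℕ → ℝ) (T : Finset ℕ) (f : Fin j → ℕ)
    (hf : ∀ t, f t ∈ T) :
    ∏ t : Fin j, g (f t) = ∏ i ∈ T, g i ^ (Finset.univ.filter (fun t => f t = i)).card := by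
  classical
  rw [← Finset.prod_fiberwise_of_maps_to (fun t _ => hf t) (fun t => g (f t))]
  refine Finset.prod_congr rfl fun i _ => ?_
  calc ∏ t ∈ Finset.univ.filter (fun t => f t = i), g (f t)
      = ∏ t ∈ Finset.univ.filter (fun t => f t = i), g i :=
        Finset.prod_congr rfl fun t ht => by rw [(Finset.mem_filter.mp ht).2]
    _ = g i ^ (Finset.univ.filter (fun t => f t = i)).card := Finset.prod_const _

lemma aux_expand12 (Z : ℕ → Ω → ℝ)
    (hprod : ∀ (a : ℕ → ℕ) (s : Finset ℕ),
      Integrable (fun ω => ∏ i ∈ s, Z i ω ^ a i) μ ∧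
      ∫ ω, ∏ i ∈ s, Z i ω ^ a i ∂μ = ∏ i ∈ s, ∫ ω, Z i ω ^ a i ∂μ)
    (j : ℕ) (s : Finset ℕ) :
    ∫ ω, (∑ i ∈ s, Z i ω) ^ j ∂μ
      = ∑ f ∈ Fintype.piFinset (fun _ : Fin j => s),
          ∏ i ∈ s, ∫ ω, Z i ω ^ (Finset.univ.filter (fun t => f t = i)).card ∂μ := by
  classical
  have hpt : (fun ω => (∑ i ∈ s, Z i ω) ^ j)
      = fun ω => ∑ f ∈ Fintype.piFinset (fun _ : Fin j => s),
          ∏ i ∈ s, Z i ω ^ (Finset.univ.filter (fun t => f t = i)).card := by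
    funext ω
    calc (∑ i ∈ s, Z i ω) ^ j = ∏ _t : Fin j, ∑ i ∈ s, Z i ω := by
          rw [Finset.prod_const, Finset.card_univ, Fintype.card_fin]
      _ = ∑ f ∈ Fintype.piFinset (fun _ : Fin j => s), ∏ t : Fin j, Z (f t) ω :=
          Finset.prod_univ_sum _ _
      _ = _ := Finset.sum_congr rfl fun f hf =>
          aux_fiber12 (fun i => Z i ω) s f (fun t => Fintype.mem_piFinset.mp hf t)
  rw [hpt, integral_finset_sum _ (fun f _ => (hprod _ s).1)]
  exact Finset.sum_congr rfl fun f _ => (hprod _ s).2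

lemma aux_ext12 {j : ℕ} (W : ℕ → ℝ) (hW0 : W 0 = 1) {T T' : Finset ℕ} (hTT : T ⊆ T')
    (f : Fin j → ℕ) (hf : ∀ t, f t ∈ T) :
    ∏ i ∈ T', W ((Finset.univ.filter (fun t => f t = i)).card)
      = ∏ i ∈ T, W ((Finset.univ.filter (fun t => f t = i)).card) := by
  classical
  refine (Finset.prod_subset hTT fun i _ hi => ?_).symm
  have h0 : (Finset.univ.filter (fun t => f t = i)) = ∅ :=
    Finset.filter_eq_empty_iff.mpr fun t _ h => hi (h ▸ hf t)
  rw [h0]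
  simpa using hW0

lemma aux_exchange12 {j m k : ℕ} (W : ℕ → ℝ) (hW0 : W 0 = 1) (hkm : k ≤ m)
    (K : Finset ℕ) (hK : K ∈ Finset.powersetCard k (Finset.range m)) :
    ∑ f ∈ Fintype.piFinset (fun _ : Fin j => K),
        ∏ i ∈ Finset.range m, W ((Finset.univ.filter (fun t => f t = i)).card)
      = ∑ f ∈ Fintype.piFinset (fun _ : Fin j => Finset.range k),
        ∏ i ∈ Finset.range m, W ((Finset.univ.filter (fun t => f t = i)).card) := by
  classical
  obtain ⟨hKsub, hKcard⟩ := Finset.mem_powersetCard.mp hK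
  set e := K.orderIsoOfFin hKcard with he
  set E : ℕ → ℕ := fun n => if h : n < k then (e ⟨n, h⟩ : ℕ) else m + n with hE
  set Einv : ℕ → ℕ := fun i => if h : i ∈ K then ((e.symm ⟨i, h⟩ : Fin k) : ℕ) else i with hEinv
  have hEmem : ∀ n, n < k → E n ∈ K := by
    intro n h
    simp only [hE, dif_pos h]
    exact (e ⟨n, h⟩).2
  have hEinvE : ∀ n, n < k → Einv (E n) = n := by
    intro n h
    simp only [hE, hEinv, dif_pos h, dif_pos (e ⟨n, h⟩).2]
    have : (⟨(e ⟨n, h⟩ : ℕ), (e ⟨n, h⟩).2⟩ : {x // x ∈ K}) = e ⟨n, h⟩ := rfl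
    rw [this, OrderIso.symm_apply_apply]
  have hEinvlt : ∀ i ∈ K, Einv i < k := by
    intro i hi
    simp only [hEinv, dif_pos hi]
    exact (e.symm ⟨i, hi⟩).isLt
  have hEEinv : ∀ i ∈ K, E (Einv i) = i := by
    intro i hi
    have h1 : Einv i < k := hEinvlt i hi
    simp only [hE, dif_pos h1]
    simp only [hEinv, dif_pos hi] at h1 ⊢
    have : (⟨((e.symm ⟨i, hi⟩ : Fin k) : ℕ), h1⟩ : Fin k) = e.symm ⟨i, hi⟩ := by
      apply Fin.ext; rfl
    rw [this, OrderIso.apply_symm_apply]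
  have hEinj : ∀ a, a < k → ∀ b, b < k → E a = E b → a = b := by
    intro a ha b hb h
    rw [← hEinvE a ha, ← hEinvE b hb, h]
  have hKimg : K = (Finset.range k).image E := by
    ext i
    simp only [Finset.mem_image, Finset.mem_range]
    constructor
    · intro hi
      exact ⟨Einv i, hEinvlt i hi, hEEinv i hi⟩
    · rintro ⟨n, hn, rfl⟩
      exact hEmem n hn
  refine (Finset.sum_nbij' (fun f => E ∘ f) (fun g => Einv ∘ g) ?_ ?_ ?_ ?_ ?_).symm
  · intro f hf
    rw [Fintype.mem_piFinset] at hf ⊢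
    intro t
    exact hEmem _ (Finset.mem_range.mp (hf t))
  · intro g hg
    rw [Fintype.mem_piFinset] at hg ⊢
    intro t
    exact Finset.mem_range.mpr (hEinvlt _ (hg t))
  · intro f hf
    funext t
    exact hEinvE _ (Finset.mem_range.mp (Fintype.mem_piFinset.mp hf t))
  · intro g hg
    funext t
    exact hEEinv _ (Fintype.mem_piFinset.mp hg t)
  · intro f hf
    have hfval : ∀ t, f t ∈ Finset.range k := Fintype.mem_piFinset.mp hf
    have h1 : ∏ i ∈ Finset.range m, W ((Finset.univ.filter (fun t => f t = i)).card)
        = ∏ i ∈ Finset.range k, W ((Finset.univ.filter (fun t => f t = i)).card) :=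
      aux_ext12 W hW0 (Finset.range_subset_range.mpr hkm) f hfval
    have h2 : ∏ i ∈ Finset.range m, W ((Finset.univ.filter (fun t => (E ∘ f) t = i)).card)
        = ∏ i ∈ K, W ((Finset.univ.filter (fun t => (E ∘ f) t = i)).card) :=
      aux_ext12 W hW0 hKsub (E ∘ f) (fun t => hEmem _ (Finset.mem_range.mp (hfval t)))
    rw [h1, h2, hKimg, Finset.prod_image (fun a ha b hb h =>
      hEinj a (Finset.mem_range.mp ha) b (Finset.mem_range.mp hb) h)]
    refine Finset.prod_congr rfl fun n hn => ?_
    congr 2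
    refine Finset.filter_congr fun t _ => ?_
    constructor
    · intro h; simp only [Function.comp_apply, h]
    · intro h
      exact hEinj _ (Finset.mem_range.mp (hfval t)) _ (Finset.mem_range.mp hn) h

lemma aux_IE12 (s A : Finset ℕ) (hA : A ⊆ s) :
    ∑ K ∈ s.powerset.filter (fun K => A ⊆ K), (-1:ℝ)^(s.card - K.card)
      = if A = s then 1 else 0 := by
  classical
  have hdisj : ∀ J ∈ (s \ A).powerset, Disjoint A J := fun J hJ =>
    (disjoint_sdiff).mono_right (mem_powerset.mp hJ)
  have himg : s.powerset.filter (fun K => A ⊆ K)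
      = (s \ A).powerset.image (fun J => A ∪ J) := by
    ext K
    simp only [mem_image, mem_filter, mem_powerset]
    constructor
    · rintro ⟨hKs, hAK⟩
      exact ⟨K \ A, sdiff_subset_sdiff hKs (Finset.Subset.refl A),
        Finset.union_sdiff_of_subset hAK⟩
    · rintro ⟨J, hJ, rfl⟩
      exact ⟨Finset.union_subset hA (hJ.trans sdiff_subset), Finset.subset_union_left⟩
  have hinj : ∀ J₁ ∈ (s \ A).powerset, ∀ J₂ ∈ (s \ A).powerset,
      A ∪ J₁ = A ∪ J₂ → J₁ = J₂ := by
    intro J₁ h₁ J₂ h₂ h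
    have e₁ := Finset.union_sdiff_cancel_left (hdisj J₁ h₁)
    have e₂ := Finset.union_sdiff_cancel_left (hdisj J₂ h₂)
    rw [← e₁, ← e₂, h]
  rw [himg, Finset.sum_image hinj]
  have hAcard : A.card ≤ s.card := card_le_card hA
  have hcards : s.card = A.card + (s \ A).card := by
    rw [card_sdiff_of_subset hA]; omega
  set d := (s \ A).card with hd
  have key : ∀ J ∈ (s \ A).powerset, (-1:ℝ)^(s.card - (A ∪ J).card)
      = (-1:ℝ)^d * (-1:ℝ)^(J.card) := by
    intro J hJ
    have hJc : J.card ≤ d := card_le_card (mem_powerset.mp hJ)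
    have hcu : (A ∪ J).card = A.card + J.card := card_union_of_disjoint (hdisj J hJ)
    have h1 : s.card - (A ∪ J).card = d - J.card := by omega
    rw [h1]
    have h2 : ((-1:ℝ)^J.card) * ((-1:ℝ)^J.card) = 1 := by
      rw [← pow_add, ← two_mul, pow_mul]; norm_num
    calc (-1:ℝ)^(d - J.card)
        = (-1:ℝ)^(d - J.card) * (((-1:ℝ)^J.card) * ((-1:ℝ)^J.card)) := by
          rw [h2, mul_one]
      _ = ((-1:ℝ)^(d - J.card) * (-1:ℝ)^J.card) * (-1:ℝ)^J.card := by ring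
      _ = (-1:ℝ)^d * (-1:ℝ)^(J.card) := by rw [← pow_add, Nat.sub_add_cancel hJc]
  rw [Finset.sum_congr rfl key, ← Finset.mul_sum]
  have hz : ∑ J ∈ (s \ A).powerset, (-1:ℝ)^(J.card)
      = if s \ A = ∅ then 1 else 0 := by
    have h := Finset.sum_powerset_neg_one_pow_card (x := s \ A)
    have := congrArg (fun z : ℤ => (z : ℝ)) h
    push_cast at this
    convert this using 2 <;> simp
  rw [hz]
  by_cases h : A = s
  · subst h
    have hd0 : d = 0 := by rw [hd]; simp
    simp [hd0]
  · have h1 : ¬ (s \ A = ∅) := by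
      intro he
      exact h (Finset.Subset.antisymm hA (Finset.sdiff_eq_empty_iff_subset.mp he))
    rw [if_neg h1, if_neg h, mul_zero]

end AuxStmt12

/-- `|S_Y(j,m)| ≤ E[(|Y₁| + ⋯ + |Y_m|)^j] / m!` for `0 ≤ m ≤ j`, where
`S_Y(j,m) = (1/m!) ∑_{k=0}^m C(m,k)(-1)^{m-k} E[S_k^j]`. -/
theorem stmt_12 {Ω : Type*} [MeasurableSpace Ω] (μ : Measure Ω) [IsProbabilityMeasure μ]
    (Y : ℕ → Ω → ℝ) (hmeas : ∀ i, Measurable (Y i))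
    (hindep : iIndepFun Y μ)
    (hident : ∀ i, IdentDistrib (Y i) (Y 0) μ μ)
    (hmom : ∀ j : ℕ, Integrable (fun ω => |Y 0 ω| ^ j) μ)
    (j m : ℕ) (hmj : m ≤ j) :
    |(m.factorial : ℝ)⁻¹ * ∑ k ∈ Finset.range (m + 1), (m.choose k : ℝ) * (-1) ^ (m - k) *
        ∫ ω, (∑ i ∈ Finset.range k, Y i ω) ^ j ∂μ|
      ≤ (∫ ω, (∑ i ∈ Finset.range m, |Y i ω|) ^ j ∂μ) / (m.factorial : ℝ) := by
  classical
  -- basic integrability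
  have hint0 : ∀ a : ℕ, Integrable (fun ω => Y 0 ω ^ a) μ := by
    intro a
    refine (hmom a).mono' (((hmeas 0).pow_const a).aestronglyMeasurable) ?_
    filter_upwards with ω
    simp [Real.norm_eq_abs, abs_pow]
  have hintY : ∀ i a, Integrable (fun ω => Y i ω ^ a) μ := fun i a =>
    ((hident i).comp (measurable_id.pow_const a)).integrable_iff.mpr (hint0 a)
  have hintY' : ∀ i a, Integrable (fun ω => |Y i ω| ^ a) μ := fun i a =>
    ((hident i).comp ((measurable_id.abs).pow_const a)).integrable_iff.mpr (hmom a)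
  have hindep' : iIndepFun (fun i ω => |Y i ω|) μ :=
    hindep.comp (fun _ => (fun x : ℝ => |x|)) (fun _ => measurable_id.abs)
  -- moments
  set M : ℕ → ℝ := fun a => ∫ ω, Y 0 ω ^ a ∂μ with hM
  set M' : ℕ → ℝ := fun a => ∫ ω, |Y 0 ω| ^ a ∂μ with hM'
  have hM0 : M 0 = 1 := by simp [hM]
  have hM'0 : M' 0 = 1 := by simp [hM']
  have hMident : ∀ i a, ∫ ω, Y i ω ^ a ∂μ = M a := fun i a =>
    ((hident i).comp (measurable_id.pow_const a)).integral_eq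
  have hM'ident : ∀ i a, ∫ ω, |Y i ω| ^ a ∂μ = M' a := fun i a =>
    ((hident i).comp ((measurable_id.abs).pow_const a)).integral_eq
  have hM'nonneg : ∀ a, 0 ≤ M' a := fun a =>
    integral_nonneg fun ω => pow_nonneg (abs_nonneg _) _
  have habs : ∀ a, |M a| ≤ M' a := by
    intro a
    calc |M a| = ‖∫ ω, Y 0 ω ^ a ∂μ‖ := rfl
      _ ≤ ∫ ω, ‖Y 0 ω ^ a‖ ∂μ := norm_integral_le_integral_norm _
      _ = M' a := by
          simp only [hM', Real.norm_eq_abs, abs_pow]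
  -- product formulas
  have hprodY := aux_prod_formula12 (μ := μ) Y hmeas hindep hintY
  have hprodY' := aux_prod_formula12 (μ := μ) (fun i ω => |Y i ω|)
    (fun i => (hmeas i).abs) hindep' hintY'
  -- term notation
  set cnt : (Fin j → ℕ) → ℕ → ℕ :=
    fun f i => (Finset.univ.filter (fun t => f t = i)).card with hcnt
  set term : (Fin j → ℕ) → ℝ := fun f => ∏ i ∈ Finset.range m, M (cnt f i) with hterm
  set term' : (Fin j → ℕ) → ℝ := fun f => ∏ i ∈ Finset.range m, M' (cnt f i) with hterm'
  -- expansion for the sums S_k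
  have hA : ∀ k, k ≤ m → ∫ ω, (∑ i ∈ Finset.range k, Y i ω) ^ j ∂μ
      = ∑ f ∈ Fintype.piFinset (fun _ : Fin j => Finset.range k), term f := by
    intro k hk
    rw [aux_expand12 Y hprodY j (Finset.range k)]
    refine Finset.sum_congr rfl fun f hf => ?_
    have hfval : ∀ t, f t ∈ Finset.range k := Fintype.mem_piFinset.mp hf
    calc ∏ i ∈ Finset.range k, ∫ ω, Y i ω ^ ((Finset.univ.filter (fun t => f t = i)).card) ∂μ
        = ∏ i ∈ Finset.range k, M (cnt f i) := by
          refine Finset.prod_congr rfl fun i _ => ?_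
          rw [hMident]
      _ = term f := (aux_ext12 M hM0 (Finset.range_subset_range.mpr hk) f hfval).symm
  -- expansion for the abs sum
  have hA' : ∫ ω, (∑ i ∈ Finset.range m, |Y i ω|) ^ j ∂μ
      = ∑ f ∈ Fintype.piFinset (fun _ : Fin j => Finset.range m), term' f := by
    rw [aux_expand12 (fun i ω => |Y i ω|) hprodY' j (Finset.range m)]
    refine Finset.sum_congr rfl fun f hf => ?_
    refine Finset.prod_congr rfl fun i _ => ?_
    rw [hM'ident]
  -- Step 1 & 2: rewrite the alternating sum as a sum over the powerset
  set SS0 : ℝ := ∑ k ∈ Finset.range (m + 1), (m.choose k : ℝ) * (-1) ^ (m - k) *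
      ∫ ω, (∑ i ∈ Finset.range k, Y i ω) ^ j ∂μ with hSS0
  have step2 : SS0 = ∑ K ∈ (Finset.range m).powerset,
      (-1:ℝ) ^ (m - K.card) * ∑ f ∈ Fintype.piFinset (fun _ : Fin j => K), term f := by
    rw [Finset.sum_powerset (Finset.range m)
      (fun K => (-1:ℝ) ^ (m - K.card) * ∑ f ∈ Fintype.piFinset (fun _ : Fin j => K), term f)]
    rw [hSS0, Finset.card_range]
    refine Finset.sum_congr rfl fun k hk => ?_
    have hkm : k ≤ m := Nat.lt_succ_iff.mp (Finset.mem_range.mp hk)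
    have hcard : ∀ K ∈ Finset.powersetCard k (Finset.range m), K.card = k :=
      fun K hK => (Finset.mem_powersetCard.mp hK).2
    calc (m.choose k : ℝ) * (-1) ^ (m - k) * ∫ ω, (∑ i ∈ Finset.range k, Y i ω) ^ j ∂μ
        = (-1:ℝ) ^ (m - k) * ((m.choose k : ℝ) *
            ∑ f ∈ Fintype.piFinset (fun _ : Fin j => Finset.range k), term f) := by
          rw [hA k hkm]; ring
      _ = (-1:ℝ) ^ (m - k) * ∑ K ∈ Finset.powersetCard k (Finset.range m),
            ∑ f ∈ Fintype.piFinset (fun _ : Fin j => K), term f := by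
          congr 1
          rw [Finset.sum_congr rfl (fun K hK => aux_exchange12 M hM0 hkm K hK),
            Finset.sum_const, Finset.card_powersetCard, Finset.card_range,
            nsmul_eq_mul]
      _ = ∑ K ∈ Finset.powersetCard k (Finset.range m),
            (-1:ℝ) ^ (m - K.card) * ∑ f ∈ Fintype.piFinset (fun _ : Fin j => K), term f := by
          rw [Finset.mul_sum]
          exact Finset.sum_congr rfl fun K hK => by rw [hcard K hK]
  -- Step 3: swap sums and apply inclusion-exclusion
  have hpiK : ∀ K ∈ (Finset.range m).powerset,
      (Fintype.piFinset (fun _ : Fin j => K))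
        = (Fintype.piFinset (fun _ : Fin j => Finset.range m)).filter
            (fun f => ∀ t, f t ∈ K) := by
    intro K hK
    have hKsub : K ⊆ Finset.range m := Finset.mem_powerset.mp hK
    ext f
    simp only [Fintype.mem_piFinset, Finset.mem_filter]
    exact ⟨fun h => ⟨fun t => hKsub (h t), h⟩, fun h => h.2⟩
  have step3 : SS0 = ∑ f ∈ (Fintype.piFinset (fun _ : Fin j => Finset.range m)).filter
      (fun f => Finset.image f Finset.univ = Finset.range m), term f := by
    rw [step2]
    calc ∑ K ∈ (Finset.range m).powerset, (-1:ℝ) ^ (m - K.card) *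
          ∑ f ∈ Fintype.piFinset (fun _ : Fin j => K), term f
        = ∑ K ∈ (Finset.range m).powerset,
            ∑ f ∈ Fintype.piFinset (fun _ : Fin j => Finset.range m),
              (-1:ℝ) ^ (m - K.card) * (if (∀ t, f t ∈ K) then term f else 0) := by
          refine Finset.sum_congr rfl fun K hK => ?_
          rw [hpiK K hK, Finset.sum_filter, Finset.mul_sum]
      _ = ∑ f ∈ Fintype.piFinset (fun _ : Fin j => Finset.range m),
            ∑ K ∈ (Finset.range m).powerset,
              (-1:ℝ) ^ (m - K.card) * (if (∀ t, f t ∈ K) then term f else 0) :=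
          Finset.sum_comm
      _ = ∑ f ∈ Fintype.piFinset (fun _ : Fin j => Finset.range m),
            (if Finset.image f Finset.univ = Finset.range m then term f else 0) := by
          refine Finset.sum_congr rfl fun f hf => ?_
          have himg_sub : Finset.image f Finset.univ ⊆ Finset.range m := by
            intro i hi
            obtain ⟨t, _, rfl⟩ := Finset.mem_image.mp hi
            exact Fintype.mem_piFinset.mp hf t
          calc ∑ K ∈ (Finset.range m).powerset,
                (-1:ℝ) ^ (m - K.card) * (if (∀ t, f t ∈ K) then term f else 0)
              = ∑ K ∈ (Finset.range m).powerset,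
                (if Finset.image f Finset.univ ⊆ K then (-1:ℝ) ^ (m - K.card) else 0)
                  * term f := by
                refine Finset.sum_congr rfl fun K _ => ?_
                have hiff : (∀ t, f t ∈ K) ↔ Finset.image f Finset.univ ⊆ K := by
                  rw [Finset.image_subset_iff]
                  exact ⟨fun h t _ => h t, fun h t => h t (Finset.mem_univ t)⟩
                by_cases hc : ∀ t, f t ∈ K
                · rw [if_pos hc, if_pos (hiff.mp hc)]
                · rw [if_neg hc, if_neg (fun hc' => hc (hiff.mpr hc')), mul_zero, zero_mul]
            _ = (∑ K ∈ (Finset.range m).powerset.filter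
                  (fun K => Finset.image f Finset.univ ⊆ K),
                  (-1:ℝ) ^ ((Finset.range m).card - K.card)) * term f := by
                rw [← Finset.sum_mul, Finset.sum_filter, Finset.card_range]
            _ = (if Finset.image f Finset.univ = Finset.range m then 1 else 0) * term f := by
                rw [aux_IE12 (Finset.range m) (Finset.image f Finset.univ) himg_sub]
            _ = (if Finset.image f Finset.univ = Finset.range m then term f else 0) := by
                split_ifs <;> ring
      _ = _ := by rw [Finset.sum_filter]
  -- Final bounds
  have habs_term : ∀ f, |term f| ≤ term' f := by
    intro f
    rw [hterm, hterm', Finset.abs_prod]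
    exact Finset.prod_le_prod (fun i _ => abs_nonneg _) (fun i _ => habs _)
  have hbound : |SS0| ≤ ∫ ω, (∑ i ∈ Finset.range m, |Y i ω|) ^ j ∂μ := by
    rw [step3, hA']
    calc |∑ f ∈ (Fintype.piFinset (fun _ : Fin j => Finset.range m)).filter
          (fun f => Finset.image f Finset.univ = Finset.range m), term f|
        ≤ ∑ f ∈ (Fintype.piFinset (fun _ : Fin j => Finset.range m)).filter
          (fun f => Finset.image f Finset.univ = Finset.range m), |term f| :=
          Finset.abs_sum_le_sum_abs _ _
      _ ≤ ∑ f ∈ (Fintype.piFinset (fun _ : Fin j => Finset.range m)).filter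
          (fun f => Finset.image f Finset.univ = Finset.range m), term' f :=
          Finset.sum_le_sum fun f _ => habs_term f
      _ ≤ ∑ f ∈ Fintype.piFinset (fun _ : Fin j => Finset.range m), term' f :=
          Finset.sum_le_sum_of_subset_of_nonneg (Finset.filter_subset _ _)
            (fun f _ _ => Finset.prod_nonneg fun i _ => hM'nonneg _)
  have hfacpos : (0:ℝ) < (m.factorial : ℝ) := by
    exact_mod_cast Nat.factorial_pos m
  rw [abs_mul, abs_of_nonneg (inv_nonneg.mpr hfacpos.le), div_eq_inv_mul]
  exact mul_le_mul_of_nonneg_left hbound (inv_nonneg.mpr hfacpos.le)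
end

section
/- Let Y be a real random variable with E[Y^k] = 0 for k = 1,...,r and all moments finite, with partial sums S_k of i.i.d. copies, and τ = ⌊j/(r+1)⌋. Then for every n ≥ τ, E[S_n^j]/(n)_τ = S_Y(j,τ) + (1/(τ-1)!) ∑_{k=0}^{τ-1} C(τ-1, k) (-1)^{τ-k-1}/(n-k) · E[S_k^j], where S_Y(j,m) = (1/m!) ∑_{k=0}^{m} C(m,k)(-1)^{m-k} E[S_k^j] and (n)_τ is the falling factorial. -/
set_option linter.unusedSectionVars false
set_option linter.unnecessarySimpa false
set_option linter.unusedTactic false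

open MeasureTheory ProbabilityTheory Finset
open scoped ENNReal



lemma descFact_diff (n b : ℕ) :
    (n + 1).descFactorial (b + 1) = n.descFactorial (b + 1) + (b + 1) * n.descFactorial b := by
  rcases le_or_gt b n with h | h
  · rw [Nat.succ_descFactorial_succ, Nat.descFactorial_succ, ← Nat.add_mul]
    congr 1
    omega
  · rw [Nat.succ_descFactorial_succ, Nat.descFactorial_succ,
      Nat.descFactorial_eq_zero_iff_lt.2 h]
    omega

lemma descFact_sum (n b : ℕ) :
    ∑ m ∈ range n, (b + 1) * m.descFactorial b = n.descFactorial (b + 1) := by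
  induction n with
  | zero => simp
  | succ n ih => rw [Finset.sum_range_succ, ih, descFact_diff, Nat.add_comm]


lemma prodPos (M : ℕ) (z : ℝ) (hz : (M:ℝ) < z) : 0 < ∏ i ∈ range (M+1), (z - i) := by
  apply Finset.prod_pos
  intro i hi
  have : (i:ℝ) ≤ M := by exact_mod_cast Nat.lt_succ_iff.mp (mem_range.mp hi)
  linarith

lemma keyK : ∀ (M : ℕ) (y : ℝ), (M:ℝ) < y →
    ∑ m ∈ range (M+1), (M.choose m : ℝ) * (-1)^(M-m) / (y - m)
      = M.factorial / ∏ i ∈ range (M+1), (y - i) := by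
  intro M
  induction M with
  | zero => intro y hy; simp
  | succ M ih =>
    intro y hy
    have hy1 : (M:ℝ) < y := by push_cast at hy ⊢; linarith
    have hy' : (M:ℝ) < y - 1 := by push_cast at hy ⊢; linarith
    have hP1 := prodPos M (y-1) hy'
    have hP := prodPos M y hy1
    have hySub : ∀ m : ℕ, m ≤ M + 1 → y - m ≠ 0 := by
      intro m hm
      have : (m:ℝ) ≤ M + 1 := by exact_mod_cast hm
      push_cast at hy; intro h; nlinarith
    have hF : ∑ m ∈ range (M+1+1), ((M+1).choose m : ℝ) * (-1)^(M+1-m) / (y - m)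
        = (∑ m ∈ range (M+1), (M.choose m : ℝ) * (-1)^(M-m) / ((y-1) - m))
          - ∑ m ∈ range (M+1), (M.choose m : ℝ) * (-1)^(M-m) / (y - m) := by
      rw [Finset.sum_range_succ' _ (M+1),
        Finset.sum_range_succ' (fun m => (M.choose m : ℝ) * (-1)^(M-m) / (y - m)) M]
      have e1 : ∀ k, k ∈ range (M+1) →
          ((M+1).choose (k+1) : ℝ) * (-1)^(M+1-(k+1)) / (y - ((k+1 : ℕ) : ℝ))
          = (M.choose k : ℝ) * (-1)^(M-k) / ((y-1) - k)
            + (M.choose (k+1) : ℝ) * (-1)^(M-k) / ((y-1) - k) := by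
        intro k hk
        have : (M+1).choose (k+1) = M.choose k + M.choose (k+1) := Nat.choose_succ_succ M k
        rw [this]
        have : M + 1 - (k+1) = M - k := by omega
        rw [this]
        push_cast
        ring_nf
      rw [Finset.sum_congr rfl e1, Finset.sum_add_distrib]
      have e2 : ∑ k ∈ range (M+1), (M.choose (k+1) : ℝ) * (-1)^(M-k) / ((y-1) - k)
          = ∑ k ∈ range M, (M.choose (k+1) : ℝ) * (-1)^(M-k) / ((y-1) - k) := by
        rw [Finset.sum_range_succ]
        simp
      rw [e2]
      have e3 : ∀ k, k ∈ range M →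
          (M.choose (k+1) : ℝ) * (-1)^(M-k) / ((y-1) - k)
          = -((M.choose (k+1) : ℝ) * (-1)^(M-(k+1)) / (y - ((k+1:ℕ):ℝ))) := by
        intro k hk
        have hkM : k < M := mem_range.mp hk
        have h1 : M - k = (M - (k+1)) + 1 := by omega
        rw [h1, pow_succ]
        have : y - 1 - k = y - (k+1 : ℕ) := by push_cast; ring
        rw [this]
        ring
      rw [Finset.sum_congr rfl e3, Finset.sum_neg_distrib]
      have e4 : ((M+1).choose 0 : ℝ) * (-1)^(M+1-0) / (y - (0:ℕ))
          = -((M.choose 0 : ℝ) * (-1)^(M-0) / (y - (0:ℕ))) := by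
        simp [pow_succ]; ring
      rw [e4]
      ring
    rw [hF, ih (y-1) hy', ih y hy1]
    have hQ1 : ∏ i ∈ range (M+1+1), (y - i) = (∏ i ∈ range (M+1), ((y-1) - i)) * y := by
      rw [Finset.prod_range_succ' (fun i => y - (i:ℕ)) (M+1)]
      push_cast
      rw [sub_zero]
      congr 1
      apply Finset.prod_congr rfl
      intro i hi; push_cast; ring
    have hQ2 : ∏ i ∈ range (M+1+1), (y - i) = (∏ i ∈ range (M+1), (y - i)) * (y - (M+1)) := by
      rw [Finset.prod_range_succ]
      push_cast; ring_nf
    have hy0 : y ≠ 0 := by simpa using hySub 0 (by omega)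
    have hyM : y - ((M:ℝ)+1) ≠ 0 := by
      have := hySub (M+1) le_rfl; push_cast at this ⊢; convert this using 2
    have h1 : (M.factorial : ℝ) / ∏ i ∈ range (M+1), ((y-1) - i)
        = ((M.factorial : ℝ) * y) / ∏ i ∈ range (M+1+1), (y - i) := by
      rw [hQ1, mul_div_mul_right _ _ hy0]
    have h2 : (M.factorial : ℝ) / ∏ i ∈ range (M+1), (y - i)
        = ((M.factorial : ℝ) * (y - (M+1))) / ∏ i ∈ range (M+1+1), (y - i) := by
      rw [hQ2, mul_div_mul_right _ _ (by push_cast at hyM ⊢; linarith [hyM] )]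
    rw [h1, h2, div_sub_div_same]
    congr 1
    push_cast [Nat.factorial_succ]
    ring

lemma lemC (M b : ℕ) (hb : b ≤ M) (y : ℝ) (hy : (M:ℝ) < y) :
    ∑ k ∈ range (M+1), (M.choose k : ℝ) * (-1)^(M-k) / (y - k) * (k.descFactorial b)
      = M.factorial / ∏ i ∈ Finset.Ico b (M+1), (y - i) := by
  have hsub : Finset.Ico b (M+1) ⊆ range (M+1) := by
    intro k hk; rw [mem_range]; exact (Finset.mem_Ico.mp hk).2
  rw [← Finset.sum_subset hsub (by
    intro k hk hk'
    have hkb : k < b := by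
      rw [Finset.mem_Ico, not_and, not_lt] at hk'
      exact lt_of_not_ge fun h => absurd (hk' h) (not_lt.mpr (Nat.lt_succ_iff.mp (mem_range.mp hk)))
    rw [Nat.descFactorial_eq_zero_iff_lt.2 hkb]
    simp)]
  rw [Finset.sum_Ico_eq_sum_range]
  have hMb : M + 1 - b = (M - b) + 1 := by omega
  rw [hMb]
  have hterm : ∀ m, m ∈ range ((M-b)+1) →
      (M.choose (b+m) : ℝ) * (-1)^(M-(b+m)) / (y - (b+m : ℕ)) * ((b+m).descFactorial b)
      = ((b.factorial * M.choose b : ℕ) : ℝ) *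
          (((M-b).choose m : ℝ) * (-1)^((M-b)-m) / ((y - b) - m)) := by
    intro m hm
    have hm' : m ≤ M - b := Nat.lt_succ_iff.mp (mem_range.mp hm)
    have hbm : b + m ≤ M := by omega
    have hcm : M.choose (b+m) * (b+m).choose b = M.choose b * (M-b).choose m := by
      have := Nat.choose_mul (n := M) (Nat.le_add_right b m)
      simpa using this
    have hdf : (b+m).descFactorial b = b.factorial * (b+m).choose b :=
      Nat.descFactorial_eq_factorial_mul_choose _ _
    have hexp : M - (b+m) = (M-b) - m := by omega
    have hcast : (y - ((b+m : ℕ) : ℝ)) = (y - b) - m := by push_cast; ring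
    rw [hdf, hexp, hcast]
    push_cast
    have hcmR : (M.choose (b+m) : ℝ) * ((b+m).choose b) = (M.choose b : ℝ) * ((M-b).choose m) := by
      exact_mod_cast hcm
    rw [div_mul_eq_mul_div, mul_div_assoc']
    congr 1
    linear_combination ((-1:ℝ)^(M-b-m) * (b.factorial:ℝ)) * hcmR
  rw [Finset.sum_congr rfl hterm, ← Finset.mul_sum]
  have hyb : ((M-b : ℕ):ℝ) < y - b := by
    have : ((M-b:ℕ):ℝ) = (M:ℝ) - b := by
      push_cast [Nat.cast_sub hb]; ring
    rw [this]
    have : (b:ℝ) ≤ M := by exact_mod_cast hb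
    linarith
  rw [keyK (M-b) (y - b) hyb]
  have hprod : ∏ i ∈ range ((M-b)+1), ((y - b) - i) = ∏ i ∈ Finset.Ico b (M+1), (y - i) := by
    rw [Finset.prod_Ico_eq_prod_range, hMb]
    apply Finset.prod_congr rfl
    intro i hi; push_cast; ring
  rw [hprod]
  rw [mul_div_assoc']
  congr 1
  have : b.factorial * M.choose b * (M-b).factorial = M.factorial := by
    rw [← Nat.choose_mul_factorial_mul_factorial hb]; ring
  exact_mod_cast congrArg (fun x : ℕ => (x:ℝ)) this

lemma altsum (N : ℕ) : ∑ m ∈ range (N+1), (N.choose m : ℝ) * (-1)^(N-m)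
    = if N = 0 then 1 else 0 := by
  have h : ∀ m ∈ range (N+1), (N.choose m : ℝ) * (-1)^(N-m)
      = (-1)^N * ((-1)^m * (N.choose m : ℝ)) := by
    intro m hm
    have hm' : m ≤ N := Nat.lt_succ_iff.mp (mem_range.mp hm)
    have : (-1:ℝ)^(N-m) * (-1)^m = (-1)^N := by
      rw [← pow_add]; congr 1; omega
    calc (N.choose m : ℝ) * (-1)^(N-m)
        = ((-1:ℝ)^(N-m) * (-1)^m) * ((-1)^m * (N.choose m : ℝ)) := by
          rw [← mul_assoc]
          rw [mul_assoc ((-1:ℝ)^(N-m)) _ _, ← pow_add, ← two_mul, pow_mul]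
          simp [mul_comm]
      _ = (-1)^N * ((-1)^m * (N.choose m : ℝ)) := by rw [this]
  rw [Finset.sum_congr rfl h, ← Finset.mul_sum]
  have := Int.alternating_sum_range_choose (n := N)
  have hR : ∑ m ∈ range (N+1), ((-1:ℝ)^m * (N.choose m : ℝ)) = if N = 0 then 1 else 0 := by
    exact_mod_cast congrArg (fun z : ℤ => (z : ℝ)) this
  rw [hR]
  rcases Nat.eq_zero_or_pos N with h0 | h0
  · subst h0; simp
  · simp [Nat.pos_iff_ne_zero.mp h0]

lemma lemA (τ b : ℕ) (hb : b ≤ τ) :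
    ∑ k ∈ range (τ+1), (τ.choose k : ℝ) * (-1)^(τ-k) * (k.descFactorial b)
      = if b = τ then (τ.factorial : ℝ) else 0 := by
  have hsub : Finset.Ico b (τ+1) ⊆ range (τ+1) := by
    intro k hk; rw [mem_range]; exact (Finset.mem_Ico.mp hk).2
  rw [← Finset.sum_subset hsub (by
    intro k hk hk'
    have hkb : k < b := by
      rw [Finset.mem_Ico, not_and, not_lt] at hk'
      exact lt_of_not_ge fun h => absurd (hk' h) (not_lt.mpr (Nat.lt_succ_iff.mp (mem_range.mp hk)))
    rw [Nat.descFactorial_eq_zero_iff_lt.2 hkb]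
    simp)]
  rw [Finset.sum_Ico_eq_sum_range]
  have hMb : τ + 1 - b = (τ - b) + 1 := by omega
  rw [hMb]
  have hterm : ∀ m, m ∈ range ((τ-b)+1) →
      (τ.choose (b+m) : ℝ) * (-1)^(τ-(b+m)) * ((b+m).descFactorial b)
      = ((b.factorial * τ.choose b : ℕ) : ℝ) *
          (((τ-b).choose m : ℝ) * (-1)^((τ-b)-m)) := by
    intro m hm
    have hm' : m ≤ τ - b := Nat.lt_succ_iff.mp (mem_range.mp hm)
    have hbm : b + m ≤ τ := by omega
    have hcm : τ.choose (b+m) * (b+m).choose b = τ.choose b * (τ-b).choose m := by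
      have := Nat.choose_mul (n := τ) (Nat.le_add_right b m)
      simpa using this
    have hcmR : (τ.choose (b+m) : ℝ) * ((b+m).choose b) = (τ.choose b : ℝ) * ((τ-b).choose m) := by
      exact_mod_cast hcm
    rw [Nat.descFactorial_eq_factorial_mul_choose]
    have hexp : τ - (b+m) = (τ-b) - m := by omega
    rw [hexp]
    push_cast
    linear_combination ((-1:ℝ)^(τ-b-m) * (b.factorial:ℝ)) * hcmR
  rw [Finset.sum_congr rfl hterm, ← Finset.mul_sum, altsum]
  rcases eq_or_lt_of_le hb with rfl | hlt
  · simp [Nat.descFactorial_self]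
  · have h1 : τ - b ≠ 0 := by omega
    have h2 : b ≠ τ := by omega
    simp [h1, h2]

def IsPolyDeg (f : ℕ → ℝ) (d : ℕ) : Prop :=
  ∃ c : ℕ → ℝ, ∀ n, f n = ∑ b ∈ range (d+1), c b * (n.descFactorial b)

lemma IsPolyDeg.const (a : ℝ) (d : ℕ) : IsPolyDeg (fun _ => a) d := by
  refine ⟨fun b => if b = 0 then a else 0, fun n => ?_⟩
  rw [Finset.sum_eq_single 0]
  · simp
  · intro b _ hb; simp [hb]
  · simp

lemma IsPolyDeg.mono {f : ℕ → ℝ} {d d' : ℕ} (h : IsPolyDeg f d) (hd : d ≤ d') :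
    IsPolyDeg f d' := by
  obtain ⟨c, hc⟩ := h
  refine ⟨fun b => if b < d + 1 then c b else 0, fun n => ?_⟩
  calc f n = ∑ b ∈ range (d+1), c b * (n.descFactorial b : ℝ) := hc n
    _ = ∑ b ∈ range (d+1), (if b < d + 1 then c b else 0) * (n.descFactorial b : ℝ) := by
        apply Finset.sum_congr rfl; intro b hb; rw [mem_range] at hb; simp [hb]
    _ = ∑ b ∈ range (d'+1), (if b < d + 1 then c b else 0) * (n.descFactorial b : ℝ) := by
        apply Finset.sum_subset (by apply Finset.range_subset_range.mpr; omega)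
        intro b _ hb; rw [mem_range, not_lt] at hb
        simp [Nat.not_lt.mpr hb]

lemma IsPolyDeg.add {f g : ℕ → ℝ} {d : ℕ} (hf : IsPolyDeg f d) (hg : IsPolyDeg g d) :
    IsPolyDeg (fun n => f n + g n) d := by
  obtain ⟨c, hc⟩ := hf; obtain ⟨c', hc'⟩ := hg
  refine ⟨fun b => c b + c' b, fun n => ?_⟩
  dsimp only
  rw [hc n, hc' n, ← Finset.sum_add_distrib]
  apply Finset.sum_congr rfl; intros; ring

lemma IsPolyDeg.smul {f : ℕ → ℝ} {d : ℕ} (a : ℝ) (hf : IsPolyDeg f d) :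
    IsPolyDeg (fun n => a * f n) d := by
  obtain ⟨c, hc⟩ := hf
  refine ⟨fun b => a * c b, fun n => ?_⟩
  dsimp only
  rw [hc n, Finset.mul_sum]
  apply Finset.sum_congr rfl; intros; ring

lemma IsPolyDeg.finsum {ι : Type*} {s : Finset ι} {f : ι → ℕ → ℝ} {d : ℕ}
    (h : ∀ i ∈ s, IsPolyDeg (f i) d) :
    IsPolyDeg (fun n => ∑ i ∈ s, f i n) d := by
  classical
  induction s using Finset.induction_on with
  | empty => simpa using IsPolyDeg.const 0 d
  | @insert i s hi ih =>
    have h1 := h i (mem_insert_self i s)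
    have h2 := ih fun j hj => h j (mem_insert_of_mem hj)
    have h3 := h1.add h2
    refine h3.imp fun c hc n => ?_
    have := hc n
    dsimp only at this ⊢
    rw [Finset.sum_insert hi]
    exact this


lemma IsPolyDeg.partialSum {f : ℕ → ℝ} {d : ℕ} (hf : IsPolyDeg f d) :
    IsPolyDeg (fun n => ∑ m ∈ range n, f m) (d + 1) := by
  obtain ⟨c, hc⟩ := hf
  refine ⟨fun b => c (b-1) / b, fun n => ?_⟩
  dsimp only
  rw [Finset.sum_range_succ' (fun b => c (b-1) / (b:ℝ) * (n.descFactorial b : ℝ)) (d+1)]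
  have hstep : ∀ m ∈ range n, f m = ∑ b ∈ range (d+1), c b * (m.descFactorial b : ℝ) :=
    fun m _ => hc m
  rw [Finset.sum_congr rfl hstep, Finset.sum_comm]
  simp only [Nat.descFactorial_zero, Nat.cast_one, mul_one, Nat.cast_zero, div_zero, zero_mul,
    add_zero, Nat.add_sub_cancel]
  apply Finset.sum_congr rfl
  intro b _
  rw [← Finset.mul_sum]
  have key : (n.descFactorial (b+1) : ℝ) = ((b:ℝ)+1) * ∑ m ∈ range n, (m.descFactorial b : ℝ) := by
    rw [Finset.mul_sum]
    rw [← descFact_sum n b]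
    push_cast
    rfl
  rw [key]
  have : ((b:ℝ)+1) ≠ 0 := by positivity
  field_simp
  push_cast
  ring


section Prob
variable {Ω : Type*} [MeasurableSpace Ω] {μ : Measure Ω} [IsProbabilityMeasure μ]

lemma memLp_npow_integrable {f : Ω → ℝ} {q : ℕ} (hf : MemLp f q μ) :
    Integrable (fun ω => f ω ^ q) μ := by
  rcases Nat.eq_zero_or_pos q with rfl | hq
  · simpa using integrable_const (1:ℝ)
  · have hq0 : (q : ℝ≥0∞) ≠ 0 := by
      simp [Nat.pos_iff_ne_zero.mp hq]
    have h := hf.integrable_norm_rpow hq0 (by simp)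
    have heq : (fun x => ‖f x‖ ^ ((q:ℝ≥0∞)).toReal) = fun x => ‖f x ^ q‖ := by
      funext x
      rw [ENNReal.toReal_natCast, Real.rpow_natCast, norm_pow]
    rw [heq] at h
    exact (integrable_norm_iff (hf.aestronglyMeasurable.pow _)).mp h

variable (Y : ℕ → Ω → ℝ) (hmeas : ∀ i, Measurable (Y i))
    (hindep : iIndepFun Y μ)
    (hident : ∀ i, IdentDistrib (Y i) (Y 0) μ μ)
    (hmom : ∀ j : ℕ, Integrable (fun ω => |Y 0 ω| ^ j) μ)

include hmeas hident hmom in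
lemma memLp_Y : ∀ (i q : ℕ), MemLp (Y i) q μ := by
  intro i q
  rw [(hident i).memLp_iff]
  rcases Nat.eq_zero_or_pos q with rfl | hq
  · rw [show ((0:ℕ):ℝ≥0∞) = 0 by simp, memLp_zero_iff_aestronglyMeasurable]
    exact (hmeas 0).aestronglyMeasurable
  · have hq0 : (q : ℝ≥0∞) ≠ 0 := by
      simp [Nat.pos_iff_ne_zero.mp hq]
    rw [← memLp_norm_rpow_iff (q := q) (hmeas 0).aestronglyMeasurable hq0 (by simp)]
    have heq : (fun x => ‖Y 0 x‖ ^ ((q:ℝ≥0∞)).toReal) = fun x => |Y 0 x| ^ q := by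
      funext x
      rw [ENNReal.toReal_natCast, Real.rpow_natCast, Real.norm_eq_abs]
    rw [heq]
    have : (q:ℝ≥0∞) / q = 1 := ENNReal.div_self hq0 (by simp)
    rw [this, memLp_one_iff_integrable]
    exact hmom q

include hmeas hident hmom in
lemma memLp_S : ∀ (n q : ℕ), MemLp (fun ω => ∑ i ∈ range n, Y i ω) q μ := by
  intro n q
  rw [show (fun ω => ∑ i ∈ range n, Y i ω) = ∑ i ∈ range n, (fun ω => Y i ω) from by
    funext ω; simp]
  exact memLp_finsetSum' (μ := μ) (range n) (f := fun i => Y i) (p := q)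
    (fun i _ => memLp_Y Y hmeas hident hmom i q)

include hmeas hident hmom in
lemma int_S (n q : ℕ) : Integrable (fun ω => (∑ i ∈ range n, Y i ω) ^ q) μ :=
  memLp_npow_integrable (memLp_S Y hmeas hident hmom n q)

include hmeas hident hmom in
lemma int_Y (i q : ℕ) : Integrable (fun ω => Y i ω ^ q) μ :=
  memLp_npow_integrable (memLp_Y Y hmeas hident hmom i q)

include hmeas hindep in
lemma indep_S_Y (n a b : ℕ) :
    IndepFun (fun ω => (∑ i ∈ range n, Y i ω) ^ a) (fun ω => Y n ω ^ b) μ := by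
  have h1 : IndepFun (∑ i ∈ range n, Y i) (Y n) μ :=
    hindep.indepFun_finsetSum_of_notMem hmeas (by simp)
  have h2 := h1.comp (φ := fun x : ℝ => x ^ a) (ψ := fun x : ℝ => x ^ b)
    (measurable_id.pow_const a) (measurable_id.pow_const b)
  have : (fun x : ℝ => x ^ a) ∘ (∑ i ∈ range n, Y i) = fun ω => (∑ i ∈ range n, Y i ω) ^ a := by
    funext ω; simp [Finset.sum_apply]
  rwa [this] at h2

include hmeas hindep hident hmom in
lemma rec_step (j n : ℕ) :
    ∫ ω, (∑ i ∈ range (n+1), Y i ω) ^ j ∂μ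
      = ∑ i ∈ range (j+1), (j.choose i : ℝ) *
          ((∫ ω, (∑ i' ∈ range n, Y i' ω) ^ i ∂μ) * ∫ ω, Y 0 ω ^ (j-i) ∂μ) := by
  have hexp : ∀ ω, (∑ i ∈ range (n+1), Y i ω) ^ j
      = ∑ i ∈ range (j+1), (∑ i' ∈ range n, Y i' ω) ^ i * Y n ω ^ (j-i) * (j.choose i : ℝ) := by
    intro ω
    rw [Finset.sum_range_succ, add_pow]
  rw [integral_congr_ae (Filter.Eventually.of_forall hexp)]
  have hint : ∀ i ∈ range (j+1),
      Integrable (fun ω => (∑ i' ∈ range n, Y i' ω) ^ i * Y n ω ^ (j-i) * (j.choose i : ℝ)) μ := by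
    intro i _
    apply Integrable.mul_const
    exact (indep_S_Y Y hmeas hindep n i (j-i)).integrable_mul
      (int_S Y hmeas hident hmom n i) (int_Y Y hmeas hident hmom n (j-i))
  rw [integral_finset_sum _ hint]
  apply Finset.sum_congr rfl
  intro i _
  rw [integral_mul_const]
  have hsplit : ∫ a, (∑ i' ∈ range n, Y i' a) ^ i * Y n a ^ (j-i) ∂μ
      = (∫ ω, (∑ i' ∈ range n, Y i' ω) ^ i ∂μ) * ∫ ω, Y n ω ^ (j-i) ∂μ := by
    have := (indep_S_Y Y hmeas hindep n i (j-i)).integral_mul_eq_mul_integral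
      (int_S Y hmeas hident hmom n i).aestronglyMeasurable (int_Y Y hmeas hident hmom n (j-i)).aestronglyMeasurable
    simpa [Pi.mul_apply] using this
  rw [hsplit]
  have hYn : ∫ ω, Y n ω ^ (j-i) ∂μ = ∫ ω, Y 0 ω ^ (j-i) ∂μ :=
    ((hident n).comp (measurable_id.pow_const (j-i))).integral_eq
  rw [hYn]; ring


include hmeas hindep hident hmom in
lemma main_poly (r : ℕ) (hr : 1 ≤ r)
    (hcent : ∀ k ∈ Finset.Icc 1 r, ∫ ω, (Y 0 ω) ^ k ∂μ = 0) (j : ℕ) :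
    IsPolyDeg (fun n => ∫ ω, (∑ i ∈ range n, Y i ω) ^ j ∂μ) (j/(r+1)) := by
  induction j using Nat.strong_induction_on with
  | _ j ih =>
  have hrec : ∀ n, (∫ ω, (∑ i ∈ range (n+1), Y i ω) ^ j ∂μ)
      = (∫ ω, (∑ i ∈ range n, Y i ω) ^ j ∂μ)
        + ∑ i ∈ range (j - r), ((j.choose i : ℝ) * (∫ ω, Y 0 ω ^ (j-i) ∂μ))
            * ∫ ω, (∑ i' ∈ range n, Y i' ω) ^ i ∂μ := by
    intro n
    rw [rec_step Y hmeas hindep hident hmom j n]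
    rw [← Finset.sum_range_add_sum_Ico _ (show j - r ≤ j + 1 by omega)]
    have htail : ∑ i ∈ Finset.Ico (j-r) (j+1), (j.choose i : ℝ) *
        ((∫ ω, (∑ i' ∈ range n, Y i' ω) ^ i ∂μ) * ∫ ω, Y 0 ω ^ (j-i) ∂μ)
        = ∫ ω, (∑ i ∈ range n, Y i ω) ^ j ∂μ := by
      rw [Finset.sum_eq_single_of_mem j (by rw [Finset.mem_Ico]; omega)]
      · simp
      · intro i hi hij
        rw [Finset.mem_Ico] at hi
        have h1 : j - i ∈ Finset.Icc 1 r := by rw [Finset.mem_Icc]; omega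
        rw [hcent _ h1]
        simp
    rw [htail]
    rw [add_comm]
    congr 1
    apply Finset.sum_congr rfl
    intros; ring
  have hsum : ∀ n, (∫ ω, (∑ i ∈ range n, Y i ω) ^ j ∂μ)
      = (∫ ω, (∑ i ∈ range 0, Y i ω) ^ j ∂μ)
        + ∑ m ∈ range n, ∑ i ∈ range (j - r), ((j.choose i : ℝ) * (∫ ω, Y 0 ω ^ (j-i) ∂μ))
            * ∫ ω, (∑ i' ∈ range m, Y i' ω) ^ i ∂μ := by
    intro n
    induction n with
    | zero => simp
    | succ n ihn => rw [hrec n, ihn, Finset.sum_range_succ]; ring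
  rcases Nat.eq_zero_or_pos (j/(r+1)) with hτ0 | hτpos
  · have hjr : j - r = 0 := by
      by_contra h
      have h1 : r + 1 ≤ j := by omega
      have := Nat.one_le_div_iff (show 0 < r + 1 by omega) |>.mpr h1
      omega
    rw [hτ0]
    refine ⟨fun _ => ∫ ω, (∑ i ∈ range 0, Y i ω) ^ j ∂μ, fun n => ?_⟩
    dsimp only
    rw [hsum n, hjr]
    simp
  · have hτ1 : j/(r+1) - 1 + 1 = j/(r+1) := Nat.succ_pred_eq_of_pos hτpos
    have hj1 : r + 1 ≤ j := by
      by_contra h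
      rw [Nat.div_eq_of_lt (by omega)] at hτpos
      omega
    have hpoly_h : IsPolyDeg (fun m => ∑ i ∈ range (j - r),
        ((j.choose i : ℝ) * (∫ ω, Y 0 ω ^ (j-i) ∂μ))
          * ∫ ω, (∑ i' ∈ range m, Y i' ω) ^ i ∂μ) (j/(r+1) - 1) := by
      apply IsPolyDeg.finsum
      intro i hi
      rw [mem_range] at hi
      have hij : i < j := by omega
      have hdeg : i/(r+1) ≤ j/(r+1) - 1 := by
        have h1 : i + (r+1) ≤ j := by omega
        have h2 : (i + (r+1))/(r+1) ≤ j/(r+1) := Nat.div_le_div_right h1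
        rw [Nat.add_div_right i (by omega)] at h2
        omega
      exact IsPolyDeg.smul _ ((ih i hij).mono hdeg)
    have hfinal := (IsPolyDeg.const (∫ ω, (∑ i ∈ range 0, Y i ω) ^ j ∂μ) (j/(r+1))).add
      (by rw [← hτ1]; exact hpoly_h.partialSum)
    refine hfinal.imp fun c hc n => ?_
    have h := hc n
    dsimp only at h ⊢
    rw [hsum n]
    exact h

end Prob

-- final algebraic assembly
theorem final_alg (c : ℕ → ℝ) (τ n : ℕ) (hτ : 1 ≤ τ) (hn : τ ≤ n) :
    (∑ b ∈ range (τ+1), c b * (n.descFactorial b : ℝ)) / (n.descFactorial τ : ℝ)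
      = ((τ.factorial : ℝ)⁻¹ * ∑ k ∈ Finset.range (τ + 1),
            (τ.choose k : ℝ) * (-1) ^ (τ - k) *
              (∑ b ∈ range (τ+1), c b * (k.descFactorial b : ℝ)))
        + ((τ - 1).factorial : ℝ)⁻¹ * ∑ k ∈ Finset.range τ,
            ((τ - 1).choose k : ℝ) * (-1) ^ (τ - k - 1) / ((n : ℝ) - (k : ℝ)) *
              (∑ b ∈ range (τ+1), c b * (k.descFactorial b : ℝ)) := by
  set M := τ - 1 with hM
  have hM1 : M + 1 = τ := by omega
  have hMn : (M : ℝ) < (n : ℝ) := by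
    have : M < n := by omega
    exact_mod_cast this
  set P : ℕ → ℝ := fun b => ∏ i ∈ Finset.Ico b τ, ((n:ℝ) - i) with hP
  -- cast of descFactorial as real product
  have hcast : ∀ k, k ≤ n → (n.descFactorial k : ℝ) = ∏ i ∈ range k, ((n:ℝ) - i) := by
    intro k hk
    rw [Nat.descFactorial_eq_prod_range, Nat.cast_prod]
    apply Finset.prod_congr rfl
    intro i hi
    rw [mem_range] at hi
    rw [Nat.cast_sub (by omega)]
  have hdnepos : ∀ b, b ≤ n → (0:ℝ) < (n.descFactorial b : ℝ) := by
    intro b hb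
    have : n.descFactorial b ≠ 0 := fun h => by
      rw [Nat.descFactorial_eq_zero_iff_lt] at h; omega
    positivity
  have hratio : ∀ b, b ≤ τ → (n.descFactorial τ : ℝ)
      = (n.descFactorial b : ℝ) * P b := by
    intro b hb
    rw [hcast τ hn, hcast b (by omega), hP]
    exact (Finset.prod_range_mul_prod_Ico _ hb).symm
  -- Term 1
  have hterm1 : (τ.factorial : ℝ)⁻¹ * (∑ k ∈ Finset.range (τ + 1),
        (τ.choose k : ℝ) * (-1) ^ (τ - k) *
          (∑ b ∈ range (τ+1), c b * (k.descFactorial b : ℝ))) = c τ := by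
    have h1 : ∀ k ∈ range (τ+1), (τ.choose k : ℝ) * (-1) ^ (τ - k) *
          (∑ b ∈ range (τ+1), c b * (k.descFactorial b : ℝ))
        = ∑ b ∈ range (τ+1), c b * ((τ.choose k : ℝ) * (-1)^(τ-k) * (k.descFactorial b : ℝ)) := by
      intro k _
      rw [Finset.mul_sum]
      apply Finset.sum_congr rfl
      intros; ring
    rw [Finset.sum_congr rfl h1, Finset.sum_comm]
    have h2 : ∀ b ∈ range (τ+1),
        ∑ k ∈ range (τ+1), c b * ((τ.choose k : ℝ) * (-1)^(τ-k) * (k.descFactorial b : ℝ))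
        = c b * (if b = τ then (τ.factorial : ℝ) else 0) := by
      intro b hb
      rw [← Finset.mul_sum, lemA τ b (by rw [mem_range] at hb; omega)]
    have hf : (τ.factorial:ℝ) ≠ 0 := by exact_mod_cast τ.factorial_ne_zero
    rw [Finset.sum_congr rfl h2, Finset.sum_eq_single τ]
    · rw [if_pos rfl, mul_comm (c τ), ← mul_assoc, inv_mul_cancel₀ hf, one_mul]
    · intro b _ hb; simp [hb]
    · intro h; exact absurd (self_mem_range_succ τ) h
  -- Term 2
  have hterm2 : ((τ - 1).factorial : ℝ)⁻¹ * (∑ k ∈ Finset.range τ,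
        ((τ - 1).choose k : ℝ) * (-1) ^ (τ - k - 1) / ((n : ℝ) - (k : ℝ)) *
          (∑ b ∈ range (τ+1), c b * (k.descFactorial b : ℝ)))
      = ∑ b ∈ range τ, c b / P b := by
    have hexp : ∀ k, τ - k - 1 = M - k := by intro k; omega
    have h1 : ∀ k ∈ range τ, ((τ - 1).choose k : ℝ) * (-1) ^ (τ - k - 1) / ((n : ℝ) - (k : ℝ)) *
          (∑ b ∈ range (τ+1), c b * (k.descFactorial b : ℝ))
        = ∑ b ∈ range (τ+1), c b *
            ((M.choose k : ℝ) * (-1)^(M-k) / ((n:ℝ) - k) * (k.descFactorial b : ℝ)) := by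
      intro k _
      rw [hexp k, Finset.mul_sum]
      apply Finset.sum_congr rfl
      intros; ring
    rw [Finset.sum_congr rfl h1, Finset.sum_comm]
    have h2 : ∀ b ∈ range (τ+1),
        ∑ k ∈ range τ, c b * ((M.choose k : ℝ) * (-1)^(M-k) / ((n:ℝ) - k) * (k.descFactorial b : ℝ))
        = c b * (if b = τ then 0 else ((M.factorial : ℝ) / P b)) := by
      intro b hb
      rw [mem_range] at hb
      rw [← Finset.mul_sum]
      congr 1
      by_cases hbτ : b = τ
      · rw [if_pos hbτ]
        apply Finset.sum_eq_zero
        intro k hk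
        rw [mem_range] at hk
        rw [hbτ, Nat.descFactorial_eq_zero_iff_lt.2 hk]
        simp
      · rw [if_neg hbτ]
        have hbM : b ≤ M := by omega
        have := lemC M b hbM (n:ℝ) hMn
        rw [hM1] at this
        rw [this, hP]
    have h3 : ∀ b ∈ range τ,
        ((τ-1).factorial : ℝ)⁻¹ * (c b * (if b = τ then 0 else ((M.factorial : ℝ) / P b)))
        = c b / P b := by
      intro b hb
      rw [mem_range] at hb
      rw [if_neg (by omega), ← hM]
      have : (M.factorial : ℝ) ≠ 0 := by exact_mod_cast M.factorial_ne_zero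
      field_simp
    rw [Finset.sum_congr rfl h2, Finset.sum_range_succ, if_pos rfl, mul_zero, add_zero,
      Finset.mul_sum]
    exact Finset.sum_congr rfl h3
  rw [hterm1, hterm2]
  -- LHS
  have hPpos : ∀ b, 0 < P b := by
    intro b
    apply Finset.prod_pos
    intro i hi
    rw [Finset.mem_Ico] at hi
    have : (i:ℝ) < n := by
      have : i < n := by omega
      exact_mod_cast this
    linarith
  rw [Finset.sum_range_succ, add_div, Finset.sum_div]
  have hLb : ∀ b ∈ range τ, c b * (n.descFactorial b : ℝ) / (n.descFactorial τ : ℝ)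
      = c b / P b := by
    intro b hb
    rw [mem_range] at hb
    have hPb := hPpos b
    have hdb := hdnepos b (by omega)
    rw [hratio b (by omega)]
    field_simp
  rw [Finset.sum_congr rfl hLb]
  rw [mul_div_assoc, div_self (ne_of_gt (hdnepos τ hn)), mul_one]
  ring
/-- For `Y` with vanishing moments up to order `r ≥ 1`, all moments finite, and
`τ = ⌊j/(r+1)⌋ ≥ 1`, for every `n ≥ τ`:
`E[S_n^j]/(n)_τ = S_Y(j,τ)
  + (1/(τ-1)!) ∑_{k=0}^{τ-1} C(τ-1,k) (-1)^{τ-k-1}/(n-k) · E[S_k^j]`. -/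
theorem stmt_14 {Ω : Type*} [MeasurableSpace Ω] (μ : Measure Ω) [IsProbabilityMeasure μ]
    (Y : ℕ → Ω → ℝ) (hmeas : ∀ i, Measurable (Y i))
    (hindep : iIndepFun Y μ)
    (hident : ∀ i, IdentDistrib (Y i) (Y 0) μ μ)
    (hmom : ∀ j : ℕ, Integrable (fun ω => |Y 0 ω| ^ j) μ)
    (r : ℕ) (hr : 1 ≤ r)
    (hcent : ∀ k ∈ Finset.Icc 1 r, ∫ ω, (Y 0 ω) ^ k ∂μ = 0)
    (j τ n : ℕ) (hτdef : τ = j / (r + 1)) (hτ : 1 ≤ τ) (hn : τ ≤ n) :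
    (∫ ω, (∑ i ∈ Finset.range n, Y i ω) ^ j ∂μ) / (n.descFactorial τ : ℝ)
      = ((τ.factorial : ℝ)⁻¹ * ∑ k ∈ Finset.range (τ + 1),
            (τ.choose k : ℝ) * (-1) ^ (τ - k) *
              ∫ ω, (∑ i ∈ Finset.range k, Y i ω) ^ j ∂μ)
        + ((τ - 1).factorial : ℝ)⁻¹ * ∑ k ∈ Finset.range τ,
            ((τ - 1).choose k : ℝ) * (-1) ^ (τ - k - 1) / ((n : ℝ) - (k : ℝ)) *
              ∫ ω, (∑ i ∈ Finset.range k, Y i ω) ^ j ∂μ := by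
  obtain ⟨c, hc⟩ := main_poly Y hmeas hindep hident hmom r hr hcent j
  have hpoly : ∀ k : ℕ, (∫ ω, (∑ i ∈ Finset.range k, Y i ω) ^ j ∂μ)
      = ∑ b ∈ Finset.range (τ+1), c b * (k.descFactorial b : ℝ) := by
    intro k
    have h := hc k
    dsimp only at h
    rw [← hτdef] at h
    exact h
  simp only [hpoly]
  exact final_alg c τ n hτ hn
end

section
/- Let Y be a real random variable with finite moment generating function near 0, and define S_Y(j,m) = (1/m!) ∑_{k=0}^{m} C(m,k)(-1)^{m-k} E[S_k^j] where S_k are partial sums of i.i.d. copies of Y. Then the j-th cumulant of Y satisfies κ_j(Y) = ∑_{m=1}^{j} (-1)^{m-1} (m-1)! S_Y(j,m). -/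
open MeasureTheory ProbabilityTheory



open MeasureTheory ProbabilityTheory Filter Real
open scoped Topology
open scoped Nat
set_option linter.unusedSectionVars false
set_option maxHeartbeats 1000000

namespace Stmt16Aux


variable {Ω : Type*} [MeasurableSpace Ω] {μ : Measure Ω} [IsProbabilityMeasure μ]

/-- exp of |t X| integrable -/
lemma integrable_exp_abs {X : Ω → ℝ} (hX : Measurable X) {R : ℝ}
    (hmgf : ∀ t : ℝ, |t| < R → Integrable (fun ω => Real.exp (t * X ω)) μ)
    {r : ℝ} (hr0 : 0 ≤ r) (hrR : r < R) :
    Integrable (fun ω => Real.exp (r * |X ω|)) μ := by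
  have h1 : Integrable (fun ω => Real.exp (r * X ω)) μ := hmgf r (by rwa [abs_of_nonneg hr0])
  have h2 : Integrable (fun ω => Real.exp (-r * X ω)) μ := by
    apply hmgf; rwa [abs_neg, abs_of_nonneg hr0]
  refine Integrable.mono' (h1.add h2) (((hX.abs.const_mul r)).exp.aestronglyMeasurable) ?_
  · filter_upwards with ω
    rw [Real.norm_eq_abs, abs_of_nonneg (Real.exp_pos _).le]
    rcases abs_cases (X ω) with ⟨h, _⟩ | ⟨h, _⟩ <;> rw [h]
    · exact le_add_of_nonneg_right (Real.exp_pos _).le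
    · rw [mul_neg, ← neg_mul]; exact le_add_of_nonneg_left (Real.exp_pos _).le

lemma integrable_pow {X : Ω → ℝ} (hX : Measurable X) {R : ℝ} (hR : 0 < R)
    (hmgf : ∀ t : ℝ, |t| < R → Integrable (fun ω => Real.exp (t * X ω)) μ) (n : ℕ) :
    Integrable (fun ω => X ω ^ n) μ := by
  set r := R / 2 with hr
  have hr0 : 0 < r := by positivity
  have hint := integrable_exp_abs hX hmgf hr0.le (by rw [hr]; linarith)
  refine Integrable.mono' (hint.const_mul ((n ! : ℝ) / r ^ n)) ((hX.pow_const n).aestronglyMeasurable) ?_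
  filter_upwards with ω
  rw [Real.norm_eq_abs, abs_pow]
  have h := Real.pow_div_factorial_le_exp (x := r * |X ω|) (mul_nonneg hr0.le (abs_nonneg (X ω))) n
  rw [mul_pow] at h
  have hfac : (0:ℝ) < n ! := by positivity
  calc |X ω| ^ n = ((n ! : ℝ) / r ^ n) * ((r ^ n * |X ω| ^ n) / n !) := by
        field_simp
      _ ≤ ((n ! : ℝ) / r ^ n) * Real.exp (r * |X ω|) := by
        apply mul_le_mul_of_nonneg_left h (by positivity)



variable {Ω : Type*} [MeasurableSpace Ω] {μ : Measure Ω} [IsProbabilityMeasure μ]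



noncomputable def momSeries (X : Ω → ℝ) (μ : Measure Ω) : FormalMultilinearSeries ℝ ℝ ℝ :=
  FormalMultilinearSeries.ofScalars ℝ (fun n => (∫ ω, X ω ^ n ∂μ) / n !)

lemma coeff_bound {X : Ω → ℝ} (hX : Measurable X) {R : ℝ} (hR : 0 < R)
    (hmgf : ∀ t : ℝ, |t| < R → Integrable (fun ω => Real.exp (t * X ω)) μ)
    {r : ℝ} (hr0 : 0 ≤ r) (hrR : r < R) (n : ℕ) :
    |∫ ω, X ω ^ n ∂μ| / n ! * r ^ n ≤ ∫ ω, Real.exp (r * |X ω|) ∂μ := by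
  have habs : Integrable (fun ω => |X ω| ^ n) μ := by
    simpa [abs_pow] using (integrable_pow hX hR hmgf n).abs
  have h1 : |∫ ω, X ω ^ n ∂μ| ≤ ∫ ω, |X ω| ^ n ∂μ := by
    simpa [abs_pow] using norm_integral_le_integral_norm (fun ω => X ω ^ n) (μ := μ)
  calc |∫ ω, X ω ^ n ∂μ| / n ! * r ^ n ≤ (∫ ω, |X ω| ^ n ∂μ) / n ! * r ^ n := by
        gcongr
      _ = ∫ ω, (r * |X ω|) ^ n / (n ! : ℝ) ∂μ := by
        simp_rw [mul_pow, mul_div_assoc]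
        rw [integral_const_mul, integral_div]
        ring
      _ ≤ ∫ ω, Real.exp (r * |X ω|) ∂μ := by
        have hi : Integrable (fun ω => (r * |X ω|) ^ n / (n ! : ℝ)) μ := by
          have := (habs.div_const ((n ! : ℕ) : ℝ)).const_mul (r ^ n)
          simpa [mul_pow, mul_div_assoc] using this
        refine integral_mono hi (integrable_exp_abs hX hmgf hr0 hrR) ?_
        intro ω
        exact Real.pow_div_factorial_le_exp (x := r * |X ω|)
          (mul_nonneg hr0 (abs_nonneg _)) n

lemma mgf_hasFPowerSeriesOnBall {X : Ω → ℝ} (hX : Measurable X) {R : ℝ} (hR : 0 < R)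
    (hmgf : ∀ t : ℝ, |t| < R → Integrable (fun ω => Real.exp (t * X ω)) μ) :
    HasFPowerSeriesOnBall (mgf X μ) (momSeries X μ) 0 (ENNReal.ofReal R) := by
  constructor
  · -- radius bound
    refine ENNReal.le_of_forall_nnreal_lt (fun r hr => ?_)
    have hrR : (r : ℝ) < R := by
      simpa using (ENNReal.lt_ofReal_iff_toReal_lt (by simp)).1 hr
    refine FormalMultilinearSeries.le_radius_of_bound _ (∫ ω, Real.exp (r * |X ω|) ∂μ) (fun n => ?_)
    have hnrm : ‖momSeries X μ n‖ = |∫ ω, X ω ^ n ∂μ| / (n ! : ℝ) := by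
      rw [momSeries, FormalMultilinearSeries.ofScalars_norm, Real.norm_eq_abs, abs_div,
        abs_of_nonneg (by positivity : (0:ℝ) ≤ ((n ! : ℕ) : ℝ))]
    rw [hnrm]
    exact coeff_bound hX hR hmgf r.coe_nonneg hrR n
  · exact ENNReal.ofReal_pos.mpr hR
  · intro y hy
    have hyR : |y| < R := by
      have : edist y 0 < ENNReal.ofReal R := hy
      rw [edist_zero_right] at this
      simpa [Real.norm_eq_abs] using (ENNReal.lt_ofReal_iff_toReal_lt (by simp)).1 this
    set F : ℕ → Ω → ℝ := fun n ω => (y * X ω) ^ n / n ! with hF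
    have h1 : ∀ n, Integrable (F n) μ := by
      intro n
      have : F n = fun ω => (y ^ n / n !) * X ω ^ n := by
        funext ω; simp [hF, mul_pow]; ring
      rw [this]
      exact (integrable_pow hX hR hmgf n).const_mul _
    have h2 : Summable fun n => ∫ ω, ‖F n ω‖ ∂μ := by
      set r : ℝ := (|y| + R) / 2 with hrdef
      have hyr : |y| < r := by rw [hrdef]; linarith
      have hr0 : 0 < r := lt_of_le_of_lt (abs_nonneg y) hyr
      have hrR : r < R := by rw [hrdef]; linarith
      refine Summable.of_nonneg_of_le (fun n => integral_nonneg (fun ω => norm_nonneg _))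
        (fun n => ?_)
        (((summable_geometric_of_lt_one (by positivity) (by rwa [div_lt_one hr0])
          (r := |y| / r))).mul_right (∫ ω, Real.exp (r * |X ω|) ∂μ))
      calc ∫ ω, ‖F n ω‖ ∂μ = ∫ ω, (|y| / r) ^ n * ((r * |X ω|) ^ n / n !) ∂μ := by
            refine integral_congr_ae (Eventually.of_forall fun ω => ?_)
            simp only [hF, norm_div, norm_pow, Real.norm_eq_abs, abs_mul, Nat.abs_cast]
            rw [mul_pow, mul_pow, div_pow]
            have : (0:ℝ) < r ^ n := by positivity
            field_simp
          _ ≤ (|y| / r) ^ n * ∫ ω, Real.exp (r * |X ω|) ∂μ := by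
            rw [← integral_const_mul]
            refine integral_mono ?_ ((integrable_exp_abs hX hmgf hr0.le hrR).const_mul _) ?_
            · have : (fun ω => (|y| / r) ^ n * ((r * |X ω|) ^ n / (n ! : ℝ))) =
                  fun ω => ((|y| / r) ^ n * (r ^ n / (n ! : ℝ))) * |X ω| ^ n := by
                funext ω; rw [mul_pow]; ring
              rw [this]
              exact ((by simpa [abs_pow] using (integrable_pow hX hR hmgf n).abs :
                Integrable (fun ω => |X ω| ^ n) μ)).const_mul _
            · intro ω
              have := Real.pow_div_factorial_le_exp (x := r * |X ω|)
                (mul_nonneg hr0.le (abs_nonneg _)) n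
              have hp : (0:ℝ) ≤ (|y| / r) ^ n := by positivity
              exact mul_le_mul_of_nonneg_left this hp
    have h3 := MeasureTheory.hasSum_integral_of_summable_integral_norm h1 h2
    have htsum : ∀ ω, (∑' n, F n ω) = Real.exp (y * X ω) := by
      intro ω
      rw [Real.exp_eq_exp_ℝ, NormedSpace.exp_eq_tsum ℝ]
      refine tsum_congr fun n => ?_
      simp [hF, smul_eq_mul, div_eq_inv_mul]
    have h4 : HasSum (fun n => ∫ ω, F n ω ∂μ) (mgf X μ (0 + y)) := by
      have heq : (∫ ω, (∑' n, F n ω) ∂μ) = mgf X μ (0 + y) := by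
        rw [zero_add]
        show _ = ∫ ω, Real.exp (y * X ω) ∂μ
        exact integral_congr_ae (Eventually.of_forall fun ω => htsum ω)
      exact heq ▸ h3
    have h5 : (fun n => ∫ ω, F n ω ∂μ) = fun n => (momSeries X μ) n fun _ => y := by
      funext n
      rw [momSeries, FormalMultilinearSeries.ofScalars_apply_eq]
      simp_rw [hF, mul_pow, mul_div_assoc]
      rw [integral_const_mul, integral_div, smul_eq_mul]
      ring
    exact h5 ▸ h4



/-- coefficient of log(1+x) series -/
noncomputable def logCoeff (n : ℕ) : ℝ := -((-1) ^ n / n)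

lemma logCoeff_zero : logCoeff 0 = 0 := by simp [logCoeff]

lemma hasSum_log (u : ℝ) (hu : |u| < 1) :
    HasSum (fun n => logCoeff n * u ^ n) (Real.log (1 + u)) := by
  have h := (Real.hasSum_pow_div_log_of_abs_lt_one (x := -u) (by rwa [abs_neg])).neg
  rw [neg_neg, sub_neg_eq_add] at h
  have hfe : (fun n : ℕ => -((-u) ^ (n + 1) / ((n : ℝ) + 1)))
      = fun n : ℕ => logCoeff (n + 1) * u ^ (n + 1) := by
    funext n
    rw [logCoeff, neg_pow u]
    push_cast
    ring_nf
  rw [hfe] at h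
  have h2 := (hasSum_nat_add_iff (f := fun m => logCoeff m * u ^ m) 1).1 h
  simpa [logCoeff_zero] using h2

lemma comp_coeff_eq_zero {q p : FormalMultilinearSeries ℝ ℝ ℝ} {j n : ℕ}
    (hq : ∀ m, m ≤ j → q m = 0) (hn : n ≤ j) : (q.comp p) n = 0 := by
  rw [FormalMultilinearSeries.comp]
  refine Finset.sum_eq_zero fun c _ => ?_
  ext v
  rw [FormalMultilinearSeries.compAlongComposition_apply]
  rw [hq c.length (le_trans c.length_le hn)]
  simp

lemma hasFPowerSeriesAt_finsetSum {α : Type*} (s : Finset α) (f : α → ℝ → ℝ)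
    (p : α → FormalMultilinearSeries ℝ ℝ ℝ) (x : ℝ)
    (h : ∀ a ∈ s, HasFPowerSeriesAt (f a) (p a) x) :
    HasFPowerSeriesAt (fun t => ∑ a ∈ s, f a t) (∑ a ∈ s, p a) x := by
  classical
  induction s using Finset.induction_on with
  | empty =>
    simp only [Finset.sum_empty]
    have : HasFPowerSeriesAt (fun _ : ℝ => (0:ℝ))
        (constFormalMultilinearSeries ℝ ℝ (0:ℝ)) x := hasFPowerSeriesAt_const
    simpa [constFormalMultilinearSeries] using this
  | insert a s' ha ih =>
    simp only [Finset.sum_insert ha]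
    have h1 := h a (Finset.mem_insert_self a s')
    have h2 := ih fun b hb => h b (Finset.mem_insert_of_mem hb)
    exact h1.add h2

lemma hasFPowerSeriesAt_const_mul {f : ℝ → ℝ} {p : FormalMultilinearSeries ℝ ℝ ℝ} {x : ℝ}
    (a : ℝ) (hf : HasFPowerSeriesAt f p x) :
    HasFPowerSeriesAt (fun t => a * f t)
      ((a • ContinuousLinearMap.id ℝ ℝ).compFormalMultilinearSeries p) x := by
  obtain ⟨r, hr⟩ := hf
  exact ⟨r, (a • ContinuousLinearMap.id ℝ ℝ).comp_hasFPowerSeriesOnBall hr⟩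

lemma coeff_const_mul (a : ℝ) (p : FormalMultilinearSeries ℝ ℝ ℝ) (n : ℕ) :
    ((a • ContinuousLinearMap.id ℝ ℝ).compFormalMultilinearSeries p) n (fun _ => 1)
      = a * (p n fun _ => 1) := by
  simp [ContinuousLinearMap.compFormalMultilinearSeries_apply]

lemma coeff_finsetSum {α : Type*} (s : Finset α) (p : α → FormalMultilinearSeries ℝ ℝ ℝ) (n : ℕ) :
    ((∑ a ∈ s, p a) n fun _ => 1) = ∑ a ∈ s, (p a n fun _ => 1) := by
  induction s using Finset.cons_induction with
  | empty => simp
  | cons a s' ha ih =>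
    rw [Finset.sum_cons, Finset.sum_cons, ← ih]
    rfl


end Stmt16Aux

open Stmt16Aux FormalMultilinearSeries


/-- For `Y` with finite moment generating function near `0`, the `j`-th cumulant
(the `j`-th derivative at `0` of the cumulant generating function
`K_Y(t) = log E[e^{tY}]`) satisfies
`κ_j(Y) = ∑_{m=1}^{j} (-1)^{m-1} (m-1)! S_Y(j,m)`, where
`S_Y(j,m) = (1/m!) ∑_{k=0}^m C(m,k)(-1)^{m-k} E[S_k^j]` and `S_k` is the sum of `k`
i.i.d. copies of `Y`. -/
theorem stmt_16 {Ω : Type*} [MeasurableSpace Ω] (μ : Measure Ω) [IsProbabilityMeasure μ]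
    (Y : ℕ → Ω → ℝ) (hmeas : ∀ i, Measurable (Y i))
    (hindep : iIndepFun Y μ)
    (hident : ∀ i, IdentDistrib (Y i) (Y 0) μ μ)
    (R : ℝ) (hR : 0 < R)
    (hmgf : ∀ t : ℝ, |t| < R → Integrable (fun ω => Real.exp (t * Y 0 ω)) μ)
    (j : ℕ) (hj : 1 ≤ j) :
    iteratedDeriv j (cgf (Y 0) μ) 0
      = ∑ m ∈ Finset.Icc 1 j, (-1 : ℝ) ^ (m - 1) * ((m - 1).factorial : ℝ) *
          ((m.factorial : ℝ)⁻¹ * ∑ k ∈ Finset.range (m + 1),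
            (m.choose k : ℝ) * (-1) ^ (m - k) *
              ∫ ω, (∑ i ∈ Finset.range k, Y i ω) ^ j ∂μ) := by
  classical
  set M : ℝ → ℝ := mgf (Y 0) μ with hMdef
  set S : ℕ → Ω → ℝ := fun k ω => ∑ i ∈ Finset.range k, Y i ω with hSdef
  have hSmeas : ∀ k, Measurable (S k) := fun k =>
    Finset.measurable_sum (Finset.range k) (fun i _ => hmeas i)
  -- integrability of exp(t Y i)
  have hint : ∀ (i : ℕ) (t : ℝ), |t| < R → Integrable (fun ω => Real.exp (t * Y i ω)) μ := by
    intro i t ht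
    have hid : IdentDistrib (fun ω => Real.exp (t * Y i ω)) (fun ω => Real.exp (t * Y 0 ω)) μ μ :=
      (hident i).comp ((measurable_id.const_mul t).exp)
    exact hid.integrable_iff.2 (hmgf t ht)
  -- integrability of exp(t S k)
  have hSint : ∀ (k : ℕ) (t : ℝ), |t| < R → Integrable (fun ω => Real.exp (t * S k ω)) μ := by
    intro k t ht
    have := hindep.integrable_exp_mul_sum (t := t) hmeas (s := Finset.range k)
      (fun i _ => hint i t ht)
    simpa only [Finset.sum_apply] using this
  -- mgf of S k is M ^ k
  have hmgfY : ∀ i, mgf (Y i) μ = M := by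
    intro i
    funext t
    have hid : IdentDistrib (fun ω => Real.exp (t * Y i ω)) (fun ω => Real.exp (t * Y 0 ω)) μ μ :=
      (hident i).comp ((measurable_id.const_mul t).exp)
    exact hid.integral_eq
  have hmgfS : ∀ k, mgf (S k) μ = fun t => (M t) ^ k := by
    intro k
    funext t
    have h1 : mgf (∑ i ∈ Finset.range k, Y i) μ t = ∏ i ∈ Finset.range k, mgf (Y i) μ t :=
      hindep.mgf_sum hmeas (Finset.range k)
    have h2 : mgf (S k) μ t = mgf (∑ i ∈ Finset.range k, Y i) μ t := by
      unfold mgf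
      refine integral_congr_ae (Eventually.of_forall fun ω => ?_)
      simp [hSdef, Finset.sum_apply]
    rw [h2, h1]
    rw [Finset.prod_congr rfl fun i _ => congrFun (hmgfY i) t, Finset.prod_const,
      Finset.card_range]
  -- power series of M^k
  have hMk : ∀ k, HasFPowerSeriesAt (fun t => (M t) ^ k) (momSeries (S k) μ) 0 := by
    intro k
    have := (mgf_hasFPowerSeriesOnBall (hSmeas k) hR (hSint k)).hasFPowerSeriesAt
    rwa [hmgfS k] at this
  have hM1 : HasFPowerSeriesAt M (momSeries (S 1) μ) 0 := by
    have := hMk 1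
    simpa [pow_one] using this
  -- the function u = M - 1
  set pu : FormalMultilinearSeries ℝ ℝ ℝ :=
    momSeries (S 1) μ - constFormalMultilinearSeries ℝ ℝ (1 : ℝ) with hpudef
  have hu : HasFPowerSeriesAt (fun t => M t - 1) pu 0 := hM1.sub hasFPowerSeriesAt_const
  have hM0 : M 0 = 1 := mgf_zero
  -- the high tail series
  set cHigh : ℕ → ℝ := fun n => if n ≤ j then 0 else logCoeff n with hcHighdef
  set Gser : FormalMultilinearSeries ℝ ℝ ℝ := FormalMultilinearSeries.ofScalars ℝ cHigh
    with hGserdef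
  have hcHigh_abs : ∀ n, |cHigh n| ≤ 1 := by
    intro n
    rw [hcHighdef]
    by_cases h : n ≤ j
    · simp [h]
    · have hn : 1 ≤ n := le_trans hj (le_of_not_ge h)
      have hn0 : (0:ℝ) < (n : ℝ) := by exact_mod_cast hn
      simp only [h, if_false, logCoeff, abs_neg, abs_div, abs_pow, abs_one, one_pow,
        Nat.abs_cast]
      rw [div_le_one hn0]
      exact_mod_cast hn
  have hGrad : 1 ≤ Gser.radius := by
    have := FormalMultilinearSeries.le_radius_of_bound Gser 1 (r := 1) (fun n => ?_)
    · simpa using this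
    · rw [hGserdef, FormalMultilinearSeries.ofScalars_norm]
      simpa using hcHigh_abs n
  have hGat : HasFPowerSeriesAt Gser.sum Gser 0 :=
    (Gser.hasFPowerSeriesOnBall (lt_of_lt_of_le one_pos hGrad)).hasFPowerSeriesAt
  have htail : HasFPowerSeriesAt (Gser.sum ∘ (fun t => M t - 1)) (Gser.comp pu) 0 := by
    refine HasFPowerSeriesAt.comp ?_ hu
    show HasFPowerSeriesAt Gser.sum Gser (M 0 - 1)
    rw [hM0, sub_self]
    exact hGat
  -- inner polynomial series
  set b : ℕ → ℕ → ℝ := fun m k => (m.choose k : ℝ) * (-1) ^ (m - k) with hbdef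
  set pInner : ℕ → FormalMultilinearSeries ℝ ℝ ℝ := fun m =>
    ∑ k ∈ Finset.range (m + 1),
      ((b m k • ContinuousLinearMap.id ℝ ℝ).compFormalMultilinearSeries (momSeries (S k) μ))
    with hpInnerdef
  have hpow : ∀ (m : ℕ) (t : ℝ), (M t - 1) ^ m
      = ∑ k ∈ Finset.range (m + 1), b m k * (M t) ^ k := by
    intro m t
    have := add_pow (M t) (-1 : ℝ) m
    rw [← sub_eq_add_neg] at this
    rw [this]
    refine Finset.sum_congr rfl fun k _ => ?_
    rw [hbdef]
    ring
  have hInner : ∀ m, HasFPowerSeriesAt (fun t => (M t - 1) ^ m) (pInner m) 0 := by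
    intro m
    have h1 : HasFPowerSeriesAt (fun t => ∑ k ∈ Finset.range (m + 1), b m k * (M t) ^ k)
        (pInner m) 0 := by
      rw [hpInnerdef]
      exact hasFPowerSeriesAt_finsetSum _ _ _ _
        (fun k _ => hasFPowerSeriesAt_const_mul (b m k) (hMk k))
    have : (fun t => (M t - 1) ^ m)
        = fun t => ∑ k ∈ Finset.range (m + 1), b m k * (M t) ^ k := funext fun t => hpow m t
    rw [this]
    exact h1
  -- the truncated log polynomial g
  set g : ℝ → ℝ := fun t => ∑ m ∈ Finset.Icc 1 j, logCoeff m * (M t - 1) ^ m with hgdef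
  set pg : FormalMultilinearSeries ℝ ℝ ℝ := ∑ m ∈ Finset.Icc 1 j,
    ((logCoeff m • ContinuousLinearMap.id ℝ ℝ).compFormalMultilinearSeries (pInner m))
    with hpgdef
  have hg : HasFPowerSeriesAt g pg 0 := by
    rw [hgdef, hpgdef]
    exact hasFPowerSeriesAt_finsetSum _ _ _ _
      (fun m _ => hasFPowerSeriesAt_const_mul (logCoeff m) (hInner m))
  -- total
  have htot' : HasFPowerSeriesAt (g + Gser.sum ∘ (fun t => M t - 1)) (pg + Gser.comp pu) 0 :=
    hg.add htail
  -- eventual equality with cgf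
  have hEv : cgf (Y 0) μ =ᶠ[𝓝 (0:ℝ)] (g + Gser.sum ∘ (fun t => M t - 1)) := by
    have hMc : ContinuousAt M 0 := hM1.continuousAt
    have hsmall : ∀ᶠ t in 𝓝 (0:ℝ), |M t - 1| < 1 := by
      have h1 : Tendsto (fun t => |M t - 1|) (𝓝 0) (𝓝 (0:ℝ)) := by
        have h2 : Tendsto (fun t => |M t - 1|) (𝓝 0) (𝓝 (|M 0 - 1|)) :=
          ((hMc.sub continuousAt_const).abs)
        simpa [hM0] using h2
      exact h1.eventually_lt_const one_pos
    filter_upwards [hsmall] with t hx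
    set x : ℝ := M t - 1 with hxdef
    have hMt : M t = 1 + x := by rw [hxdef]; ring
    have htotsum : HasSum (fun n => logCoeff n * x ^ n) (Real.log (M t)) := by
      rw [hMt]; exact hasSum_log x hx
    have hsummable : Summable (fun n => cHigh n * x ^ n) := by
      refine Summable.of_norm_bounded (summable_geometric_of_lt_one (abs_nonneg x) hx) ?_
      intro n
      rw [norm_mul, norm_pow, Real.norm_eq_abs, Real.norm_eq_abs]
      calc |cHigh n| * |x| ^ n ≤ 1 * |x| ^ n := by
            gcongr; exact hcHigh_abs n
        _ = |x| ^ n := one_mul _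
    have hhigh : HasSum (fun n => cHigh n * x ^ n) (Gser.sum x) := by
      have h1 := hsummable.hasSum
      have h2 : (∑' n, cHigh n * x ^ n) = Gser.sum x := by
        rw [FormalMultilinearSeries.sum]
        refine tsum_congr fun n => ?_
        rw [hGserdef, FormalMultilinearSeries.ofScalars_apply_eq, smul_eq_mul]
      rwa [h2] at h1
    have hlow := htotsum.sub hhigh
    have hlowfin : HasSum (fun n => logCoeff n * x ^ n - cHigh n * x ^ n)
        (∑ n ∈ Finset.range (j + 1), (logCoeff n * x ^ n - cHigh n * x ^ n)) := by
      refine hasSum_sum_of_ne_finset_zero fun n hn => ?_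
      have hnj : ¬ n ≤ j := by
        simp only [Finset.mem_range] at hn; omega
      rw [hcHighdef]
      simp [hnj]
    have hkey : (∑ n ∈ Finset.range (j + 1), (logCoeff n * x ^ n - cHigh n * x ^ n))
        = Real.log (M t) - Gser.sum x := hlowfin.unique hlow
    have hgt : g t = ∑ n ∈ Finset.range (j + 1), (logCoeff n * x ^ n - cHigh n * x ^ n) := by
      have hins : Finset.range (j + 1) = insert 0 (Finset.Icc 1 j) := by
        ext n
        simp only [Finset.mem_range, Finset.mem_insert, Finset.mem_Icc]
        omega
      rw [hins, Finset.sum_insert (by simp)]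
      have h0 : logCoeff 0 * x ^ 0 - cHigh 0 * x ^ 0 = 0 := by
        simp [logCoeff_zero, hcHighdef]
      rw [h0, zero_add]
      show (∑ m ∈ Finset.Icc 1 j, logCoeff m * x ^ m) = _
      refine Finset.sum_congr rfl fun n hn => ?_
      have hn' : n ≤ j := (Finset.mem_Icc.1 hn).2
      have hch : cHigh n = 0 := by simp [hcHighdef, hn']
      rw [hch]
      ring
    have : cgf (Y 0) μ t = Real.log (M t) := rfl
    rw [this, Pi.add_apply, Function.comp_apply, hgt]
    rw [hkey]
    ring
  have htot : HasFPowerSeriesAt (cgf (Y 0) μ) (pg + Gser.comp pu) 0 := htot'.congr hEv.symm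
  -- extract iterated derivative
  obtain ⟨r, hrb⟩ := htot
  have hderiv : iteratedDeriv j (cgf (Y 0) μ) 0
      = (j ! : ℝ) * ((pg + Gser.comp pu) j fun _ => 1) := by
    rw [iteratedDeriv_eq_iteratedFDeriv]
    rw [← hrb.factorial_smul (1:ℝ) j]
    rw [nsmul_eq_mul]
  -- the tail coefficient vanishes
  have hqt : ((Gser.comp pu) j fun _ => (1:ℝ)) = 0 := by
    have : (Gser.comp pu) j = 0 := by
      refine comp_coeff_eq_zero (fun m hm => ?_) le_rfl
      have hc0 : cHigh m = 0 := by simp [hcHighdef, hm]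
      rw [hGserdef]
      exact FormalMultilinearSeries.ofScalars_eq_zero_of_scalar_zero (E := ℝ) (c := cHigh) hc0
    rw [this]
    simp
  -- compute the pg coefficient
  have hmomc : ∀ k, ((momSeries (S k) μ) j fun _ => (1:ℝ))
      = (∫ ω, (S k ω) ^ j ∂μ) / j ! := by
    intro k
    rw [momSeries, FormalMultilinearSeries.ofScalars_apply_eq]
    simp
  have hpgc : (pg j fun _ => (1:ℝ))
      = ∑ m ∈ Finset.Icc 1 j, logCoeff m * ∑ k ∈ Finset.range (m + 1),
          b m k * ((∫ ω, (S k ω) ^ j ∂μ) / j !) := by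
    rw [hpgdef, coeff_finsetSum]
    refine Finset.sum_congr rfl fun m _ => ?_
    rw [coeff_const_mul, hpInnerdef, coeff_finsetSum]
    congr 1
    refine Finset.sum_congr rfl fun k _ => ?_
    rw [coeff_const_mul, hmomc k]
  -- final arithmetic
  rw [hderiv]
  have hadd : ((pg + Gser.comp pu) j fun _ => (1:ℝ))
      = (pg j fun _ => (1:ℝ)) + ((Gser.comp pu) j fun _ => (1:ℝ)) := rfl
  rw [hadd, hqt, add_zero, hpgc, Finset.mul_sum]
  refine Finset.sum_congr rfl fun m hm => ?_
  obtain ⟨hm1, hmj⟩ := Finset.mem_Icc.1 hm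
  obtain ⟨s, rfl⟩ : ∃ s, m = s + 1 := ⟨m - 1, by omega⟩
  simp only [Finset.mul_sum]
  refine Finset.sum_congr rfl fun k _ => ?_
  have hSint : (∫ ω, S k ω ^ j ∂μ) = ∫ ω, (∑ i ∈ Finset.range k, Y i ω) ^ j ∂μ := rfl
  rw [hSint, hbdef]
  have hfac : ((j !: ℕ) : ℝ) ≠ 0 := by positivity
  have hfac2 : (((s + 1).factorial : ℕ) : ℝ) = ((s:ℝ) + 1) * (s.factorial : ℝ) := by
    rw [Nat.factorial_succ]; push_cast; ring
  simp only [logCoeff, Nat.add_sub_cancel, hfac2]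
  have hsfac : ((s ! : ℕ) : ℝ) ≠ 0 := by positivity
  have hs1 : ((s : ℝ) + 1) ≠ 0 := by positivity
  push_cast
  field_simp
  ring
end

section
/- Let U and V be independent real random variables where U has finite moment generating function near 0 and V is standard normal, and set Y = U + iV. Then for r ≥ 1, E[Y^k] = 0 for k = 1,...,r if and only if E[U^k] = E[V^k] for k = 1,...,r. -/
open MeasureTheory ProbabilityTheory

open Real
open scoped ENNReal NNReal


lemma gamma_half (m : ℕ) : Real.Gamma (m + 1/2) = Real.sqrt π * (2*m).factorial / (4^m * m.factorial) := by
  induction m with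
  | zero => simpa using Real.Gamma_one_half_eq
  | succ m ih =>
    have h : ((m:ℝ) + 1) + 1/2 = (m + 1/2) + 1 := by ring
    push_cast
    rw [h, Real.Gamma_add_one (by positivity), ih]
    have h4 : (4:ℝ)^m ≠ 0 := by positivity
    have hm : (m.factorial : ℝ) ≠ 0 := Nat.cast_ne_zero.mpr m.factorial_ne_zero
    have hfac : (2*(m+1)).factorial = (2*m+2) * ((2*m+1) * (2*m).factorial) := by
      have : 2*(m+1) = (2*m+1) + 1 := by ring
      rw [this, Nat.factorial_succ, Nat.factorial_succ]
    rw [hfac]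
    push_cast [Nat.factorial_succ]
    field_simp
    ring

lemma gaussianPDFReal_std (x : ℝ) :
    gaussianPDFReal 0 1 x = (Real.sqrt (2*π))⁻¹ * rexp (-x^2/2) := by
  simp [gaussianPDFReal]

lemma integral_gaussianReal_std (f : ℝ → ℝ) :
    ∫ x, f x ∂(gaussianReal 0 1) = ∫ x, gaussianPDFReal 0 1 x * f x := by
  rw [gaussianReal_of_var_ne_zero 0 one_ne_zero]
  have hmeas : Measurable (fun x => (gaussianPDFReal 0 1 x).toNNReal) :=
    (measurable_gaussianPDFReal 0 1).real_toNNReal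
  have hpdf : (gaussianPDF 0 1) = fun x => ((gaussianPDFReal 0 1 x).toNNReal : ℝ≥0∞) := by
    ext x; simp [gaussianPDF, ENNReal.ofReal]
  rw [hpdf, integral_withDensity_eq_integral_smul hmeas]
  refine integral_congr_ae (ae_of_all _ fun x => ?_)
  simp [NNReal.smul_def, Real.coe_toNNReal _ (gaussianPDFReal_nonneg 0 1 x)]

lemma integrable_gaussianReal_iff (f : ℝ → ℝ) :
    Integrable f (gaussianReal 0 1) ↔ Integrable (fun x => gaussianPDFReal 0 1 x * f x) := by
  rw [gaussianReal_of_var_ne_zero 0 one_ne_zero]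
  have hmeas : Measurable (fun x => (gaussianPDFReal 0 1 x).toNNReal) :=
    (measurable_gaussianPDFReal 0 1).real_toNNReal
  have hpdf : (gaussianPDF 0 1) = fun x => ((gaussianPDFReal 0 1 x).toNNReal : ℝ≥0∞) := by
    ext x; simp [gaussianPDF, ENNReal.ofReal]
  rw [hpdf, integrable_withDensity_iff_integrable_smul hmeas]
  apply integrable_congr
  refine ae_of_all _ fun x => ?_
  simp [NNReal.smul_def, Real.coe_toNNReal _ (gaussianPDFReal_nonneg 0 1 x)]

lemma integrable_pow_mul_exp (n : ℕ) :
    Integrable (fun x : ℝ => x ^ n * rexp (-x^2/2)) := by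
  have h := integrable_rpow_mul_exp_neg_mul_sq (b := (1/2:ℝ)) (by norm_num) (s := (n:ℝ))
    (by exact_mod_cast neg_one_lt_zero.trans_le (Nat.cast_nonneg n))
  refine h.congr (ae_of_all _ fun x => ?_)
  dsimp only
  rw [Real.rpow_natCast]
  ring_nf

lemma integrable_pow_gaussianReal (n : ℕ) :
    Integrable (fun x : ℝ => x ^ n) (gaussianReal 0 1) := by
  rw [integrable_gaussianReal_iff]
  have : Integrable (fun x : ℝ => (Real.sqrt (2*π))⁻¹ * (x ^ n * rexp (-x^2/2))) :=
    (integrable_pow_mul_exp n).const_mul _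
  refine this.congr (ae_of_all _ fun x => ?_)
  dsimp only
  rw [gaussianPDFReal_std]
  ring

lemma gauss_mom_even (m : ℕ) :
    ∫ x, x ^ (2*m) ∂(gaussianReal 0 1) = (2*m).factorial / (2^m * m.factorial) := by
  rw [integral_gaussianReal_std]
  have key : ∫ x in Set.Ioi (0:ℝ), x ^ (2*m) * rexp (-x^2/2)
      = 2^m * Real.sqrt 2 * (1/2) * (Real.sqrt π * (2*m).factorial / (4^m * m.factorial)) := by
    have h := integral_rpow_mul_exp_neg_mul_rpow (p := 2) (q := (2*m:ℕ)) (b := (1/2:ℝ))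
      two_pos (by exact_mod_cast neg_one_lt_zero.trans_le (Nat.cast_nonneg (2*m))) (by norm_num)
    have hL : ∫ x in Set.Ioi (0:ℝ), x ^ ((2*m:ℕ):ℝ) * rexp (-(1/2) * x ^ (2:ℝ))
        = ∫ x in Set.Ioi (0:ℝ), x ^ (2*m) * rexp (-x^2/2) := by
      refine setIntegral_congr_fun measurableSet_Ioi (fun x hx => ?_)
      rw [Real.rpow_natCast, Real.rpow_two]
      ring_nf
    rw [hL] at h
    rw [h]
    have hexp : -(((2*m:ℕ):ℝ) + 1) / 2 = -((m:ℝ) + 1/2) := by push_cast; ring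
    have hexp2 : (((2*m:ℕ):ℝ) + 1) / 2 = (m:ℝ) + 1/2 := by push_cast; ring
    rw [hexp, hexp2, gamma_half]
    have hb : ((1:ℝ)/2) ^ (-((m:ℝ) + 1/2)) = 2^m * Real.sqrt 2 := by
      rw [one_div, Real.inv_rpow (by norm_num), ← Real.rpow_neg (by norm_num), neg_neg,
        Real.rpow_add (by norm_num), Real.rpow_natCast, Real.sqrt_eq_rpow]
      norm_num
    rw [hb]
  have hpt : (fun x => gaussianPDFReal 0 1 x * x ^ (2*m))
      = fun x => (Real.sqrt (2*π))⁻¹ * (x ^ (2*m) * rexp (-x^2/2)) := by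
    funext x; rw [gaussianPDFReal_std]; ring
  rw [hpt, integral_const_mul]
  have habs : ∫ x : ℝ, x ^ (2*m) * rexp (-x^2/2)
      = 2 * ∫ x in Set.Ioi (0:ℝ), x ^ (2*m) * rexp (-x^2/2) := by
    rw [← integral_comp_abs (f := fun x => x ^ (2*m) * rexp (-x^2/2))]
    refine integral_congr_ae (ae_of_all _ fun x => ?_)
    simp [pow_mul, sq_abs]
  rw [habs, key]
  have h2 : Real.sqrt (2*π) = Real.sqrt 2 * Real.sqrt π := Real.sqrt_mul (by norm_num) π
  have h4 : (4:ℝ)^m = 2^m * 2^m := by rw [← mul_pow]; norm_num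
  have hs2 : Real.sqrt 2 ≠ 0 := by positivity
  have hsp : Real.sqrt π ≠ 0 := by positivity
  have h2m : (2:ℝ)^m ≠ 0 := by positivity
  have hm : (m.factorial : ℝ) ≠ 0 := Nat.cast_ne_zero.mpr m.factorial_ne_zero
  rw [h2, h4]
  field_simp

lemma gauss_mom_odd (m : ℕ) :
    ∫ x, x ^ (2*m+1) ∂(gaussianReal 0 1) = 0 := by
  rw [integral_gaussianReal_std]
  set f : ℝ → ℝ := fun x => gaussianPDFReal 0 1 x * x ^ (2*m+1) with hf
  have hint : Integrable f := by
    rw [← integrable_gaussianReal_iff]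
    exact integrable_pow_gaussianReal (2*m+1)
  have hodd : ∀ x, f (-x) = - f x := by
    intro x
    simp only [hf, gaussianPDFReal_std, neg_sq]
    rw [Odd.neg_pow ⟨m, by ring⟩]
    ring
  have hsplit := intervalIntegral.integral_Iic_add_Ioi (b := (0:ℝ)) (μ := volume)
    hint.integrableOn hint.integrableOn
  have hneg : ∫ x in Set.Iic (0:ℝ), f x = - ∫ x in Set.Ioi (0:ℝ), f x := by
    rw [show Set.Iic (0:ℝ) = Set.Iic (-(0:ℝ)) by norm_num, ← integral_comp_neg_Ioi]
    simp_rw [hodd]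
    exact integral_neg f
  rw [hneg] at hsplit
  linarith [hsplit]

noncomputable def gmom (n : ℕ) : ℝ :=
  if Even n then (n.factorial : ℝ) / (2^(n/2) * (n/2).factorial) else 0

lemma gmom_even (a : ℕ) : gmom (2*a) = (2*a).factorial / (2^a * a.factorial) := by
  have h : (2*a)/2 = a := by omega
  unfold gmom
  rw [if_pos ⟨a, two_mul a⟩, h]

lemma gmom_of_odd {n : ℕ} (h : Odd n) : gmom n = 0 := by
  simp [gmom, Nat.not_even_iff_odd.mpr h]

lemma gauss_mom (n : ℕ) : ∫ x, x ^ n ∂(gaussianReal 0 1) = gmom n := by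
  rcases Nat.even_or_odd n with ⟨a, h⟩ | ⟨a, h⟩
  · have : n = 2*a := by omega
    rw [this, gauss_mom_even, gmom_even]
  · have : n = 2*a+1 := by omega
    rw [this, gauss_mom_odd, gmom_of_odd ⟨a, rfl⟩]

lemma real_id (m a : ℕ) (h : a ≤ m) :
    ((2*m).choose (2*a) : ℝ) * ((2*(m-a)).factorial/(2^(m-a)*(m-a).factorial))
      * ((2*a).factorial/(2^a * a.factorial))
    = (2*m).factorial/(2^m * m.factorial) * (m.choose a) := by
  have h1 := Nat.choose_mul_factorial_mul_factorial (show 2*a ≤ 2*m by omega)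
  have h3 : 2*m - 2*a = 2*(m-a) := by omega
  rw [h3] at h1
  have h2 := Nat.choose_mul_factorial_mul_factorial h
  have e1 : ((2*m).choose (2*a) : ℝ) * (2*a).factorial * (2*(m-a)).factorial
      = (2*m).factorial := by exact_mod_cast congrArg (Nat.cast : ℕ → ℝ) h1
  have e2 : (m.choose a : ℝ) * a.factorial * (m-a).factorial = m.factorial := by
    exact_mod_cast congrArg (Nat.cast : ℕ → ℝ) h2
  have hp : (2:ℝ)^(m-a) * 2^a = 2^m := by rw [← pow_add]; congr 1; omega
  have hf1 : ((m-a).factorial : ℝ) ≠ 0 := Nat.cast_ne_zero.mpr (Nat.factorial_ne_zero _)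
  have hf2 : (a.factorial : ℝ) ≠ 0 := Nat.cast_ne_zero.mpr (Nat.factorial_ne_zero _)
  have hfm : (m.factorial : ℝ) ≠ 0 := Nat.cast_ne_zero.mpr (Nat.factorial_ne_zero _)
  have hp1 : (2:ℝ)^(m-a) ≠ 0 := by positivity
  have hp2 : (2:ℝ)^a ≠ 0 := by positivity
  have hpm : (2:ℝ)^m ≠ 0 := by positivity
  field_simp
  rw [← e1, ← e2, ← hp]
  ring

lemma alt_sum {m : ℕ} (hm : 1 ≤ m) :
    ∑ a ∈ Finset.range (m+1), (-1:ℂ)^a * (m.choose a : ℂ) = 0 := by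
  have h := add_pow (-1 : ℂ) 1 m
  simp only [neg_add_cancel, one_pow, mul_one] at h
  rw [zero_pow (by omega)] at h
  rw [← h]

lemma key_sum_s17 {k : ℕ} (hk : 1 ≤ k) :
    ∑ j ∈ Finset.range (k+1),
      (k.choose j : ℂ) * Complex.I^j * (gmom (k-j) : ℝ) * (gmom j : ℝ) = 0 := by
  rcases Nat.even_or_odd k with ⟨m, hkm⟩ | ⟨m, hkm⟩
  · -- even case, k = 2m, m ≥ 1
    have hk2 : k = 2*m := by omega
    have hm : 1 ≤ m := by omega
    subst hk2
    rw [← Finset.sum_filter_add_sum_filter_not (Finset.range (2*m+1)) (fun j => Even j)]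
    have hodd : ∑ j ∈ (Finset.range (2*m+1)).filter (fun j => ¬ Even j),
        (((2*m).choose j : ℂ)) * Complex.I^j * (gmom (2*m-j) : ℝ) * (gmom j : ℝ) = 0 := by
      refine Finset.sum_eq_zero fun j hj => ?_
      rw [gmom_of_odd (Nat.not_even_iff_odd.mp (Finset.mem_filter.mp hj).2)]
      simp
    rw [hodd, add_zero]
    have himg : (Finset.range (2*m+1)).filter (fun j => Even j)
        = (Finset.range (m+1)).image (fun a => 2*a) := by
      ext j
      simp only [Finset.mem_filter, Finset.mem_range, Finset.mem_image]
      constructor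
      · rintro ⟨hlt, a, rfl⟩
        exact ⟨a, by omega, by omega⟩
      · rintro ⟨a, ha, rfl⟩
        exact ⟨by omega, a, by omega⟩
    rw [himg, Finset.sum_image (by intro a _ b _ hab; simp only at hab; omega)]
    have hcongr : ∀ a ∈ Finset.range (m+1),
        (((2*m).choose (2*a) : ℂ)) * Complex.I^(2*a) * (gmom (2*m-2*a) : ℝ) * (gmom (2*a) : ℝ)
        = (((2*m).factorial/(2^m * m.factorial) : ℝ) : ℂ) * ((-1:ℂ)^a * (m.choose a : ℂ)) := by
      intro a ha
      have haM : a ≤ m := by have := Finset.mem_range.mp ha; omega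
      have hI : Complex.I^(2*a) = (-1:ℂ)^a := by rw [pow_mul, Complex.I_sq]
      have hsub : 2*m - 2*a = 2*(m-a) := by omega
      rw [hI, hsub, gmom_even, gmom_even]
      have := real_id m a haM
      have hc : ((((2*m).choose (2*a) : ℝ) * ((2*(m-a)).factorial/(2^(m-a)*(m-a).factorial))
          * ((2*a).factorial/(2^a * a.factorial)) : ℝ) : ℂ)
          = (((2*m).factorial/(2^m * m.factorial) * (m.choose a) : ℝ) : ℂ) := by
        exact_mod_cast congrArg (Complex.ofReal : ℝ → ℂ) this
      push_cast at hc ⊢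
      rw [show (((2*m).choose (2*a) : ℂ)) * (-1:ℂ)^a * ((2*(m-a)).factorial/(2^(m-a)*(m-a).factorial))
          * ((2*a).factorial/(2^a * a.factorial))
          = (((2*m).choose (2*a) : ℂ)) * ((2*(m-a)).factorial/(2^(m-a)*(m-a).factorial))
          * ((2*a).factorial/(2^a * a.factorial)) * (-1:ℂ)^a by ring, hc]
      ring
    rw [Finset.sum_congr rfl hcongr, ← Finset.mul_sum, alt_sum hm, mul_zero]
  · -- odd case
    have hk2 : k = 2*m+1 := by omega
    subst hk2
    refine Finset.sum_eq_zero fun j hj => ?_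
    have hjle : j ≤ 2*m+1 := by
      have := Finset.mem_range.mp hj; omega
    rcases Nat.even_or_odd j with hje | hjo
    · have : Odd (2*m+1-j) := by
        rcases hje with ⟨b, hb⟩
        exact ⟨m - b, by omega⟩
      rw [gmom_of_odd this]
      simp
    · rw [gmom_of_odd hjo]
      simp

lemma gmom_zero : gmom 0 = 1 := by simp [gmom]

lemma integrable_pow_of_exp {Ω : Type*} [MeasurableSpace Ω] {μ : Measure Ω} {U : Ω → ℝ}
    (hU : Measurable U) {t : ℝ} (ht : 0 < t)
    (h1 : Integrable (fun ω => rexp (t * U ω)) μ)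
    (h2 : Integrable (fun ω => rexp (-t * U ω)) μ) (n : ℕ) :
    Integrable (fun ω => U ω ^ n) μ := by
  refine Integrable.mono' (((h1.add h2).const_mul (n.factorial / t^n)))
    (hU.pow_const n).aestronglyMeasurable (ae_of_all _ fun ω => ?_)
  set x := U ω with hx
  have hA : (t*|x|)^n / n.factorial ≤ rexp (t*|x|) := by
    calc (t*|x|)^n / n.factorial
        ≤ ∑ i ∈ Finset.range (n+1), (t*|x|)^i / i.factorial := by
          refine Finset.single_le_sum (f := fun i => (t*|x|)^i / i.factorial)
            (fun i _ => by positivity) (Finset.self_mem_range_succ n)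
      _ ≤ rexp (t*|x|) := Real.sum_le_exp_of_nonneg (by positivity) _
  have hB : rexp (t*|x|) ≤ rexp (t*x) + rexp (-t*x) := by
    rcases abs_cases x with ⟨h, _⟩ | ⟨h, _⟩
    · rw [h]
      exact le_add_of_nonneg_right (Real.exp_pos _).le
    · rw [h, mul_neg, ← neg_mul]
      exact le_add_of_nonneg_left (Real.exp_pos _).le
  have hnorm : ‖x ^ n‖ = |x|^n := by rw [Real.norm_eq_abs, abs_pow]
  rw [hnorm]
  have htn : (0:ℝ) < t^n := by positivity
  have hfac : (0:ℝ) < (n.factorial : ℝ) := by exact_mod_cast n.factorial_pos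
  have h5 : (t*|x|)^n = t^n * |x|^n := mul_pow t _ n
  have h6 : t^n * |x|^n / n.factorial ≤ rexp (t*x) + rexp (-t*x) := by
    rw [← h5]; exact hA.trans hB
  calc |x|^n = (t^n * |x|^n / n.factorial) * (n.factorial / t^n) := by
        field_simp
      _ ≤ (rexp (t*x) + rexp (-t*x)) * (n.factorial / t^n) := by
        exact mul_le_mul_of_nonneg_right h6 (by positivity)
      _ = (n.factorial / t^n) * (rexp (t*x) + rexp (-t*x)) := by ring


/-- For `U, V` independent, `U` with finite mgf near `0`, `V` standard normal, and
`Y = U + iV`: for `r ≥ 1`, `E[Y^k] = 0` for `k = 1,…,r` iff `E[U^k] = E[V^k]` for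
`k = 1,…,r`. -/
theorem stmt_17 {Ω : Type*} [MeasurableSpace Ω] (μ : Measure Ω) [IsProbabilityMeasure μ]
    (U V : Ω → ℝ) (hU : Measurable U) (hV : Measurable V)
    (hindep : IndepFun U V μ) (hVg : μ.map V = gaussianReal 0 1)
    (R : ℝ) (hR : 0 < R)
    (hmgf : ∀ t : ℝ, |t| < R → Integrable (fun ω => Real.exp (t * U ω)) μ)
    (r : ℕ) (hr : 1 ≤ r) :
    (∀ k ∈ Finset.Icc 1 r, ∫ ω, ((U ω : ℂ) + Complex.I * (V ω : ℂ)) ^ k ∂μ = 0) ↔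
      (∀ k ∈ Finset.Icc 1 r, ∫ ω, U ω ^ k ∂μ = ∫ ω, V ω ^ k ∂μ) := by
  have intU : ∀ n : ℕ, Integrable (fun ω => U ω ^ n) μ := by
    refine integrable_pow_of_exp hU (t := R/2) (by linarith) ?_ ?_
    · exact hmgf (R/2) (by rw [abs_of_pos (by linarith)]; linarith)
    · exact hmgf (-(R/2)) (by rw [abs_neg, abs_of_pos (by linarith)]; linarith)
  have intV : ∀ n : ℕ, Integrable (fun ω => V ω ^ n) μ := by
    intro n
    have h0 : Integrable (fun x : ℝ => x ^ n) (μ.map V) := by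
      rw [hVg]; exact integrable_pow_gaussianReal n
    exact (integrable_map_measure ((measurable_id.pow_const n).aestronglyMeasurable)
      hV.aemeasurable).mp h0
  have momV : ∀ n : ℕ, ∫ ω, V ω ^ n ∂μ = gmom n := by
    intro n
    have h : ∫ x, (fun x : ℝ => x ^ n) x ∂(μ.map V) = ∫ ω, V ω ^ n ∂μ :=
      integral_map hV.aemeasurable ((measurable_id.pow_const n).aestronglyMeasurable)
    rw [hVg, gauss_mom] at h
    exact h.symm
  have momU0 : ∫ ω, U ω ^ 0 ∂μ = gmom 0 := by
    simp only [pow_zero, gmom_zero]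
    simp
  have expand : ∀ k : ℕ, ∫ ω, ((U ω : ℂ) + Complex.I * (V ω : ℂ)) ^ k ∂μ
      = ∑ j ∈ Finset.range (k+1), (k.choose j : ℂ) * Complex.I^j
        * ((∫ ω, U ω ^ (k-j) ∂μ : ℝ) : ℂ) * ((∫ ω, V ω ^ j ∂μ : ℝ) : ℂ) := by
    intro k
    have hpt : ∀ ω, ((U ω : ℂ) + Complex.I * (V ω : ℂ)) ^ k
        = ∑ j ∈ Finset.range (k+1),
            ((k.choose j : ℂ) * Complex.I^j) * (((U ω ^ (k-j) * V ω ^ j : ℝ)) : ℂ) := by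
      intro ω
      rw [add_comm ((U ω : ℂ)) (Complex.I * (V ω : ℂ)), add_pow]
      refine Finset.sum_congr rfl fun j hj => ?_
      rw [mul_pow]
      push_cast
      ring
    rw [integral_congr_ae (ae_of_all _ hpt)]
    have hindepj : ∀ j : ℕ, IndepFun (fun ω => U ω ^ (k-j)) (fun ω => V ω ^ j) μ :=
      fun j => hindep.comp (measurable_id.pow_const (k-j)) (measurable_id.pow_const j)
    have hintj : ∀ j ∈ Finset.range (k+1), Integrable
        (fun ω => ((k.choose j : ℂ) * Complex.I^j) * (((U ω ^ (k-j) * V ω ^ j : ℝ)) : ℂ)) μ := by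
      intro j _
      exact (((hindepj j).integrable_mul (intU (k-j)) (intV j)).ofReal).const_mul _
    rw [integral_finset_sum _ hintj]
    refine Finset.sum_congr rfl fun j hj => ?_
    have hofreal : (∫ a, ((U a ^ (k-j) * V a ^ j : ℝ) : ℂ) ∂μ)
        = (((∫ a, U a ^ (k-j) * V a ^ j ∂μ : ℝ)) : ℂ) := integral_ofReal
    have hprod : (∫ ω, U ω ^ (k-j) * V ω ^ j ∂μ)
        = (∫ ω, U ω ^ (k-j) ∂μ) * ∫ ω, V ω ^ j ∂μ :=
      (hindepj j).integral_fun_mul_eq_mul_integral (intU (k-j)).aestronglyMeasurable (intV j).aestronglyMeasurable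
    rw [integral_const_mul, hofreal, hprod]
    push_cast
    ring
  constructor
  · intro hY
    have key2 : ∀ k : ℕ, 1 ≤ k → k ≤ r → ∫ ω, U ω ^ k ∂μ = gmom k := by
      intro k
      induction k using Nat.strong_induction_on with
      | _ k IH =>
        intro hk1 hkr
        have h0 := hY k (Finset.mem_Icc.mpr ⟨hk1, hkr⟩)
        rw [expand k] at h0
        have hMj : ∀ j : ℕ, 1 ≤ j → j ≤ k → (∫ ω, U ω ^ (k-j) ∂μ) = gmom (k-j) := by
          intro j hj1 hjk
          rcases Nat.eq_zero_or_pos (k-j) with h | h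
          · rw [h]; exact momU0
          · exact IH (k-j) (by omega) h (by omega)
        have hsplit : ∑ j ∈ Finset.range (k+1), (k.choose j : ℂ) * Complex.I^j
              * ((∫ ω, U ω ^ (k-j) ∂μ : ℝ) : ℂ) * ((∫ ω, V ω ^ j ∂μ : ℝ) : ℂ)
            = ((∫ ω, U ω ^ k ∂μ : ℝ) : ℂ) - ((gmom k : ℝ) : ℂ)
              + ∑ j ∈ Finset.range (k+1), (k.choose j : ℂ) * Complex.I^j
                * ((gmom (k-j) : ℝ) : ℂ) * ((gmom j : ℝ) : ℂ) := by
          rw [Finset.sum_range_succ' _ k, Finset.sum_range_succ' (fun j => (k.choose j : ℂ)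
            * Complex.I^j * ((gmom (k-j) : ℝ) : ℂ) * ((gmom j : ℝ) : ℂ)) k]
          have htail : ∀ j ∈ Finset.range k, (k.choose (j+1) : ℂ) * Complex.I^(j+1)
                * ((∫ ω, U ω ^ (k-(j+1)) ∂μ : ℝ) : ℂ) * ((∫ ω, V ω ^ (j+1) ∂μ : ℝ) : ℂ)
              = (k.choose (j+1) : ℂ) * Complex.I^(j+1)
                * ((gmom (k-(j+1)) : ℝ) : ℂ) * ((gmom (j+1) : ℝ) : ℂ) := by
            intro j hj
            rw [hMj (j+1) (by omega) (by have := Finset.mem_range.mp hj; omega), momV (j+1)]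
          rw [Finset.sum_congr rfl htail]
          simp only [Nat.sub_zero, pow_zero, Nat.choose_zero_right, Nat.cast_one, gmom_zero]
          rw [show (∫ (_ : Ω), (1:ℝ) ∂μ) = 1 by simp]
          push_cast
          ring
        rw [hsplit, key_sum_s17 hk1, add_zero, sub_eq_zero] at h0
        exact_mod_cast h0
    intro k hk
    obtain ⟨hk1, hkr⟩ := Finset.mem_Icc.mp hk
    rw [key2 k hk1 hkr, momV k]
  · intro hM k hk
    obtain ⟨hk1, hkr⟩ := Finset.mem_Icc.mp hk
    rw [expand k]
    have hcongr : ∀ j ∈ Finset.range (k+1), (k.choose j : ℂ) * Complex.I^j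
          * ((∫ ω, U ω ^ (k-j) ∂μ : ℝ) : ℂ) * ((∫ ω, V ω ^ j ∂μ : ℝ) : ℂ)
        = (k.choose j : ℂ) * Complex.I^j * ((gmom (k-j) : ℝ) : ℂ) * ((gmom j : ℝ) : ℂ) := by
      intro j hj
      have hU' : (∫ ω, U ω ^ (k-j) ∂μ) = gmom (k-j) := by
        rcases Nat.eq_zero_or_pos (k-j) with h | h
        · rw [h]; exact momU0
        · rw [hM (k-j) (Finset.mem_Icc.mpr ⟨h, by omega⟩), momV]
      rw [hU', momV j]
    rw [Finset.sum_congr rfl hcongr]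
    exact key_sum_s17 hk1
end
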